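/- arXiv:1805.01254 — 7 statements merged into one kernel-verified Lean document; each statement's English description precedes it below -/
import Mathlib

section
/- A sequence of polynomials {a_n(q)}_{n≥1} ⊆ ℤ[q] satisfies the q-Gauss congruences if and only if for all positive integers n and i one has a_n(ω_n^i) = a_{gcd(n,i)}(1), which in turn holds if and only if for all n ≥ 1 and every divisor d of n one has a_n(q) ≡ a_{n/d}(1) mod Φ_d(q), where Φ_d is the d-th cyclotomic polynomial. -/
open Polynomial Finset ArithmeticFunction

/-- Sum of the Möbius function over divisors vanishes unless `m = 1`. -/
lemma sum_moebius_eq_zero {m : ℕ} (hm : m ≠ 1) :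
    ∑ d ∈ m.divisors, (moebius d : ℤ) = 0 := by
  have h := congrArg (fun f : ArithmeticFunction ℤ => f m) moebius_mul_coe_zeta
  simp only [coe_mul_zeta_apply, one_apply, hm, if_false] at h
  exact h

lemma moebius_inv_sum (f : ℕ → ℂ) {m : ℕ} (hm : 0 < m) :
    ∑ e ∈ m.divisors, (∑ c ∈ e.divisors, ((moebius (e / c) : ℤ) : ℂ) * f c) = f m := by
  refine (ArithmeticFunction.sum_eq_iff_sum_smul_moebius_eq
    (f := fun e => ∑ c ∈ e.divisors, ((moebius (e / c) : ℤ) : ℂ) * f c)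
    (g := f)).mpr ?_ m hm
  intro n hn
  rw [Nat.sum_divisorsAntidiagonal' (f := fun x y => (moebius x : ℤ) • f y)]
  simp [zsmul_eq_mul]

lemma key_identity (f : ℕ → ℂ) {n k : ℕ} (hn : 0 < n) (hk : ¬ n ∣ k) :
    ∑ d ∈ n.divisors, ((moebius d : ℤ) : ℂ) * f (Nat.gcd (n / d) k) = 0 := by
  have hn0 : n ≠ 0 := hn.ne'
  have hk0 : k ≠ 0 := by rintro rfl; exact hk (dvd_zero n)
  set F : ℕ → ℂ := fun e => ∑ c ∈ e.divisors, ((moebius (e / c) : ℤ) : ℂ) * f c with hF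
  have step1 : ∀ d ∈ n.divisors, ((moebius d : ℤ) : ℂ) * f (Nat.gcd (n / d) k)
      = ∑ e ∈ (Nat.gcd (n / d) k).divisors, ((moebius d : ℤ) : ℂ) * F e := by
    intro d hd
    obtain ⟨hdn, -⟩ := Nat.mem_divisors.mp hd
    have hnd : 0 < n / d := Nat.div_pos (Nat.le_of_dvd hn hdn)
      (Nat.pos_of_dvd_of_pos hdn hn)
    rw [← Finset.mul_sum, moebius_inv_sum f (Nat.gcd_pos_of_pos_left _ hnd)]
  rw [Finset.sum_congr rfl step1]
  rw [Finset.sum_comm' (t' := (Nat.gcd n k).divisors) (s' := fun e => (n / e).divisors) ?_]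
  · refine Finset.sum_eq_zero fun e he => ?_
    obtain ⟨heg, -⟩ := Nat.mem_divisors.mp he
    have hen : e ∣ n := heg.trans (Nat.gcd_dvd_left n k)
    have hne1 : n / e ≠ 1 := by
      intro h1
      have : e = n := by
        have := Nat.div_mul_cancel hen
        rw [h1, one_mul] at this
        exact this
      exact hk (this ▸ heg.trans (Nat.gcd_dvd_right n k))
    rw [← Finset.sum_mul]
    have : (∑ d ∈ (n / e).divisors, ((moebius d : ℤ) : ℂ)) = 0 := by
      rw [← Int.cast_sum, sum_moebius_eq_zero hne1, Int.cast_zero]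
    rw [this, zero_mul]
  · intro d e
    simp only [Nat.mem_divisors]
    constructor
    · rintro ⟨⟨hdn, -⟩, heg, -⟩
      have hed : e ∣ n / d := heg.trans (Nat.gcd_dvd_left _ _)
      have hek : e ∣ k := heg.trans (Nat.gcd_dvd_right _ _)
      have hde : d * e ∣ n := (Nat.dvd_div_iff_mul_dvd hdn).mp hed
      have hen : e ∣ n := (dvd_mul_left e d).trans hde
      have hne : n / e ≠ 0 :=
        (Nat.div_pos (Nat.le_of_dvd hn hen) (Nat.pos_of_dvd_of_pos hen hn)).ne'
      refine ⟨⟨?_, hne⟩, Nat.dvd_gcd hen hek, (Nat.gcd_pos_of_pos_left k hn).ne'⟩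
      exact (Nat.dvd_div_iff_mul_dvd hen).mpr (by rwa [mul_comm] at hde)
    · rintro ⟨⟨hde, -⟩, heg, -⟩
      have hen : e ∣ n := heg.trans (Nat.gcd_dvd_left n k)
      have hek : e ∣ k := heg.trans (Nat.gcd_dvd_right n k)
      have hedn : e * d ∣ n := (Nat.dvd_div_iff_mul_dvd hen).mp hde
      have hdn : d ∣ n := (dvd_mul_left d e).trans hedn
      have hnd : 0 < n / d := Nat.div_pos (Nat.le_of_dvd hn hdn)
        (Nat.pos_of_dvd_of_pos hdn hn)
      refine ⟨⟨hdn, hn0⟩, Nat.dvd_gcd ?_ hek, ?_⟩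
      · exact (Nat.dvd_div_iff_mul_dvd hdn).mpr (by rwa [mul_comm] at hedn)
      · exact Nat.gcd_pos_of_pos_left _ hnd |>.ne'

noncomputable def zetaN (n : ℕ) : ℂ := Complex.exp (2 * (Real.pi : ℂ) * Complex.I / (n : ℂ))

lemma zetaN_prim {n : ℕ} (hn : 0 < n) : IsPrimitiveRoot (zetaN n) n :=
  Complex.isPrimitiveRoot_exp n hn.ne'

lemma zetaN_pow_eq {m j m' j' : ℕ} (hm : m ≠ 0) (hm' : m' ≠ 0) (h : j * m' = j' * m) :
    zetaN m ^ j = zetaN m' ^ j' := by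
  rw [zetaN, zetaN, ← Complex.exp_nat_mul, ← Complex.exp_nat_mul]
  congr 1
  have hc : (j : ℂ) * (m' : ℂ) = (j' : ℂ) * (m : ℂ) := by exact_mod_cast congrArg Nat.cast h
  have hm0 : (m : ℂ) ≠ 0 := Nat.cast_ne_zero.mpr hm
  have hm0' : (m' : ℂ) ≠ 0 := Nat.cast_ne_zero.mpr hm'
  rw [mul_div_assoc', mul_div_assoc', div_eq_div_iff hm0 hm0']
  linear_combination (2 * (Real.pi : ℂ) * Complex.I) * hc

lemma zetaN_pow_prim {n i : ℕ} (hn : 0 < n) (hi : 0 < i) :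
    IsPrimitiveRoot (zetaN n ^ i) (n / Nat.gcd n i) := by
  set g := Nat.gcd n i with hg
  have hg0 : 0 < g := Nat.gcd_pos_of_pos_left _ hn
  have hgn : g ∣ n := Nat.gcd_dvd_left n i
  have hgi : g ∣ i := Nat.gcd_dvd_right n i
  have hd0 : 0 < n / g := Nat.div_pos (Nat.le_of_dvd hn hgn) hg0
  have key : zetaN n ^ i = zetaN (n / g) ^ (i / g) := by
    refine zetaN_pow_eq hn.ne' hd0.ne' ?_
    rw [← Nat.mul_div_assoc i hgn, mul_comm i n, Nat.mul_div_assoc n hgi, mul_comm]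
  rw [key]
  exact (zetaN_prim hd0).pow_of_coprime _ ((Nat.coprime_div_gcd_div_gcd hg0).symm)

/-- The `q`-analogue `[n]_q = (q^n - 1)/(q - 1) = 1 + q + ⋯ + q^{n-1}` in `ℤ[q]`. -/
noncomputable def qInt (n : ℕ) : Polynomial ℤ := ∑ i ∈ Finset.range n, X ^ i

lemma aeval_one_int (p : Polynomial ℤ) : Polynomial.aeval (1 : ℂ) p = ((p.eval 1 : ℤ) : ℂ) := by
  rw [aeval_def, eval₂_at_one]
  simp

lemma aeval_qInt (z : ℂ) (n : ℕ) : Polynomial.aeval z (qInt n) = ∑ i ∈ Finset.range n, z ^ i := by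
  simp [qInt]

lemma aeval_qInt_eq_zero {z : ℂ} {n : ℕ} (hz : z ^ n = 1) (hz1 : z ≠ 1) :
    Polynomial.aeval z (qInt n) = 0 := by
  rw [aeval_qInt]
  have h := geom_sum_mul z n
  rw [hz, sub_self] at h
  exact (mul_eq_zero.mp h).resolve_right (sub_ne_zero.mpr hz1)

lemma qInt_monic {n : ℕ} (hn : 0 < n) : (qInt n).Monic := by
  have hmul : (qInt n) * (X - 1) = X ^ n - 1 := geom_sum_mul X n
  have h1 : ((X : Polynomial ℤ) ^ n - 1).Monic := by
    have := monic_X_pow_sub_C (1 : ℤ) hn.ne'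
    simpa using this
  have h2 : ((X : Polynomial ℤ) - 1).Monic := by
    have := monic_X_sub_C (1 : ℤ)
    simpa using this
  have hlc : (qInt n).leadingCoeff * ((X : Polynomial ℤ) - 1).leadingCoeff = 1 := by
    rw [← leadingCoeff_mul, hmul, h1.leadingCoeff]
  rw [h2.leadingCoeff, mul_one] at hlc
  exact hlc

lemma aeval_Asum (a : ℕ → Polynomial ℤ) (z : ℂ) (n : ℕ) :
    Polynomial.aeval z (∑ d ∈ n.divisors,
        Polynomial.C (moebius d) * ((a (n / d)).comp (X ^ d)))
      = ∑ d ∈ n.divisors, ((moebius d : ℤ) : ℂ) * Polynomial.aeval (z ^ d) (a (n / d)) := by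
  rw [map_sum]
  refine Finset.sum_congr rfl fun d _ => ?_
  rw [map_mul, aeval_C, aeval_comp, aeval_X_pow]
  simp

/-- A sequence `{a_n(q)}_{n ≥ 1} ⊆ ℤ[q]` satisfies the `q`-Gauss congruences if for all `n ≥ 1`,
`∑_{d ∣ n} μ(d) a_{n/d}(q^d) ≡ 0 mod [n]_q`. -/
def qGauss (a : ℕ → Polynomial ℤ) : Prop :=
  ∀ n : ℕ, 0 < n →
    qInt n ∣ ∑ d ∈ n.divisors,
      Polynomial.C (ArithmeticFunction.moebius d) * ((a (n / d)).comp (X ^ d))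

lemma G_to_R (a : ℕ → Polynomial ℤ) (hG : qGauss a) :
    ∀ n : ℕ, 0 < n → ∀ i : ℕ, 0 < i →
      Polynomial.aeval (zetaN n ^ i) (a n)
        = Polynomial.aeval (1 : ℂ) (a (Nat.gcd n i)) := by
  intro n
  induction n using Nat.strong_induction_on with
  | _ n ih =>
    intro hn i hi
    by_cases hdvd : n ∣ i
    · obtain ⟨c, rfl⟩ := hdvd
      rw [pow_mul, (zetaN_prim hn).pow_eq_one, one_pow, Nat.gcd_eq_left ⟨c, rfl⟩]
    · set k := i % n with hk
      have hk0 : 0 < k :=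
        Nat.pos_of_ne_zero (fun h => hdvd (Nat.dvd_of_mod_eq_zero h))
      have hkn : k < n := Nat.mod_lt i hn
      have hnk : ¬ n ∣ k := fun h => absurd (Nat.eq_zero_of_dvd_of_lt h hkn) hk0.ne'
      have hpow : zetaN n ^ i = zetaN n ^ k := by
        conv_lhs => rw [← Nat.mod_add_div i n]
        rw [pow_add, pow_mul, (zetaN_prim hn).pow_eq_one, one_pow, mul_one]
      have hgcd : Nat.gcd n i = Nat.gcd n k := by
        rw [Nat.gcd_rec n i, Nat.gcd_comm]
      obtain ⟨B, hB⟩ := hG n hn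
      have hzk1 : zetaN n ^ k ≠ 1 := (zetaN_prim hn).pow_ne_one_of_pos_of_lt hk0.ne' hkn
      have hzkn : (zetaN n ^ k) ^ n = 1 := by
        rw [← pow_mul, mul_comm, pow_mul, (zetaN_prim hn).pow_eq_one, one_pow]
      have hzero : Polynomial.aeval (zetaN n ^ k) (qInt n) = 0 :=
        aeval_qInt_eq_zero hzkn hzk1
      have hAz : ∑ d ∈ n.divisors,
          ((moebius d : ℤ) : ℂ) * Polynomial.aeval ((zetaN n ^ k) ^ d) (a (n / d)) = 0 := by
        rw [← aeval_Asum, hB, map_mul, hzero, zero_mul]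
      have hId := key_identity (fun m => Polynomial.aeval (1 : ℂ) (a m)) hn hnk
      have hsum : ∑ d ∈ n.divisors, ((moebius d : ℤ) : ℂ)
          * (Polynomial.aeval ((zetaN n ^ k) ^ d) (a (n / d))
             - Polynomial.aeval (1 : ℂ) (a (Nat.gcd (n / d) k))) = 0 := by
        simp_rw [mul_sub]
        rw [Finset.sum_sub_distrib, hAz, hId, sub_zero]
      have hterm : ∀ d ∈ n.divisors, d ≠ 1 →
          ((moebius d : ℤ) : ℂ)
            * (Polynomial.aeval ((zetaN n ^ k) ^ d) (a (n / d))
               - Polynomial.aeval (1 : ℂ) (a (Nat.gcd (n / d) k))) = 0 := by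
        intro d hd hd1
        obtain ⟨hdn, -⟩ := Nat.mem_divisors.mp hd
        have hd0 : 0 < d := Nat.pos_of_dvd_of_pos hdn hn
        have hd1' : 1 < d := lt_of_le_of_ne hd0 (Ne.symm hd1)
        have hlt : n / d < n := Nat.div_lt_self hn hd1'
        have hnd0 : 0 < n / d := Nat.div_pos (Nat.le_of_dvd hn hdn) hd0
        have hzd : (zetaN n ^ k) ^ d = zetaN (n / d) ^ k := by
          rw [← pow_mul]
          refine zetaN_pow_eq hn.ne' hnd0.ne' ?_
          rw [mul_assoc, Nat.mul_div_cancel' hdn]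
        rw [hzd, ih (n / d) hlt hnd0 k hk0, sub_self, mul_zero]
      rw [Finset.sum_eq_single_of_mem 1 (Nat.one_mem_divisors.mpr hn.ne') hterm] at hsum
      simp only [moebius_apply_one, Int.cast_one, one_mul, pow_one, Nat.div_one] at hsum
      rw [hpow, hgcd]
      exact sub_eq_zero.mp hsum

lemma R_to_G (a : ℕ → Polynomial ℤ)
    (hR : ∀ n i : ℕ, 0 < n → 0 < i →
      Polynomial.aeval (zetaN n ^ i) (a n) = Polynomial.aeval (1 : ℂ) (a (Nat.gcd n i))) :
    qGauss a := by
  intro n hn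
  set A := ∑ d ∈ n.divisors,
      Polynomial.C (ArithmeticFunction.moebius d) * ((a (n / d)).comp (X ^ d)) with hA
  rw [← Polynomial.map_dvd_map (Int.castRingHom ℂ) Int.cast_injective (qInt_monic hn)]
  have hprim := zetaN_prim hn
  have hfact : (qInt n).map (Int.castRingHom ℂ)
      = ∏ k ∈ Finset.Ico 1 n, (X - Polynomial.C (zetaN n ^ k)) := by
    have hinj : Set.InjOn (fun k => zetaN n ^ k) (Finset.range n) := by
      intro x hx y hy hxy
      exact hprim.pow_inj (Finset.mem_range.mp hx) (Finset.mem_range.mp hy) hxy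
    have himg : Finset.image (fun k => zetaN n ^ k) (Finset.range n)
        = Polynomial.nthRootsFinset n (1 : ℂ) := by
      apply Finset.eq_of_subset_of_card_le
      · intro x hx
        obtain ⟨k, hk, rfl⟩ := Finset.mem_image.mp hx
        rw [Polynomial.mem_nthRootsFinset hn, ← pow_mul, mul_comm, pow_mul,
          hprim.pow_eq_one, one_pow]
      · rw [hprim.card_nthRootsFinset, Finset.card_image_of_injOn hinj, Finset.card_range]
    have hprod : ∏ z ∈ Polynomial.nthRootsFinset n (1 : ℂ), (X - Polynomial.C z)
        = ∏ k ∈ Finset.range n, (X - Polynomial.C (zetaN n ^ k)) := by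
      rw [← himg, Finset.prod_image hinj]
    have h1 : ((qInt n).map (Int.castRingHom ℂ)) * (X - Polynomial.C 1)
        = ∏ k ∈ Finset.range n, (X - Polynomial.C (zetaN n ^ k)) := by
      rw [← hprod, ← X_pow_sub_one_eq_prod hn hprim]
      have : ((qInt n) * (X - 1)).map (Int.castRingHom ℂ)
          = ((X : Polynomial ℤ) ^ n - 1).map (Int.castRingHom ℂ) := by
        rw [show qInt n * (X - 1) = X ^ n - 1 from geom_sum_mul X n]
      simpa [Polynomial.map_mul, Polynomial.map_sub, Polynomial.map_pow] using this
    have h2 : ∏ k ∈ Finset.range n, (X - Polynomial.C (zetaN n ^ k))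
        = (X - Polynomial.C 1) * ∏ k ∈ Finset.Ico 1 n, (X - Polynomial.C (zetaN n ^ k)) := by
      rw [Finset.range_eq_Ico, Finset.prod_eq_prod_Ico_succ_bot hn]
      simp
    have hne : (X - Polynomial.C (1 : ℂ)) ≠ 0 := X_sub_C_ne_zero 1
    apply mul_right_cancel₀ hne
    rw [h1, h2, mul_comm]
  rw [hfact]
  apply Finset.prod_dvd_of_coprime
  · intro x hx y hy hxy
    simp only [Finset.coe_Ico, Set.mem_Ico] at hx hy
    refine Polynomial.isCoprime_X_sub_C_of_isUnit_sub ?_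
    refine (isUnit_iff_ne_zero).mpr (sub_ne_zero.mpr ?_)
    exact fun h => hxy (hprim.pow_inj hx.2 hy.2 h)
  · intro k hk
    rw [Finset.mem_Ico] at hk
    have hk0 : 0 < k := hk.1
    have hkn : k < n := hk.2
    have hnk : ¬ n ∣ k := fun h => absurd (Nat.eq_zero_of_dvd_of_lt h hkn) hk0.ne'
    rw [Polynomial.dvd_iff_isRoot]
    have : Polynomial.aeval (zetaN n ^ k) A = 0 := by
      rw [hA, aeval_Asum]
      have : ∀ d ∈ n.divisors,
          ((moebius d : ℤ) : ℂ) * Polynomial.aeval ((zetaN n ^ k) ^ d) (a (n / d))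
          = ((moebius d : ℤ) : ℂ) * Polynomial.aeval (1 : ℂ) (a (Nat.gcd (n / d) k)) := by
        intro d hd
        obtain ⟨hdn, -⟩ := Nat.mem_divisors.mp hd
        have hd0 : 0 < d := Nat.pos_of_dvd_of_pos hdn hn
        have hnd0 : 0 < n / d := Nat.div_pos (Nat.le_of_dvd hn hdn) hd0
        have hzd : (zetaN n ^ k) ^ d = zetaN (n / d) ^ k := by
          rw [← pow_mul]
          refine zetaN_pow_eq hn.ne' hnd0.ne' ?_
          rw [mul_assoc, Nat.mul_div_cancel' hdn]
        rw [hzd, hR (n / d) k hnd0 hk0]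
      rw [Finset.sum_congr rfl this]
      exact key_identity (fun m => Polynomial.aeval (1 : ℂ) (a m)) hn hnk
    rwa [Polynomial.IsRoot.def, Polynomial.eval_map, ← algebraMap_int_eq, ← Polynomial.aeval_def]

lemma R_to_C (a : ℕ → Polynomial ℤ)
    (hR : ∀ n i : ℕ, 0 < n → 0 < i →
      Polynomial.aeval (zetaN n ^ i) (a n) = Polynomial.aeval (1 : ℂ) (a (Nat.gcd n i))) :
    ∀ n : ℕ, 0 < n → ∀ d : ℕ, d ∣ n →
      Polynomial.cyclotomic d ℤ ∣ a n - Polynomial.C ((a (n / d)).eval 1) := by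
  intro n hn d hd
  have hd0 : 0 < d := Nat.pos_of_dvd_of_pos hd hn
  have hnd0 : 0 < n / d := Nat.div_pos (Nat.le_of_dvd hn hd) hd0
  have hprim : IsPrimitiveRoot (zetaN d) d := zetaN_prim hd0
  have hz : zetaN n ^ (n / d) = zetaN d ^ 1 := by
    refine zetaN_pow_eq hn.ne' hd0.ne' ?_
    rw [Nat.div_mul_cancel hd, one_mul]
  have hRa := hR n (n / d) hn hnd0
  rw [Nat.gcd_eq_right (Nat.div_dvd_of_dvd hd)] at hRa
  rw [← Polynomial.map_dvd_map (Int.castRingHom ℚ) Int.cast_injective (cyclotomic.monic d ℤ),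
    Polynomial.map_cyclotomic_int, cyclotomic_eq_minpoly_rat hprim hd0]
  apply minpoly.dvd
  rw [show (Int.castRingHom ℚ) = algebraMap ℤ ℚ from rfl, aeval_map_algebraMap]
  rw [map_sub, aeval_C, sub_eq_zero, show zetaN d = zetaN n ^ (n / d) by rw [hz, pow_one],
    hRa, aeval_one_int]
  simp

lemma C_to_R (a : ℕ → Polynomial ℤ)
    (hC : ∀ n : ℕ, 0 < n → ∀ d : ℕ, d ∣ n →
      Polynomial.cyclotomic d ℤ ∣ a n - Polynomial.C ((a (n / d)).eval 1)) :
    ∀ n i : ℕ, 0 < n → 0 < i →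
      Polynomial.aeval (zetaN n ^ i) (a n) = Polynomial.aeval (1 : ℂ) (a (Nat.gcd n i)) := by
  intro n i hn hi
  set g := Nat.gcd n i with hg
  have hg0 : 0 < g := Nat.gcd_pos_of_pos_left _ hn
  have hgd : g ∣ n := Nat.gcd_dvd_left n i
  set d := n / g with hdd
  have hd : d ∣ n := Nat.div_dvd_of_dvd hgd
  have hd0 : 0 < d := Nat.div_pos (Nat.le_of_dvd hn hgd) hg0
  have hprim : IsPrimitiveRoot (zetaN n ^ i) d := zetaN_pow_prim hn hi
  obtain ⟨B, hB⟩ := hC n hn d hd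
  rw [Nat.div_div_self hgd hn.ne'] at hB
  have hroot : Polynomial.aeval (zetaN n ^ i) (Polynomial.cyclotomic d ℤ) = 0 := by
    have h := hprim.isRoot_cyclotomic hd0
    rw [Polynomial.IsRoot.def] at h
    rw [aeval_def, ← Polynomial.eval_map, algebraMap_int_eq, Polynomial.map_cyclotomic_int]
    exact h
  have heq : a n = Polynomial.cyclotomic d ℤ * B + Polynomial.C ((a g).eval 1) := by
    rw [← hB]; ring
  rw [heq, map_add, map_mul, hroot, zero_mul, zero_add, aeval_C, aeval_one_int]
  simp

theorem stmt0 (a : ℕ → Polynomial ℤ) :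
    (qGauss a ↔
      ∀ n i : ℕ, 0 < n → 0 < i →
        Polynomial.aeval (Complex.exp (2 * (Real.pi : ℂ) * Complex.I / (n : ℂ)) ^ i) (a n)
          = Polynomial.aeval (1 : ℂ) (a (Nat.gcd n i)))
    ∧ ((∀ n i : ℕ, 0 < n → 0 < i →
        Polynomial.aeval (Complex.exp (2 * (Real.pi : ℂ) * Complex.I / (n : ℂ)) ^ i) (a n)
          = Polynomial.aeval (1 : ℂ) (a (Nat.gcd n i))) ↔
      ∀ n : ℕ, 0 < n → ∀ d : ℕ, d ∣ n →
        Polynomial.cyclotomic d ℤ ∣ a n - Polynomial.C ((a (n / d)).eval 1)) := by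
  constructor
  · constructor
    · intro hG n i hn hi
      exact G_to_R a hG n hn i hi
    · intro hR
      exact R_to_G a (fun n i hn hi => hR n i hn hi)
  · constructor
    · intro hR
      exact R_to_C a (fun n i hn hi => hR n i hn hi)
    · intro hC n i hn hi
      exact C_to_R a hC n i hn hi
end

section
/- Let S be a set of primes. (1) If a sequence {a_n(q)}_{n≥1} ⊆ ℤ[q] satisfies the q-Gauss congruences with respect to S, then for all primes p ∈ S and all positive integers n, k one has a_{p^k n}(q) ≡ a_{p^{k−1} n}(q^p) mod [p^k]_q. (2) A sequence {a_n(q)}_{n≥1} ⊆ ℤ[q] satisfies the q-Gauss congruences with respect to the set of all primes if and only if it satisfies the q-Gauss congruences. -/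
open Polynomial Finset

/-- `n ∈ ℕ_S`: `n` is a positive integer divisible only by primes from `S`. -/
def NatS (S : Set ℕ) (n : ℕ) : Prop := 0 < n ∧ ∀ p : ℕ, p.Prime → p ∣ n → p ∈ S

/-- `{a_n(q)}` satisfies the `q`-Gauss congruences with respect to `S`:
for all `n ∈ ℕ_S` and `m ≥ 1`, `∑_{d ∣ n} μ(d) a_{nm/d}(q^d) ≡ 0 mod [n]_q`. -/
def qGaussWrt (S : Set ℕ) (a : ℕ → Polynomial ℤ) : Prop :=
  ∀ n m : ℕ, NatS S n → 0 < m →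
    qInt n ∣ ∑ d ∈ n.divisors,
      Polynomial.C (ArithmeticFunction.moebius d) * ((a (n * m / d)).comp (X ^ d))

lemma qInt_mul (n : ℕ) : qInt n * (X - 1) = X ^ n - 1 := geom_sum_mul X n

lemma qInt_dvd_pow_sub_one (n : ℕ) : qInt n ∣ X ^ n - 1 := ⟨X - 1, (qInt_mul n).symm⟩

lemma X_sub_one_ne : (X - 1 : Polynomial ℤ) ≠ 0 := by
  have := Polynomial.X_sub_C_ne_zero (R := ℤ) 1
  simpa using this

lemma qInt_dvd_qInt {n c : ℕ} (h : n ∣ c) : qInt n ∣ qInt c := by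
  obtain ⟨k, rfl⟩ := h
  refine ⟨∑ j ∈ Finset.range k, (X ^ n) ^ j, mul_right_cancel₀ X_sub_one_ne ?_⟩
  calc qInt (n * k) * (X - 1) = (X ^ n) ^ k - 1 := by rw [qInt_mul, pow_mul]
    _ = (X ^ n - 1) * ∑ j ∈ Finset.range k, (X ^ n) ^ j := (mul_geom_sum _ _).symm
    _ = (qInt n * (X - 1)) * ∑ j ∈ Finset.range k, (X ^ n) ^ j := by rw [qInt_mul]
    _ = qInt n * (∑ j ∈ Finset.range k, (X ^ n) ^ j) * (X - 1) := by ring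

lemma dvd_comp {p q r : Polynomial ℤ} (h : p ∣ q) : p.comp r ∣ q.comp r := by
  obtain ⟨c, rfl⟩ := h; exact ⟨c.comp r, by rw [mul_comp]⟩

lemma qInt_comp_eq (n e : ℕ) : (qInt n).comp (X ^ e) = ∑ i ∈ Finset.range n, X ^ (e * i) := by
  rw [qInt, Polynomial.sum_comp]
  simp [pow_comp, X_comp, ← pow_mul]

lemma qInt_dvd_comp {n e : ℕ} (h : Nat.Coprime e n) : qInt n ∣ (qInt n).comp (X ^ e) := by
  rcases Nat.eq_zero_or_pos n with rfl | hn
  · simp [qInt]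
  have hinj : ∀ i ∈ Finset.range n, ∀ j ∈ Finset.range n,
      e * i % n = e * j % n → i = j := by
    intro i hi j hj hij
    simp only [Finset.mem_range] at hi hj
    have : i ≡ j [MOD n] := Nat.ModEq.cancel_left_of_coprime h.symm hij
    rwa [Nat.ModEq, Nat.mod_eq_of_lt hi, Nat.mod_eq_of_lt hj] at this
  have himg : (Finset.range n).image (fun i => e * i % n) = Finset.range n := by
    apply Finset.eq_of_subset_of_card_le
    · intro x hx
      simp only [Finset.mem_image, Finset.mem_range] at hx ⊢
      obtain ⟨i, _, rfl⟩ := hx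
      exact Nat.mod_lt _ hn
    · rw [Finset.card_image_of_injOn, Finset.card_range]
      intro i hi j hj hij
      exact hinj i (Finset.mem_coe.mp hi) j (Finset.mem_coe.mp hj) hij
  have hq : ∑ i ∈ Finset.range n, X ^ (e * i % n) = qInt n := by
    rw [qInt]
    conv_rhs => rw [← himg]
    rw [Finset.sum_image hinj]
  have hdiff : qInt n ∣ ∑ i ∈ Finset.range n, (X ^ (e * i) - X ^ (e * i % n)) := by
    apply Finset.dvd_sum
    intro i _
    have h1 : X ^ (e * i) - X ^ (e * i % n) =
        X ^ (e * i % n) * (((X : Polynomial ℤ) ^ n) ^ (e * i / n) - 1) := by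
      have h0 : e * i = e * i % n + n * (e * i / n) := (Nat.mod_add_div _ _).symm
      rw [mul_sub, mul_one, ← pow_mul, ← pow_add, ← h0]
    rw [h1]
    exact Dvd.dvd.mul_left ((qInt_dvd_pow_sub_one n).trans
      (by simpa using sub_dvd_pow_sub_pow ((X : Polynomial ℤ) ^ n) 1 (e * i / n))) _
  have heq : (qInt n).comp (X ^ e) =
      (∑ i ∈ Finset.range n, (X ^ (e * i) - X ^ (e * i % n))) + qInt n := by
    rw [qInt_comp_eq, Finset.sum_sub_distrib, hq]
    ring
  rw [heq]
  exact dvd_add hdiff dvd_rfl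

open ArithmeticFunction in
lemma moebius_sum (x : ℕ) :
    ∑ i ∈ x.divisors, ArithmeticFunction.moebius i = if x = 1 then 1 else 0 := by
  have := ArithmeticFunction.coe_mul_zeta_apply (f := (ArithmeticFunction.moebius)) (x := x)
  rw [ArithmeticFunction.moebius_mul_coe_zeta] at this
  rw [← this, ArithmeticFunction.one_apply]

lemma exp_lemma1 {d c N : ℕ} (hd : d ∣ c) (hc : c ∣ N) (hc0 : 0 < c) :
    N / (c / d) = N / c * d := by
  obtain ⟨f, rfl⟩ := hd
  obtain ⟨g, rfl⟩ := hc
  have hd0 : 0 < d := Nat.pos_of_ne_zero (by rintro rfl; simp at hc0)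
  have hf0 : 0 < f := by
    rcases Nat.eq_zero_or_pos f with rfl | h
    · simp at hc0
    · exact h
  rw [Nat.mul_div_cancel_left f hd0]
  rw [show d * f * g = f * (d * g) by ring, Nat.mul_div_cancel_left _ hf0]
  rw [show f * (d * g) = d * f * g by ring, Nat.mul_div_cancel_left _ (by positivity)]
  ring

noncomputable def Fm (a : ℕ → Polynomial ℤ) (c : ℕ) : Polynomial ℤ :=
  ∑ e ∈ c.divisors, Polynomial.C (ArithmeticFunction.moebius e) * ((a (c / e)).comp (X ^ e))

lemma inversion (a : ℕ → Polynomial ℤ) {N : ℕ} (hN : 0 < N) :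
    a N = ∑ c ∈ N.divisors, (Fm a c).comp (X ^ (N / c)) := by
  have key : ∀ c > 0, c ∈ {x | x ∣ N} →
      ∑ x ∈ c.divisorsAntidiagonal,
        (ArithmeticFunction.moebius x.1) • ((a x.2).comp (X ^ (N / x.2)))
      = (Fm a c).comp (X ^ (N / c)) := by
    intro c hc hcN
    rw [Nat.sum_divisorsAntidiagonal
      (fun d e => (ArithmeticFunction.moebius d) • ((a e).comp (X ^ (N / e))))]
    rw [Fm, Polynomial.sum_comp]
    apply Finset.sum_congr rfl
    intro d hd
    have hdc : d ∣ c := Nat.dvd_of_mem_divisors hd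
    rw [mul_comp, C_comp, comp_assoc, pow_comp, X_comp, ← pow_mul,
      exp_lemma1 hdc hcN hc, zsmul_eq_mul, ← Polynomial.C_eq_intCast, Int.cast_id]
  have := (ArithmeticFunction.sum_eq_iff_sum_smul_moebius_eq_on
    (f := fun c => (Fm a c).comp (X ^ (N / c)))
    (g := fun c => (a c).comp (X ^ (N / c)))
    {x | x ∣ N} (fun m n hmn hn => hmn.trans hn)).mpr key N hN (dvd_refl N)
  rw [Nat.div_self hN, pow_one, comp_X] at this
  exact this.symm


lemma qGauss_iff_Fm (a : ℕ → Polynomial ℤ) : qGauss a ↔ ∀ n : ℕ, 0 < n → qInt n ∣ Fm a n :=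
  Iff.rfl

lemma main_dvd (a : ℕ → Polynomial ℤ) (h : qGauss a) (n m : ℕ) (hn : 0 < n) (hm : 0 < m) :
    qInt n ∣ ∑ d ∈ n.divisors,
      Polynomial.C (ArithmeticFunction.moebius d) * ((a (n * m / d)).comp (X ^ d)) := by
  have hnm : 0 < n * m := Nat.mul_pos hn hm
  have step1 : ∑ d ∈ n.divisors,
      Polynomial.C (ArithmeticFunction.moebius d) * ((a (n * m / d)).comp (X ^ d))
      = ∑ d ∈ n.divisors, ∑ c ∈ (n * m / d).divisors,
        Polynomial.C (ArithmeticFunction.moebius d) * ((Fm a c).comp (X ^ (n * m / c))) := by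
    apply Finset.sum_congr rfl
    intro d hd
    have hdn : d ∣ n := Nat.dvd_of_mem_divisors hd
    have hdnm : d ∣ n * m := hdn.mul_right m
    have hpos : 0 < n * m / d := Nat.div_pos (Nat.le_of_dvd hnm hdnm)
      (Nat.pos_of_mem_divisors hd)
    rw [inversion a hpos, Polynomial.sum_comp, Finset.mul_sum]
    apply Finset.sum_congr rfl
    intro c hc
    have hc' : c ∣ n * m / d := Nat.dvd_of_mem_divisors hc
    have hcd : d * c ∣ n * m := (Nat.dvd_div_iff_mul_dvd hdnm).mp hc'
    have hcnm : c ∣ n * m := (dvd_mul_left c d).trans hcd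
    have hdnmc : d ∣ n * m / c := (Nat.dvd_div_iff_mul_dvd hcnm).mpr
      (by rwa [mul_comm] at hcd)
    congr 1
    rw [comp_assoc, pow_comp, X_comp, ← pow_mul]
    congr 2
    rw [Nat.div_div_eq_div_mul, show d * c = c * d from mul_comm d c,
      ← Nat.div_div_eq_div_mul, Nat.mul_div_cancel' hdnmc]
  rw [step1]
  rw [Finset.sum_comm' (t' := (n * m).divisors)
    (s' := fun c => (Nat.gcd n (n * m / c)).divisors) ?_]
  · apply Finset.dvd_sum
    intro c hc
    have hcnm : c ∣ n * m := Nat.dvd_of_mem_divisors hc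
    rw [← Finset.sum_mul, ← map_sum, moebius_sum]
    by_cases hg : Nat.gcd n (n * m / c) = 1
    · rw [if_pos hg, map_one, one_mul]
      have hnc : n ∣ c := by
        have hcop : Nat.Coprime n (n * m / c) := hg
        have : n ∣ c * (n * m / c) := by
          rw [Nat.mul_div_cancel' hcnm]
          exact dvd_mul_right n m
        exact hcop.dvd_of_dvd_mul_right this
      have h1 : qInt n ∣ Fm a c := (qInt_dvd_qInt hnc).trans
        (h c (Nat.pos_of_mem_divisors hc))
      have h2 : qInt n ∣ (qInt n).comp (X ^ (n * m / c)) := by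
        apply qInt_dvd_comp
        exact (Nat.coprime_comm.mp hg)
      exact h2.trans (dvd_comp h1)
    · rw [if_neg hg, map_zero, zero_mul]
      exact dvd_zero _
  · intro d c
    simp only [Nat.mem_divisors]
    constructor
    · rintro ⟨⟨hdn, -⟩, hcd, hnd0⟩
      have hdnm : d ∣ n * m := hdn.mul_right m
      have hcd' : d * c ∣ n * m := (Nat.dvd_div_iff_mul_dvd hdnm).mp hcd
      have hcnm : c ∣ n * m := (dvd_mul_left c d).trans hcd'
      refine ⟨⟨Nat.dvd_gcd hdn ?_, ?_⟩, hcnm, hnm.ne'⟩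
      · exact (Nat.dvd_div_iff_mul_dvd hcnm).mpr (by rwa [mul_comm] at hcd')
      · exact Nat.gcd_ne_zero_left hn.ne'
    · rintro ⟨⟨hdg, -⟩, hcnm, -⟩
      have hdn : d ∣ n := hdg.trans (Nat.gcd_dvd_left _ _)
      have hdnmc : d ∣ n * m / c := hdg.trans (Nat.gcd_dvd_right _ _)
      have hdc : c * d ∣ n * m := (Nat.dvd_div_iff_mul_dvd hcnm).mp hdnmc
      have hdnm : d ∣ n * m := hdn.mul_right m
      refine ⟨⟨hdn, hn.ne'⟩, (Nat.dvd_div_iff_mul_dvd hdnm).mpr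
        (by rwa [mul_comm] at hdc), ?_⟩
      have : 0 < n * m / d := Nat.div_pos (Nat.le_of_dvd hnm hdnm)
        (Nat.pos_of_ne_zero (by rintro rfl; simp at hdn; omega))
      exact this.ne'


theorem stmt3 (S : Set ℕ) (hS : ∀ p ∈ S, Nat.Prime p) (a : ℕ → Polynomial ℤ) :
    (qGaussWrt S a →
      ∀ p ∈ S, ∀ n k : ℕ, 0 < n → 0 < k →
        qInt (p ^ k) ∣ a (p ^ k * n) - (a (p ^ (k - 1) * n)).comp (X ^ p))
    ∧ (qGaussWrt {p : ℕ | Nat.Prime p} a ↔ qGauss a) := by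
  constructor
  · intro h p hpS n k hn hk
    have hp := hS p hpS
    have hmem : NatS S (p ^ k) := by
      refine ⟨pow_pos hp.pos k, fun q hq hdvd => ?_⟩
      have hqp : q ∣ p := hq.dvd_of_dvd_pow hdvd
      rwa [(Nat.prime_dvd_prime_iff_eq hq hp).mp hqp]
    have hd := h (p ^ k) n hmem hn
    rw [Nat.divisors_prime_pow hp, Finset.sum_map] at hd
    simp only [Function.Embedding.coeFn_mk] at hd
    have hsub : ({0, 1} : Finset ℕ) ⊆ Finset.range (k + 1) := by
      intro x hx
      simp only [Finset.mem_insert, Finset.mem_singleton] at hx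
      rcases hx with rfl | rfl <;> simp [Finset.mem_range] <;> omega
    have hzero : ∀ i ∈ Finset.range (k + 1), i ∉ ({0, 1} : Finset ℕ) →
        Polynomial.C (ArithmeticFunction.moebius (p ^ i)) *
          ((a (p ^ k * n / p ^ i)).comp (X ^ p ^ i)) = 0 := by
      intro i _ hi
      simp only [Finset.mem_insert, Finset.mem_singleton, not_or] at hi
      rw [ArithmeticFunction.moebius_apply_prime_pow hp hi.1, if_neg hi.2, map_zero, zero_mul]
    rw [← Finset.sum_subset hsub hzero, Finset.sum_pair (by norm_num : (0 : ℕ) ≠ 1)] at hd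
    have e0 : Polynomial.C (ArithmeticFunction.moebius (p ^ 0)) *
        ((a (p ^ k * n / p ^ 0)).comp (X ^ p ^ 0)) = a (p ^ k * n) := by
      simp [ArithmeticFunction.moebius_apply_one]
    have hdiv : p ^ k * n / p ^ 1 = p ^ (k - 1) * n := by
      rw [pow_one, show p ^ k = p * p ^ (k - 1) by
        rw [← pow_succ', Nat.sub_add_cancel hk], mul_assoc,
        Nat.mul_div_cancel_left _ hp.pos]
    have e1 : Polynomial.C (ArithmeticFunction.moebius (p ^ 1)) *
        ((a (p ^ k * n / p ^ 1)).comp (X ^ p ^ 1)) =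
        -((a (p ^ (k - 1) * n)).comp (X ^ p)) := by
      rw [hdiv, pow_one, ArithmeticFunction.moebius_apply_prime hp]
      simp
    rw [e0, e1, ← sub_eq_add_neg] at hd
    exact hd
  · constructor
    · intro h n hn
      have := h n 1 ⟨hn, fun p hp _ => hp⟩ one_pos
      simpa [mul_one] using this
    · intro h n m hn hm
      exact main_dvd a h n m hn.1 hm
end

section
/- Assume {a_n(q)}_{n≥1} ⊆ ℤ[q] satisfies the q-Gauss congruences with respect to a set of primes S. Let n, m be positive integers with n ∈ ℕ_S. Then a_{nm}(q) ≡ G_{g,n}(q) mod [n]_q, where g : D_n → ℂ is given by g(d) = a_{dm}(1); that is, the remainder of a_{nm}(q) upon division by [n]_q is G_{g,n}(q). -/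
open Polynomial Finset

/-- The `q`-analogue `[n]_q` in `ℂ[q]`. -/
noncomputable def qIntC (n : ℕ) : Polynomial ℂ := ∑ i ∈ Finset.range n, X ^ i

/-- The polynomial `G_{g,n}(q) = ∑_{d ∈ D_n} ([n]_q/[n/d]_q) ⬝ (∑_{e ∣ d} μ(d/e) g(e))/d ∈ ℂ[q]`,
where `D_n` is the set of proper divisors of `n` and
`[n]_q/[n/d]_q = ∑_{i=0}^{d-1} q^{i·(n/d)}`. -/
noncomputable def Gpoly (n : ℕ) (g : ℕ → ℂ) : Polynomial ℂ :=
  ∑ d ∈ n.divisors.erase n,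
    (∑ i ∈ Finset.range d, (X : Polynomial ℂ) ^ (i * (n / d))) *
      Polynomial.C ((∑ e ∈ d.divisors, (ArithmeticFunction.moebius (d / e) : ℂ) * g e) / (d : ℂ))

lemma qIntC_eq_map (n : ℕ) : qIntC n = (qInt n).map (Int.castRingHom ℂ) := by
  simp [qIntC, qInt, Polynomial.map_sum]

lemma sum_moebius_eq_zero_s4 {k : ℕ} (hk : 1 < k) :
    ∑ d ∈ k.divisors, (ArithmeticFunction.moebius d : ℤ) = 0 := by
  have h := DFunLike.congr_fun ArithmeticFunction.moebius_mul_coe_zeta k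
  rw [ArithmeticFunction.mul_apply, ArithmeticFunction.one_apply] at h
  rw [if_neg (by omega)] at h
  rw [Nat.sum_divisorsAntidiagonal (fun x y => (ArithmeticFunction.moebius x : ℤ) * ((ArithmeticFunction.zeta : ArithmeticFunction ℤ) y))] at h
  rw [← h]
  apply Finset.sum_congr rfl
  intro d hd
  have : k / d ≠ 0 := by
    have := Nat.div_pos (Nat.le_of_dvd (by omega) (Nat.dvd_of_mem_divisors hd)) (Nat.pos_of_mem_divisors hd)
    omega
  simp [ArithmeticFunction.zeta_apply, this]

lemma qIntC_monic {n : ℕ} (hn : 0 < n) : (qIntC n).Monic :=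
  monic_geom_sum_X hn.ne'

lemma qIntC_ne_zero {n : ℕ} (hn : 0 < n) : qIntC n ≠ 0 := (qIntC_monic hn).ne_zero

lemma qIntC_degree {n : ℕ} (hn : 0 < n) : (qIntC n).degree = (n - 1 : ℕ) := by
  have h : qIntC n * (X - 1) = X ^ n - 1 := geom_sum_mul X n
  have hx : (X - 1 : Polynomial ℂ) ≠ 0 := by
    simpa using X_sub_C_ne_zero (1 : ℂ)
  have h2 : (qIntC n).natDegree + (X - 1 : Polynomial ℂ).natDegree = n := by
    rw [← Polynomial.natDegree_mul (qIntC_ne_zero hn) hx, h]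
    have := natDegree_X_pow_sub_C (n := n) (r := (1 : ℂ))
    simpa using this
  have h3 : (X - 1 : Polynomial ℂ).natDegree = 1 := by
    simpa using natDegree_X_sub_C (1 : ℂ)
  rw [Polynomial.degree_eq_natDegree (qIntC_ne_zero hn)]
  norm_cast
  omega

lemma Gpoly_degree_lt (n : ℕ) (hn : 0 < n) (g : ℕ → ℂ) :
    (Gpoly n g).degree < (qIntC n).degree := by
  rcases eq_or_lt_of_le (Nat.succ_le_of_lt hn) with h1 | h2
  · -- n = 1
    have : n = 1 := h1.symm
    subst this
    have : Gpoly 1 g = 0 := by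
      simp [Gpoly, Nat.divisors_one]
    rw [this, qIntC_degree (by norm_num), Polynomial.degree_zero]
    exact WithBot.bot_lt_coe _
  · rw [qIntC_degree hn]
    apply lt_of_le_of_lt (Polynomial.degree_sum_le _ _)
    rw [Finset.sup_lt_iff (by exact_mod_cast WithBot.bot_lt_coe _)]
    intro d hd
    have hdn : d ∣ n := Nat.dvd_of_mem_divisors (Finset.mem_of_mem_erase hd)
    have hdne : d ≠ n := Finset.ne_of_mem_erase hd
    have hdpos : 0 < d := Nat.pos_of_mem_divisors (Finset.mem_of_mem_erase hd)
    have hq : 2 ≤ n / d := by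
      have heq : d * (n / d) = n := Nat.mul_div_cancel' hdn
      have h0 : 0 < n / d := Nat.div_pos (Nat.le_of_dvd hn hdn) hdpos
      rcases Nat.lt_or_ge (n / d) 2 with h | h
      · interval_cases h' : (n / d) <;> omega
      · exact h
    have hdeg1 : ((∑ i ∈ Finset.range d, (X : Polynomial ℂ) ^ (i * (n / d)))).degree ≤ ((d - 1) * (n / d) : ℕ) := by
      apply le_trans (Polynomial.degree_sum_le _ _)
      rw [Finset.sup_le_iff]
      intro i hi
      rw [Polynomial.degree_X_pow]
      exact_mod_cast Nat.cast_le.2 (Nat.mul_le_mul_right _ (by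
        have := Finset.mem_range.1 hi; omega))
    have hb : (((∑ i ∈ Finset.range d, (X : Polynomial ℂ) ^ (i * (n / d))) * Polynomial.C ((∑ e ∈ d.divisors, (ArithmeticFunction.moebius (d / e) : ℂ) * g e) / (d : ℂ))).degree) ≤ (((d-1)*(n/d) : ℕ) : WithBot ℕ) := by
      refine le_trans (Polynomial.degree_mul_le _ _) ?_
      refine le_trans (add_le_add hdeg1 Polynomial.degree_C_le) ?_
      simp
    apply lt_of_le_of_lt hb
    have key : (d - 1) * (n / d) < n - 1 := by
      have heq : d * (n / d) = n := Nat.mul_div_cancel' hdn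
      have h3 : (d - 1) * (n / d) = n - n / d := by
        rw [Nat.sub_mul, heq]; omega
      omega
    exact_mod_cast Nat.cast_lt.2 key

lemma natS_of_dvd {S : Set ℕ} {n d : ℕ} (hn : NatS S n) (hd : d ∣ n) : NatS S d :=
  ⟨Nat.pos_of_dvd_of_pos hd hn.1, fun p hp hpd => hn.2 p hp (hpd.trans hd)⟩

lemma eval_prim {S : Set ℕ} {a : ℕ → Polynomial ℤ} (ha : qGaussWrt S a)
    (k : ℕ) (hk : NatS S k) (ζ : ℂ) (hζ : IsPrimitiveRoot ζ k) (t : ℕ) (ht : 0 < t) :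
    ((a (k * t)).map (Int.castRingHom ℂ)).eval ζ = (((a t).eval 1 : ℤ) : ℂ) := by
  induction k using Nat.strong_induction_on generalizing ζ t with
  | _ k IH =>
  rcases eq_or_lt_of_le (Nat.succ_le_of_lt hk.1) with h1 | h2
  · -- k = 1
    have hk1 : k = 1 := h1.symm
    subst hk1
    have hζ1 : ζ = 1 := by
      have := hζ.pow_eq_one
      simpa using this
    subst hζ1
    rw [Polynomial.eval_one_map, one_mul]
    simp
  · -- k > 1
    have hk1 : 1 < k := h2
    have hζne : ζ ≠ 1 := hζ.ne_one hk1
    have hζk : ζ ^ k = 1 := hζ.pow_eq_one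
    obtain ⟨c, hc⟩ := ha k t hk ht
    have hcC := congrArg (Polynomial.map (Int.castRingHom ℂ)) hc
    rw [Polynomial.map_mul] at hcC
    have heval := congrArg (Polynomial.eval ζ) hcC
    rw [Polynomial.eval_mul, ← qIntC_eq_map] at heval
    have hq0 : (qIntC k).eval ζ = 0 := by
      rw [qIntC]
      simp only [Polynomial.eval_finset_sum, Polynomial.eval_pow, Polynomial.eval_X]
      rw [geom_sum_eq hζne, hζk]
      simp
    rw [hq0, zero_mul] at heval
    -- rewrite LHS of heval
    rw [Polynomial.map_sum, Polynomial.eval_finset_sum] at heval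
    have hterm : ∀ d ∈ k.divisors,
        (Polynomial.eval ζ ((Polynomial.C (ArithmeticFunction.moebius d) *
            ((a (k * t / d)).comp (X ^ d))).map (Int.castRingHom ℂ)))
        = ((ArithmeticFunction.moebius d : ℤ) : ℂ) *
            ((a (k * t / d)).map (Int.castRingHom ℂ)).eval (ζ ^ d) := by
      intro d hd
      rw [Polynomial.map_mul, Polynomial.map_comp, Polynomial.eval_mul, Polynomial.eval_comp]
      simp
    rw [Finset.sum_congr rfl hterm] at heval
    -- split off d = 1
    have h1mem : 1 ∈ k.divisors := Nat.one_mem_divisors.2 (by omega)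
    rw [← Finset.sum_erase_add _ _ h1mem] at heval
    have hIH : ∀ d ∈ k.divisors.erase 1,
        ((ArithmeticFunction.moebius d : ℤ) : ℂ) *
            ((a (k * t / d)).map (Int.castRingHom ℂ)).eval (ζ ^ d)
        = ((ArithmeticFunction.moebius d : ℤ) : ℂ) * (((a t).eval 1 : ℤ) : ℂ) := by
      intro d hd
      have hd1 : d ≠ 1 := Finset.ne_of_mem_erase hd
      have hdk : d ∣ k := Nat.dvd_of_mem_divisors (Finset.mem_of_mem_erase hd)
      have hdpos : 0 < d := Nat.pos_of_mem_divisors (Finset.mem_of_mem_erase hd)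
      have hdiv : k * t / d = (k / d) * t := by
        rw [mul_comm k t, Nat.mul_div_assoc t hdk, mul_comm]
      have hlt : k / d < k := Nat.div_lt_self (by omega) (by omega)
      have hprim : IsPrimitiveRoot (ζ ^ d) (k / d) :=
        IsPrimitiveRoot.pow (by omega) hζ (Nat.mul_div_cancel' hdk).symm
      rw [hdiv]
      exact congrArg _ (IH (k / d) hlt (natS_of_dvd hk (Nat.div_dvd_of_dvd hdk)) (ζ ^ d) hprim t ht)
    rw [Finset.sum_congr rfl hIH, ← Finset.sum_mul] at heval
    have hsum : ∑ d ∈ k.divisors.erase 1, ((ArithmeticFunction.moebius d : ℤ) : ℂ) = -1 := by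
      have h0 : ∑ d ∈ k.divisors, (ArithmeticFunction.moebius d : ℤ) = 0 := sum_moebius_eq_zero_s4 hk1
      have := Finset.sum_erase_add k.divisors (fun d => ((ArithmeticFunction.moebius d : ℤ) : ℂ)) h1mem
      simp only [ArithmeticFunction.moebius_apply_one] at this
      have hcast : ∑ d ∈ k.divisors, ((ArithmeticFunction.moebius d : ℤ) : ℂ) = 0 := by
        rw [← Int.cast_zero, ← h0]
        push_cast
        rfl
      rw [hcast] at this
      linear_combination this
    rw [hsum] at heval
    simp only [Nat.mul_div_cancel' (dvd_refl 1), pow_one, Nat.div_one] at heval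
    have : ((ArithmeticFunction.moebius 1 : ℤ) : ℂ) = 1 := by simp
    rw [this, one_mul] at heval
    linear_combination heval

lemma moebius_inv_sum_s4 {g : ℕ → ℂ} (N : ℕ) (hN : 0 < N) :
    ∑ d ∈ N.divisors, ∑ e ∈ d.divisors, (ArithmeticFunction.moebius (d / e) : ℂ) * g e = g N := by
  have key := (ArithmeticFunction.sum_eq_iff_sum_mul_moebius_eq
    (R := ℂ) (f := fun d => ∑ e ∈ d.divisors, (ArithmeticFunction.moebius (d / e) : ℂ) * g e)
    (g := g)).mpr ?_
  · exact key N hN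
  · intro n hn
    rw [Nat.sum_divisorsAntidiagonal' (f := fun x y => ((ArithmeticFunction.moebius x : ℤ) : ℂ) * g y)]

lemma Gpoly_eval {n k : ℕ} (hn : 0 < n) (hkn : k ∣ n) (hk1 : 1 < k)
    {ζ : ℂ} (hζ : IsPrimitiveRoot ζ k) (g : ℕ → ℂ) :
    (Gpoly n g).eval ζ = g (n / k) := by
  have hk0 : 0 < k := by omega
  have hnk_pos : 0 < n / k := Nat.div_pos (Nat.le_of_dvd hn hkn) hk0
  rw [Gpoly, Polynomial.eval_finset_sum]
  have hterm : ∀ d ∈ n.divisors.erase n,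
      Polynomial.eval ζ ((∑ i ∈ Finset.range d, (X : Polynomial ℂ) ^ (i * (n / d))) *
        Polynomial.C ((∑ e ∈ d.divisors, (ArithmeticFunction.moebius (d / e) : ℂ) * g e) / (d : ℂ)))
      = (if k ∣ n / d then (d : ℂ) else 0) *
        ((∑ e ∈ d.divisors, (ArithmeticFunction.moebius (d / e) : ℂ) * g e) / (d : ℂ)) := by
    intro d hd
    have hdn : d ∣ n := Nat.dvd_of_mem_divisors (Finset.mem_of_mem_erase hd)
    rw [Polynomial.eval_mul, Polynomial.eval_C]
    congr 1
    simp only [Polynomial.eval_finset_sum, Polynomial.eval_pow, Polynomial.eval_X]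
    have hrw : ∀ i, ζ ^ (i * (n / d)) = (ζ ^ (n / d)) ^ i := by
      intro i; rw [← pow_mul, mul_comm]
    rw [Finset.sum_congr rfl (fun i _ => hrw i)]
    by_cases hdvd : k ∣ n / d
    · rw [if_pos hdvd, (hζ.pow_eq_one_iff_dvd _).2 hdvd]
      simp
    · rw [if_neg hdvd]
      have hne1 : ζ ^ (n / d) ≠ 1 := fun h => hdvd ((hζ.pow_eq_one_iff_dvd _).1 h)
      rw [geom_sum_eq hne1]
      have : (ζ ^ (n / d)) ^ d = 1 := by
        rw [← pow_mul, Nat.div_mul_cancel hdn, (hζ.pow_eq_one_iff_dvd _).2 hkn]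
      rw [this]
      simp
  rw [Finset.sum_congr rfl hterm]
  have hite : ∀ d ∈ n.divisors.erase n,
      (if k ∣ n / d then (d : ℂ) else 0) *
        ((∑ e ∈ d.divisors, (ArithmeticFunction.moebius (d / e) : ℂ) * g e) / (d : ℂ))
      = if k ∣ n / d then (d : ℂ) * ((∑ e ∈ d.divisors, (ArithmeticFunction.moebius (d / e) : ℂ) * g e) / (d : ℂ)) else 0 := by
    intro d _
    split_ifs <;> simp
  rw [Finset.sum_congr rfl hite, Finset.sum_ite, Finset.sum_const_zero, add_zero]
  have hfilter : (n.divisors.erase n).filter (fun d => k ∣ n / d) = (n / k).divisors := by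
    ext d
    simp only [Finset.mem_filter, Finset.mem_erase, Nat.mem_divisors]
    constructor
    · rintro ⟨⟨hdne, hdn, -⟩, hkd⟩
      exact ⟨(Nat.dvd_div_iff_mul_dvd hkn).2 (by
        have := (Nat.dvd_div_iff_mul_dvd hdn).1 hkd
        exact (mul_comm d k) ▸ this), hnk_pos.ne'⟩
    · rintro ⟨hdk, -⟩
      have hdn : d ∣ n := hdk.trans (Nat.div_dvd_of_dvd hkn)
      have hkd : k ∣ n / d := by
        rw [Nat.dvd_div_iff_mul_dvd hdn]
        have := (Nat.dvd_div_iff_mul_dvd hkn).1 hdk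
        exact (mul_comm k d) ▸ this
      have hdne : d ≠ n := by
        have hle : d ≤ n / k := Nat.le_of_dvd hnk_pos hdk
        have : n / k < n := Nat.div_lt_self hn hk1
        omega
      exact ⟨⟨hdne, hdn, hn.ne'⟩, hkd⟩
  rw [hfilter]
  have hcancel : ∀ d ∈ (n / k).divisors,
      (d : ℂ) * ((∑ e ∈ d.divisors, (ArithmeticFunction.moebius (d / e) : ℂ) * g e) / (d : ℂ))
      = ∑ e ∈ d.divisors, (ArithmeticFunction.moebius (d / e) : ℂ) * g e := by
    intro d hd
    have : (d : ℂ) ≠ 0 := Nat.cast_ne_zero.2 (Nat.pos_of_mem_divisors hd).ne'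
    field_simp
  rw [Finset.sum_congr rfl hcancel]
  exact moebius_inv_sum_s4 (n / k) hnk_pos

/-- The remainder of `a_{nm}(q)` upon division by `[n]_q` is `G_{g,n}(q)`, `g(d) = a_{dm}(1)`. -/
theorem stmt4 (S : Set ℕ) (hS : ∀ p ∈ S, Nat.Prime p) (a : ℕ → Polynomial ℤ)
    (ha : qGaussWrt S a) (n m : ℕ) (hn : NatS S n) (hm : 0 < m) :
    (Gpoly n (fun d => (((a (d * m)).eval 1 : ℤ) : ℂ))).degree < (qIntC n).degree
    ∧ qIntC n ∣ (a (n * m)).map (Int.castRingHom ℂ)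
        - Gpoly n (fun d => (((a (d * m)).eval 1 : ℤ) : ℂ)) := by
  have hnpos : 0 < n := hn.1
  refine ⟨Gpoly_degree_lt n hnpos _, ?_⟩
  set g : ℕ → ℂ := fun d => (((a (d * m)).eval 1 : ℤ) : ℂ) with hgdef
  set F : Polynomial ℂ := (a (n * m)).map (Int.castRingHom ℂ) - Gpoly n g with hFdef
  by_cases hF0 : F = 0
  · exact hF0 ▸ dvd_zero _
  have hx : (X - 1 : Polynomial ℂ) ≠ 0 := by simpa using X_sub_C_ne_zero (1 : ℂ)
  set H : Polynomial ℂ := (X - 1) * F with hHdef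
  have hH0 : H ≠ 0 := mul_ne_zero hx hF0
  have hroot : ∀ ζ ∈ nthRootsFinset n (1 : ℂ), H.eval ζ = 0 := by
    intro ζ hζ
    have hζn : ζ ^ n = 1 := (Polynomial.mem_nthRootsFinset hnpos (1 : ℂ)).1 hζ
    rw [hHdef, Polynomial.eval_mul]
    by_cases hζ1 : ζ = 1
    · rw [hζ1]; simp
    · have hFζ : F.eval ζ = 0 := by
        set k := orderOf ζ with hkdef
        have hprimk : IsPrimitiveRoot ζ k := IsPrimitiveRoot.orderOf ζ
        have hkn : k ∣ n := orderOf_dvd_of_pow_eq_one hζn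
        have hk0 : k ≠ 0 := by
          intro h
          rw [h] at hkn
          exact hnpos.ne' (Nat.eq_zero_of_zero_dvd hkn)
        have hk1 : 1 < k := by
          rcases Nat.lt_or_ge k 2 with h | h
          · interval_cases k
            · omega
            · exact absurd (orderOf_eq_one_iff.1 hkdef.symm) hζ1
          · omega
        have ht : 0 < (n / k) * m :=
          Nat.mul_pos (Nat.div_pos (Nat.le_of_dvd hnpos hkn) (by omega)) hm
        have heq : k * ((n / k) * m) = n * m := by
          rw [← mul_assoc, Nat.mul_div_cancel' hkn]
        have h1 := eval_prim ha k (natS_of_dvd hn hkn) ζ hprimk ((n / k) * m) ht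
        rw [heq] at h1
        have h2 := Gpoly_eval hnpos hkn hk1 hprimk g
        rw [hFdef, Polynomial.eval_sub, h1, h2]
        simp [hgdef]
      rw [hFζ, mul_zero]
  -- X^n - 1 divides H
  obtain ⟨ζ₀, hζ₀⟩ : ∃ ζ₀ : ℂ, IsPrimitiveRoot ζ₀ n := ⟨_, Complex.isPrimitiveRoot_exp n hnpos.ne'⟩
  have hprod : (X : Polynomial ℂ) ^ n - 1 = ∏ ζ ∈ nthRootsFinset n (1 : ℂ), (X - C ζ) :=
    X_pow_sub_one_eq_prod hnpos hζ₀
  have hle : (nthRootsFinset n (1 : ℂ)).val ≤ H.roots := by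
    rw [Multiset.le_iff_count]
    intro ζ
    by_cases hζ : ζ ∈ nthRootsFinset n (1 : ℂ)
    · have h1 : (nthRootsFinset n (1 : ℂ)).val.count ζ = 1 :=
        Multiset.count_eq_one_of_mem (nthRootsFinset n (1 : ℂ)).nodup hζ
      rw [h1, Polynomial.count_roots]
      exact (Polynomial.rootMultiplicity_pos hH0).2 (hroot ζ hζ)
    · rw [Multiset.count_eq_zero.2 (fun h => hζ h)]
      exact Nat.zero_le _
  have hdvd1 : ((nthRootsFinset n (1 : ℂ)).val.map (fun a => X - C a)).prod ∣ H :=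
    dvd_trans (Multiset.prod_dvd_prod_of_le (Multiset.map_le_map hle))
      (Polynomial.prod_multiset_X_sub_C_dvd H)
  have hdvd2 : (X : Polynomial ℂ) ^ n - 1 ∣ H := by
    rw [hprod, Finset.prod_eq_multiset_prod]
    exact hdvd1
  have hfac : (X : Polynomial ℂ) ^ n - 1 = (X - 1) * qIntC n := by
    rw [← geom_sum_mul (X : Polynomial ℂ) n, mul_comm]
    rfl
  rw [hfac, hHdef] at hdvd2
  exact (mul_dvd_mul_iff_left hx).1 hdvd2
end

section
/- Assume {a_n(q)}_{n≥1} ⊆ ℤ[q] satisfies the q-Gauss congruences of order r with respect to a set of primes S, for some r ≥ 1. Let n ≥ 2 and m ≥ 1 be integers with n ∈ ℕ_S, and let p be the smallest prime divisor of n. Then ∑_{d|n} μ(n/d) a_{md}(1) ≡ 0 mod n^{1+min{p−2, r−1}}. -/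
open Polynomial Finset

/-- `{a_n(q)}` satisfies the `q`-Gauss congruences of order `r` with respect to `S`:
it satisfies the `q`-Gauss congruences with respect to `S`, and for all `m ≥ 1`, `n ∈ ℕ_S` and
`1 ≤ j ≤ r - 1`, the function `μ_n → ℂ`, `ω ↦ ω^j a_{nm}^{(j)}(ω)` depends only on `ord(ω)`. -/
def qGaussOrderWrt (S : Set ℕ) (r : ℕ) (a : ℕ → Polynomial ℤ) : Prop :=
  qGaussWrt S a ∧
    ∀ m n : ℕ, 0 < m → NatS S n → ∀ j : ℕ, 1 ≤ j → j ≤ r - 1 →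
      ∀ ω₁ ω₂ : ℂ, ω₁ ^ n = 1 → ω₂ ^ n = 1 → orderOf ω₁ = orderOf ω₂ →
        ω₁ ^ j * Polynomial.aeval ω₁
            ((fun p : Polynomial ℤ => Polynomial.derivative p)^[j] (a (n * m)))
          = ω₂ ^ j * Polynomial.aeval ω₂
            ((fun p : Polynomial ℤ => Polynomial.derivative p)^[j] (a (n * m)))

/-! ### Auxiliary machinery -/

noncomputable def Dop : Polynomial ℤ →ₗ[ℤ] Polynomial ℤ where
  toFun f := X * derivative f
  map_add' f g := by simp [mul_add]
  map_smul' c f := by simp [mul_smul_comm]; ring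

lemma Dop_apply (f : Polynomial ℤ) : Dop f = X * derivative f := rfl

lemma coeff_Dop (f : Polynomial ℤ) (k : ℕ) : (Dop f).coeff k = k * f.coeff k := by
  rcases k with _ | k
  · simp [Dop_apply, Polynomial.mul_coeff_zero]
  · simp [Dop_apply, Polynomial.coeff_X_mul, Polynomial.coeff_derivative]
    ring

lemma coeff_Dop_iter (j : ℕ) (f : Polynomial ℤ) (k : ℕ) :
    ((Dop ^ j) f).coeff k = (k : ℤ) ^ j * f.coeff k := by
  induction j generalizing f with
  | zero => simp
  | succ j ih =>
    rw [pow_succ, Module.End.mul_apply, ih, coeff_Dop]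
    ring

lemma natDegree_Dop_le (f : Polynomial ℤ) : (Dop f).natDegree ≤ f.natDegree := by
  rcases eq_or_ne (derivative f) 0 with h | h
  · rw [Dop_apply, h, mul_zero]; simp
  · have h1 : (Dop f).natDegree ≤ 1 + (derivative f).natDegree := by
      simpa [Dop_apply] using Polynomial.natDegree_mul_le (p := (X : Polynomial ℤ)) (q := derivative f)
    have h2 := Polynomial.natDegree_derivative_le f
    have h3 : f.natDegree ≠ 0 := by
      intro h0
      rw [Polynomial.eq_C_of_natDegree_eq_zero h0] at h
      simp at h
    omega

lemma natDegree_Dop_iter_le (j : ℕ) (f : Polynomial ℤ) : ((Dop ^ j) f).natDegree ≤ f.natDegree := by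
  induction j generalizing f with
  | zero => simp
  | succ j ih =>
    rw [pow_succ, Module.End.mul_apply]
    exact le_trans (ih _) (natDegree_Dop_le f)

lemma aeval_Dop_iter (x : ℂ) (j : ℕ) (f : Polynomial ℤ) (B : ℕ) (hB : f.natDegree < B) :
    aeval x ((Dop ^ j) f) = ∑ k ∈ range B, (f.coeff k : ℂ) * (k : ℂ) ^ j * x ^ k := by
  have hdeg : ((Dop ^ j) f).natDegree < B := lt_of_le_of_lt (natDegree_Dop_iter_le j f) hB
  rw [Polynomial.aeval_def, Polynomial.eval₂_eq_sum_range' _ hdeg]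
  refine Finset.sum_congr rfl fun k _ => ?_
  rw [coeff_Dop_iter]
  simp only [algebraMap_int_eq, eq_intCast]
  push_cast
  ring

lemma Dop_comp_Xpow (f : Polynomial ℤ) (e : ℕ) (he : 1 ≤ e) :
    Dop (f.comp (X ^ e)) = (e : ℤ) • ((Dop f).comp (X ^ e)) := by
  rw [Dop_apply, Polynomial.derivative_comp, Polynomial.derivative_X_pow]
  rw [Dop_apply, Polynomial.mul_comp, Polynomial.X_comp]
  rw [zsmul_eq_mul]
  have hX : (X : Polynomial ℤ) * (C (e : ℤ) * X ^ (e - 1)) = C (e : ℤ) * X ^ e := by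
    rw [mul_left_comm]
    congr 1
    rw [← pow_succ']
    congr 1
    omega
  push_cast
  rw [← mul_assoc, hX]
  rw [Polynomial.C_eq_natCast]
  ring

lemma Dop_iter_comp_Xpow (j : ℕ) (f : Polynomial ℤ) (e : ℕ) (he : 1 ≤ e) :
    (Dop ^ j) (f.comp (X ^ e)) = ((e : ℤ) ^ j) • (((Dop ^ j) f).comp (X ^ e)) := by
  induction j generalizing f with
  | zero => simp
  | succ j ih =>
    rw [pow_succ, Module.End.mul_apply, Dop_comp_Xpow _ _ he, map_smul, ih (Dop f), smul_smul]
    congr 1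
    ring

noncomputable def genF (f : Polynomial ℤ) (i : ℕ) : Polynomial ℤ :=
  X ^ i * (fun p : Polynomial ℤ => Polynomial.derivative p)^[i] f

lemma derivIter_succ (f : Polynomial ℤ) (i : ℕ) :
    (fun p : Polynomial ℤ => Polynomial.derivative p)^[i+1] f
      = derivative ((fun p : Polynomial ℤ => Polynomial.derivative p)^[i] f) :=
  Function.iterate_succ_apply' _ i f

lemma Dop_genF (f : Polynomial ℤ) (i : ℕ) (hi : 1 ≤ i) :
    Dop (genF f i) = (i : ℤ) • genF f i + genF f (i+1) := by
  set g := (fun p : Polynomial ℤ => Polynomial.derivative p)^[i] f with hg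
  have h1 : (X : Polynomial ℤ) * X^(i-1) = X^i := by
    rw [← pow_succ']
    congr 1
    omega
  rw [genF, Dop_apply, derivative_mul, derivative_X_pow, mul_add]
  have h2 : (X : Polynomial ℤ) * (C (i:ℤ) * X^(i-1) * g) = C (i:ℤ) * ((X * X^(i-1)) * g) := by
    push_cast
    ring
  rw [h2, h1]
  have h3 : (X : Polynomial ℤ) * (X^i * derivative g) = X^(i+1) * derivative g := by
    rw [← mul_assoc, ← pow_succ']
  rw [h3]
  simp only [genF]
  rw [derivIter_succ, ← hg, Polynomial.smul_eq_C_mul]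

lemma Dop_iter_mem_span (f : Polynomial ℤ) : ∀ j, 1 ≤ j →
    (Dop ^ j) f ∈ Submodule.span ℤ (genF f '' (Set.Icc 1 j)) := by
  intro j
  induction j with
  | zero => omega
  | succ j ih =>
    intro _
    rcases Nat.eq_zero_or_pos j with hj0 | hj1
    · subst hj0
      have : (Dop ^ 1) f = genF f 1 := by
        rw [pow_one, Dop_apply, genF, pow_one]
        rfl
      rw [this]
      exact Submodule.subset_span ⟨1, by simp, rfl⟩
    · have hmem := ih hj1
      have hstep : (Dop ^ (j+1)) f = Dop ((Dop ^ j) f) := by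
        rw [pow_succ', Module.End.mul_apply]
      rw [hstep]
      have hmap : Dop ((Dop ^ j) f) ∈ Submodule.map Dop (Submodule.span ℤ (genF f '' (Set.Icc 1 j))) :=
        Submodule.mem_map_of_mem hmem
      rw [Submodule.map_span] at hmap
      refine Submodule.span_le.mpr ?_ hmap
      rintro y ⟨z, ⟨i, hi, rfl⟩, rfl⟩
      obtain ⟨hi1, hij⟩ := hi
      rw [Dop_genF f i hi1]
      have m1 : genF f i ∈ Submodule.span ℤ (genF f '' (Set.Icc 1 (j+1))) :=
        Submodule.subset_span ⟨i, ⟨hi1, by omega⟩, rfl⟩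
      have m2 : genF f (i+1) ∈ Submodule.span ℤ (genF f '' (Set.Icc 1 (j+1))) :=
        Submodule.subset_span ⟨i+1, ⟨by omega, by omega⟩, rfl⟩
      exact Submodule.add_mem _ (Submodule.smul_mem _ _ m1) m2

lemma aeval_Dop_iter_eq_of_deriv (f : Polynomial ℤ) (s : ℕ) (ζ₁ ζ₂ : ℂ)
    (hyp : ∀ i : ℕ, 1 ≤ i → i ≤ s →
      ζ₁ ^ i * Polynomial.aeval ζ₁ ((fun p : Polynomial ℤ => Polynomial.derivative p)^[i] f)
        = ζ₂ ^ i * Polynomial.aeval ζ₂ ((fun p : Polynomial ℤ => Polynomial.derivative p)^[i] f))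
    (j : ℕ) (hj1 : 1 ≤ j) (hjs : j ≤ s) :
    Polynomial.aeval ζ₁ ((Dop ^ j) f) = Polynomial.aeval ζ₂ ((Dop ^ j) f) := by
  set ψ : Polynomial ℤ →ₗ[ℤ] ℂ :=
    (Polynomial.aeval ζ₁ : Polynomial ℤ →ₐ[ℤ] ℂ).toLinearMap
      - (Polynomial.aeval ζ₂ : Polynomial ℤ →ₐ[ℤ] ℂ).toLinearMap with hψ
  have hker : Submodule.span ℤ (genF f '' (Set.Icc 1 j)) ≤ LinearMap.ker ψ := by
    rw [Submodule.span_le]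
    rintro y ⟨i, ⟨hi1, hij⟩, rfl⟩
    rw [SetLike.mem_coe, LinearMap.mem_ker, hψ]
    have : ∀ ζ : ℂ, Polynomial.aeval ζ (genF f i)
        = ζ ^ i * Polynomial.aeval ζ ((fun p : Polynomial ℤ => Polynomial.derivative p)^[i] f) := by
      intro ζ
      rw [genF, map_mul, Polynomial.aeval_X_pow]
    simp only [LinearMap.sub_apply, AlgHom.toLinearMap_apply]
    rw [this ζ₁, this ζ₂, hyp i hi1 (le_trans hij hjs), sub_self]
  have hmem := Dop_iter_mem_span f j hj1
  have := hker hmem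
  rw [LinearMap.mem_ker, hψ] at this
  simpa using sub_eq_zero.mp (by simpa using this)

def Lsum (s j : ℕ) (x : ℤ) : ℤ := ∑ i ∈ range (s+1), (-1)^i * (s.choose i) * (x+i)^j

lemma Lrec (s j : ℕ) (x : ℤ) : Lsum (s+1) j x = Lsum s j x - Lsum s j (x+1) := by
  have key : ∀ (c : ℕ → ℕ), ∑ i ∈ range (s+2), (-1:ℤ)^i * (c i) * (x+i)^j =
      (∑ i ∈ range (s+1), (-1:ℤ)^(i+1) * (c (i+1)) * ((x+1)+i)^j) + (c 0) * x^j := by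
    intro c
    rw [Finset.sum_range_succ' (fun i => (-1:ℤ)^i * (c i) * (x+i)^j) (s+1)]
    congr 1
    · refine Finset.sum_congr rfl fun i _ => by push_cast; ring
    · push_cast; ring
  have lhs_eq : Lsum (s+1) j x = ∑ i ∈ range (s+2), (-1:ℤ)^i * (((s+1).choose i : ℕ) : ℤ) * (x+i)^j := rfl
  rw [lhs_eq, key]
  have hch : ∀ i, ((s+1).choose (i+1) : ℤ) = (s.choose i : ℤ) + (s.choose (i+1) : ℤ) := by
    intro i
    rw [Nat.choose_succ_succ]
    push_cast
    ring
  have split : ∑ i ∈ range (s+1), (-1:ℤ)^(i+1) * ((s+1).choose (i+1)) * ((x+1)+i)^j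
      = (∑ i ∈ range (s+1), (-1:ℤ)^(i+1) * (s.choose i) * ((x+1)+i)^j)
        + ∑ i ∈ range (s+1), (-1:ℤ)^(i+1) * (s.choose (i+1)) * ((x+1)+i)^j := by
    rw [← Finset.sum_add_distrib]
    refine Finset.sum_congr rfl fun i _ => by rw [hch]; ring
  rw [split]
  have h2 : ∑ i ∈ range (s+1), (-1:ℤ)^(i+1) * (s.choose i) * ((x+1)+i)^j = - Lsum s j (x+1) := by
    unfold Lsum
    rw [← Finset.sum_neg_distrib]
    refine Finset.sum_congr rfl fun i _ => by ring
  have h3 : (∑ i ∈ range (s+1), (-1:ℤ)^(i+1) * (s.choose (i+1)) * ((x+1)+i)^j) + (s.choose 0 : ℤ) * x^j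
      = Lsum s j x := by
    unfold Lsum
    rw [Finset.sum_range_succ' (fun i => (-1:ℤ)^i * (s.choose i) * (x+i)^j) s]
    have h4 : ∑ i ∈ range (s+1), (-1:ℤ)^(i+1) * (s.choose (i+1)) * ((x+1)+i)^j
        = ∑ i ∈ range s, (-1:ℤ)^(i+1) * (s.choose (i+1)) * ((x+1)+i)^j := by
      rw [Finset.sum_range_succ]
      simp [Nat.choose_succ_self]
    rw [h4]
    congr 1
    · refine Finset.sum_congr rfl fun i _ => by push_cast; ring
    · push_cast; ring
  rw [h2]
  have hc0 : ((s+1).choose 0 : ℤ) = (s.choose 0 : ℤ) := by simp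
  rw [hc0]
  linarith [h3]

lemma Lsum_eq (s : ℕ) : ∀ j ≤ s, ∀ x : ℤ,
    Lsum s j x = if j = s then (-1:ℤ)^s * (s.factorial : ℤ) else 0 := by
  induction s with
  | zero =>
    intro j hj x
    interval_cases j
    simp [Lsum]
  | succ s ih =>
    intro j hj x
    rcases Nat.lt_or_ge j (s+1) with hlt | hge
    · have hjs : j ≤ s := by omega
      rw [Lrec, ih j hjs x, ih j hjs (x+1)]
      simp only [sub_self]
      rw [if_neg (by omega)]
    · have hj1 : j = s + 1 := by omega
      subst hj1
      rw [if_pos rfl]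
      have expand : Lsum (s+1) (s+1) x
          = x * Lsum (s+1) s x + ∑ i ∈ range (s+2), (-1:ℤ)^i * ((s+1).choose i) * i * (x+i)^s := by
        unfold Lsum
        rw [Finset.mul_sum, ← Finset.sum_add_distrib]
        refine Finset.sum_congr rfl fun i _ => by rw [pow_succ _ s]; ring
      rw [expand]
      have hL0 : Lsum (s+1) s x = 0 := by
        rw [Lrec, ih s le_rfl x, ih s le_rfl (x+1)]
        simp
      rw [hL0, mul_zero, zero_add]
      have hsecond : ∑ i ∈ range (s+2), (-1:ℤ)^i * ((s+1).choose i) * i * (x+i)^s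
          = (-(s+1:ℤ)) * Lsum s s (x+1) := by
        rw [Finset.sum_range_succ' (fun i => (-1:ℤ)^i * ((s+1).choose i) * i * (x+i)^s) (s+1)]
        unfold Lsum
        rw [Finset.mul_sum]
        have hlast : ((-1:ℤ)^0 * (((s+1).choose 0 : ℕ) : ℤ) * ((0:ℕ):ℤ) * (x+((0:ℕ):ℤ))^s) = 0 := by
          simp
        rw [hlast, add_zero]
        refine Finset.sum_congr rfl fun i _ => ?_
        have h5 : ((s+1) * (s.choose i) : ℕ) = ((s+1).choose (i+1)) * (i+1) := by
          simpa [Nat.succ_eq_add_one] using Nat.add_one_mul_choose_eq s i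
        have hcc : (((s+1).choose (i+1) : ℕ) : ℤ) * ((i:ℤ)+1) = ((s:ℤ)+1) * (s.choose i : ℤ) := by
          have := congrArg (Nat.cast : ℕ → ℤ) h5
          push_cast at this
          linarith
        push_cast
        linear_combination ((-1:ℤ)^(i+1)) * (x+1+(i:ℤ))^s * hcc
      rw [hsecond, ih s le_rfl (x+1), if_pos rfl]
      push_cast [Nat.factorial_succ]
      ring

lemma fact_coprime (n s : ℕ) (h : ∀ t, 1 ≤ t → t ≤ s → Nat.Coprime t n) :
    Nat.Coprime (s.factorial) n := by
  induction s with
  | zero => simpa using Nat.coprime_one_left n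
  | succ s ih =>
    rw [Nat.factorial_succ]
    exact Nat.Coprime.mul (h (s+1) (by omega) le_rfl) (ih fun t ht hts => h t ht (by omega))

/-! ### Main theorem -/

theorem stmt5 (S : Set ℕ) (hS : ∀ p ∈ S, Nat.Prime p) (r : ℕ) (hr : 1 ≤ r)
    (a : ℕ → Polynomial ℤ) (ha : qGaussOrderWrt S r a)
    (n m : ℕ) (hn2 : 2 ≤ n) (hnS : NatS S n) (hm : 1 ≤ m) :
    (n : ℤ) ^ (1 + min (n.minFac - 2) (r - 1)) ∣
      ∑ d ∈ n.divisors, ArithmeticFunction.moebius (n / d) * (a (m * d)).eval 1 := by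
  obtain ⟨hq, hordc⟩ := ha
  have hn0 : 0 < n := by omega
  have hpp : (n.minFac).Prime := Nat.minFac_prime (by omega)
  have hp2 : 2 ≤ n.minFac := hpp.two_le
  set s := min (n.minFac - 2) (r - 1) with hsdef
  have hsp : s + 1 < n.minFac := by
    have := min_le_left (n.minFac - 2) (r - 1)
    omega
  have hsr : s ≤ r - 1 := min_le_right _ _
  set A : Polynomial ℤ := ∑ e ∈ n.divisors,
      Polynomial.C (ArithmeticFunction.moebius e) * ((a (n * m / e)).comp (X ^ e)) with hAdef
  have hdvdA : qInt n ∣ A := hq n m hnS (by omega)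
  -- coprimality of small t with n
  have hcop : ∀ t : ℕ, 1 ≤ t → t ≤ s + 1 → Nat.Coprime t n := by
    intro t ht1 hts
    by_contra hco
    have hgn0 : Nat.gcd t n ≠ 0 := by
      intro h0
      rw [Nat.eq_zero_of_gcd_eq_zero_right h0] at hn0
      omega
    have hgn1 : Nat.gcd t n ≠ 1 := hco
    have hg2 : 2 ≤ Nat.gcd t n := by omega
    set g := Nat.gcd t n with hgdef
    have hq1 : (g.minFac).Prime := Nat.minFac_prime (by omega)
    have hq2 : g.minFac ∣ t := dvd_trans (Nat.minFac_dvd g) (Nat.gcd_dvd_left t n)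
    have hq3 : g.minFac ∣ n := dvd_trans (Nat.minFac_dvd g) (Nat.gcd_dvd_right t n)
    have hle1 : n.minFac ≤ g.minFac := Nat.minFac_le_of_dvd hq1.two_le hq3
    have hle2 : g.minFac ≤ t := Nat.le_of_dvd (by omega) hq2
    omega
  -- primitive root
  set ζ : ℂ := Complex.exp (2 * Real.pi * Complex.I / n) with hζdef
  have hζ : IsPrimitiveRoot ζ n := Complex.isPrimitiveRoot_exp n (by omega)
  have hζ1 : ζ ^ n = 1 := hζ.pow_eq_one
  have hζmod : ∀ x : ℕ, ζ ^ (x % n) = ζ ^ x := by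
    intro x
    conv_rhs => rw [← Nat.div_add_mod x n]
    rw [pow_add, pow_mul, hζ1, one_pow, one_mul]
  have hζmodeq : ∀ x y : ℕ, x ≡ y [MOD n] → ζ ^ x = ζ ^ y := by
    intro x y hxy
    rw [← hζmod x, ← hζmod y, hxy]
  have hgeom : ∀ w : ℕ, ∑ u ∈ range n, (ζ ^ w) ^ u = if n ∣ w then (n : ℂ) else 0 := by
    intro w
    by_cases hd : n ∣ w
    · rw [if_pos hd, (hζ.pow_eq_one_iff_dvd w).mpr hd]
      simp
    · rw [if_neg hd]
      have h1 : ζ ^ w ≠ 1 := fun h => hd ((hζ.pow_eq_one_iff_dvd w).mp h)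
      rw [geom_sum_eq h1 n]
      have : (ζ ^ w) ^ n = 1 := by
        rw [← pow_mul, mul_comm, pow_mul, hζ1, one_pow]
      rw [this, sub_self, zero_div]
  -- the class sums
  set B := A.natDegree + 1 with hBdef
  set v : ℕ → ℕ := fun t => n * (s + 2) - t with hvdef
  set σ : ℕ → ℕ → ℤ := fun j t =>
    ∑ k ∈ range B, (if n ∣ (k + v t) then A.coeff k else 0) * (k : ℤ) ^ j with hσdef
  have hvt : ∀ t, t ≤ s + 1 → t + v t = n * (s + 2) := by
    intro t ht
    have h1 : t ≤ n * (s + 2) := by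
      calc t ≤ s + 2 := by omega
      _ = 1 * (s + 2) := (one_mul _).symm
      _ ≤ n * (s + 2) := Nat.mul_le_mul_right _ (by omega)
    exact Nat.add_sub_cancel' h1
  -- the root-of-unity filter
  have hfilt : ∀ j t : ℕ, t ≤ s + 1 →
      ((σ j t : ℤ) : ℂ) * n = ∑ u ∈ range n, (Polynomial.aeval (ζ ^ u) ((Dop ^ j) A)) * ζ ^ (u * v t) := by
    intro j t ht
    have hswap : ∑ u ∈ range n, (Polynomial.aeval (ζ ^ u) ((Dop ^ j) A)) * ζ ^ (u * v t)
        = ∑ k ∈ range B, ((A.coeff k : ℂ) * (k : ℂ) ^ j) * ∑ u ∈ range n, (ζ ^ (k + v t)) ^ u := by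
      calc ∑ u ∈ range n, (Polynomial.aeval (ζ ^ u) ((Dop ^ j) A)) * ζ ^ (u * v t)
          = ∑ u ∈ range n, ∑ k ∈ range B, ((A.coeff k : ℂ) * (k : ℂ) ^ j) * (ζ ^ (k + v t)) ^ u := by
            refine Finset.sum_congr rfl fun u _ => ?_
            rw [aeval_Dop_iter (ζ ^ u) j A B (by omega), Finset.sum_mul]
            refine Finset.sum_congr rfl fun k _ => ?_
            have hpow : (ζ ^ u) ^ k * ζ ^ (u * v t) = (ζ ^ (k + v t)) ^ u := by
              rw [← pow_mul, ← pow_mul, ← pow_add, ← Nat.mul_add, mul_comm u (k + v t), pow_mul]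
            rw [← hpow]
            ring
      _ = ∑ k ∈ range B, ((A.coeff k : ℂ) * (k : ℂ) ^ j) * ∑ u ∈ range n, (ζ ^ (k + v t)) ^ u := by
            rw [Finset.sum_comm]
            exact Finset.sum_congr rfl fun k _ => (Finset.mul_sum _ _ _).symm
    rw [hswap]
    rw [hσdef]
    push_cast
    rw [Finset.sum_mul]
    refine Finset.sum_congr rfl fun k _ => ?_
    rw [hgeom (k + v t)]
    split_ifs with h
    · ring
    · ring
  -- vanishing of A at nontrivial roots of unity
  have hvanish : ∀ ω : ℂ, ω ^ n = 1 → ω ≠ 1 → Polynomial.aeval ω A = 0 := by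
    intro ω hω hω1
    obtain ⟨Bq, hBq⟩ := hdvdA
    rw [hBq, map_mul]
    have hzero : Polynomial.aeval ω (qInt n) = 0 := by
      rw [qInt, map_sum]
      have : ∑ i ∈ range n, Polynomial.aeval ω (X ^ i : Polynomial ℤ) = ∑ i ∈ range n, ω ^ i := by
        refine Finset.sum_congr rfl fun i _ => by rw [Polynomial.aeval_X_pow]
      rw [this]
      have hgs := geom_sum_mul ω n
      have : (∑ i ∈ range n, ω ^ i) * (ω - 1) = 0 := by rw [hgs, hω, sub_self]
      rcases mul_eq_zero.mp this with h | h
      · exact h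
      · exact absurd (by linear_combination h) hω1
    rw [hzero, zero_mul]
  -- expansion of aeval of Dop^j A over divisors
  have hexpand : ∀ (ω : ℂ) (j : ℕ), Polynomial.aeval ω ((Dop ^ j) A)
      = ∑ e ∈ n.divisors, ((ArithmeticFunction.moebius e : ℤ) : ℂ) * (e : ℂ) ^ j
          * Polynomial.aeval (ω ^ e) ((Dop ^ j) (a (n * m / e))) := by
    intro ω j
    rw [hAdef, map_sum, map_sum]
    refine Finset.sum_congr rfl fun e he => ?_
    have he1 : 1 ≤ e := Nat.pos_of_mem_divisors he
    rw [← Polynomial.smul_eq_C_mul, map_smul, Dop_iter_comp_Xpow j _ e he1, map_smul, map_smul,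
      Polynomial.aeval_comp, Polynomial.aeval_X_pow]
    simp only [zsmul_eq_mul, smul_eq_mul]
    push_cast
    ring
  -- Lemma A : aeval of Dop^j A at roots of unity depends only on the order
  have hordeq : ∀ j : ℕ, j ≤ s → ∀ ω₁ ω₂ : ℂ, ω₁ ^ n = 1 → ω₂ ^ n = 1 →
      orderOf ω₁ = orderOf ω₂ →
      Polynomial.aeval ω₁ ((Dop ^ j) A) = Polynomial.aeval ω₂ ((Dop ^ j) A) := by
    intro j hj ω₁ ω₂ h1 h2 heq
    rcases Nat.eq_zero_or_pos j with rfl | hj1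
    · simp only [pow_zero, Module.End.one_apply]
      by_cases hω : ω₁ = 1
      · have : orderOf ω₂ = 1 := by rw [← heq, hω, orderOf_one]
        rw [hω, orderOf_eq_one_iff.mp this]
      · have hω2 : ω₂ ≠ 1 := by
          intro h
          rw [h, orderOf_one] at heq
          exact hω (orderOf_eq_one_iff.mp heq)
        rw [hvanish ω₁ h1 hω, hvanish ω₂ h2 hω2]
    · rw [hexpand ω₁ j, hexpand ω₂ j]
      refine Finset.sum_congr rfl fun e he => ?_
      have he1 : 1 ≤ e := Nat.pos_of_mem_divisors he
      have hedvd : e ∣ n := (Nat.mem_divisors.mp he).1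
      obtain ⟨c, hc⟩ := hedvd
      have hc1 : 1 ≤ c := by
        rcases Nat.eq_zero_or_pos c with h0 | h
        · rw [h0, mul_zero] at hc; omega
        · exact h
      have hN : n * m / e = c * m := by
        rw [hc, mul_assoc, Nat.mul_div_cancel_left _ (by omega : 0 < e)]
      congr 1
      -- orders of ω₁^e and ω₂^e agree
      have hδeq : orderOf (ω₂ ^ e) = orderOf (ω₁ ^ e) := by
        rw [orderOf_pow' ω₁ (by omega : e ≠ 0), orderOf_pow' ω₂ (by omega : e ≠ 0), heq]
      set δ := orderOf (ω₁ ^ e) with hδdef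
      have hpow1 : (ω₁ ^ e) ^ (c * m) = 1 := by
        rw [← pow_mul, ← mul_assoc, ← hc, pow_mul, h1, one_pow]
      have hδdvdcm : δ ∣ c * m := orderOf_dvd_of_pow_eq_one hpow1
      have hpown : (ω₁ ^ e) ^ n = 1 := by
        rw [← pow_mul, mul_comm, pow_mul, h1, one_pow]
      have hδdvdn : δ ∣ n := orderOf_dvd_of_pow_eq_one hpown
      have hfin : IsOfFinOrder (ω₁ ^ e) := isOfFinOrder_iff_pow_eq_one.mpr ⟨n, by omega, hpown⟩
      have hδpos : 0 < δ := hfin.orderOf_pos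
      have hNatSδ : NatS S δ := ⟨hδpos, fun q hq' hqd => hnS.2 q hq' (hqd.trans hδdvdn)⟩
      have hm'pos : 0 < c * m / δ := Nat.div_pos (Nat.le_of_dvd (by positivity) hδdvdcm) hδpos
      have hkey : δ * (c * m / δ) = n * m / e := by
        rw [Nat.mul_div_cancel' hδdvdcm, hN]
      refine aeval_Dop_iter_eq_of_deriv (a (n * m / e)) s (ω₁ ^ e) (ω₂ ^ e) ?_ j hj1 hj
      intro i hi1 his
      have := hordc (c * m / δ) δ hm'pos hNatSδ i hi1 (le_trans his hsr) (ω₁ ^ e) (ω₂ ^ e)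
        (pow_orderOf_eq_one _) (by rw [← hδeq]; exact pow_orderOf_eq_one _) hδeq.symm
      rw [hkey] at this
      exact this
  -- t-independence of σ
  have htind : ∀ j : ℕ, j ≤ s → ∀ t : ℕ, 1 ≤ t → t ≤ s + 1 → σ j t = σ j 1 := by
    intro j hj t ht1 hts
    have hcopt : Nat.Coprime t n := hcop t ht1 hts
    obtain ⟨b, -, hb⟩ := Nat.exists_mul_mod_eq_one_of_coprime hcopt (by omega)
    have htb : t * b ≡ 1 [MOD n] := by
      show t * b % n = 1 % n
      rw [hb, Nat.mod_eq_of_lt (by omega)]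
    have hcoptb : Nat.Coprime (t * b) n := by
      show Nat.gcd (t * b) n = 1
      rw [Nat.gcd_comm, Nat.gcd_rec, hb, Nat.gcd_one_left]
    have hcopb : Nat.Coprime b n := Nat.Coprime.coprime_dvd_left (dvd_mul_left b t) hcoptb
    -- complex identity
    have hkey : ((σ j t : ℤ) : ℂ) * n = ((σ j 1 : ℤ) : ℂ) * n := by
      rw [hfilt j t hts, hfilt j 1 (by omega)]
      refine Finset.sum_nbij' (fun u => t * u % n) (fun w => b * w % n) ?_ ?_ ?_ ?_ ?_
      · intro u hu
        exact Finset.mem_range.mpr (Nat.mod_lt _ hn0)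
      · intro w hw
        exact Finset.mem_range.mpr (Nat.mod_lt _ hn0)
      · intro u hu
        have : b * (t * u % n) ≡ u [MOD n] := by
          calc b * (t * u % n) ≡ b * (t * u) [MOD n] :=
                Nat.ModEq.mul_left b (Nat.mod_modEq (t*u) n)
          _ = (t * b) * u := by ring
          _ ≡ 1 * u [MOD n] := Nat.ModEq.mul_right u htb
          _ = u := one_mul u
        calc b * (t * u % n) % n = u % n := this
        _ = u := Nat.mod_eq_of_lt (Finset.mem_range.mp hu)
      · intro w hw
        have : t * (b * w % n) ≡ w [MOD n] := by
          calc t * (b * w % n) ≡ t * (b * w) [MOD n] :=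
                Nat.ModEq.mul_left t (Nat.mod_modEq (b*w) n)
          _ = (t * b) * w := by ring
          _ ≡ 1 * w [MOD n] := Nat.ModEq.mul_right w htb
          _ = w := one_mul w
        calc t * (b * w % n) % n = w % n := this
        _ = w := Nat.mod_eq_of_lt (Finset.mem_range.mp hw)
      · intro u hu
        -- term equality
        have haev : Polynomial.aeval (ζ ^ u) ((Dop ^ j) A)
            = Polynomial.aeval (ζ ^ (t * u % n)) ((Dop ^ j) A) := by
          have hz : ζ ^ (t * u % n) = (ζ ^ u) ^ t := by
            rw [hζmod, mul_comm t u, pow_mul]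
          refine hordeq j hj (ζ ^ u) (ζ ^ (t * u % n)) ?_ ?_ ?_
          · rw [← pow_mul, mul_comm, pow_mul, hζ1, one_pow]
          · rw [← pow_mul, mul_comm, pow_mul, hζ1, one_pow]
          · rw [hz, orderOf_pow' (ζ ^ u) (by omega : t ≠ 0)]
            have hd : orderOf (ζ ^ u) ∣ n := orderOf_dvd_of_pow_eq_one
              (by rw [← pow_mul, mul_comm, pow_mul, hζ1, one_pow])
            have : Nat.gcd (orderOf (ζ ^ u)) t = 1 :=
              Nat.Coprime.symm (Nat.Coprime.coprime_dvd_right hd hcopt)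
            rw [this, Nat.div_one]
        have hexps : ζ ^ (u * v t) = ζ ^ ((t * u % n) * v 1) := by
          refine hζmodeq _ _ ?_
          have e1 : t + v t = n * (s + 2) := hvt t hts
          have e2 : 1 + v 1 = n * (s + 2) := hvt 1 (by omega)
          -- t * v 1 ≡ v t [MOD n], then multiply by u
          have h0 : t * v 1 + t ≡ v t + t [MOD n] := by
            calc t * v 1 + t = t * (1 + v 1) := by ring
            _ = t * (n * (s + 2)) := by rw [e2]
            _ ≡ 0 [MOD n] := (Nat.modEq_zero_iff_dvd).mpr ⟨t * (s+2), by ring⟩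
            _ ≡ n * (s + 2) [MOD n] := ((Nat.modEq_zero_iff_dvd).mpr ⟨s + 2, rfl⟩).symm
            _ = v t + t := by rw [← e1]; ring
          have h1 : t * v 1 ≡ v t [MOD n] := Nat.ModEq.add_right_cancel' t h0
          calc u * v t ≡ u * (t * v 1) [MOD n] := (Nat.ModEq.mul_left u h1).symm
          _ = (t * u) * v 1 := by ring
          _ ≡ ((t * u) % n) * v 1 [MOD n] := Nat.ModEq.mul_right _ (Nat.mod_modEq _ n).symm
        rw [haev, hexps]
    have : (σ j t : ℂ) = (σ j 1 : ℂ) := by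
      have hne : (n : ℂ) ≠ 0 := by
        simp only [ne_eq, Nat.cast_eq_zero]
        omega
      exact mul_right_cancel₀ hne hkey
    exact_mod_cast this
  -- Step 3 : binomial expansion and divisibility
  have hstep3 : ∀ t : ℕ, 1 ≤ t → t ≤ s + 1 →
      (n : ℤ) ^ s ∣ ∑ j ∈ range (s+1), (t:ℤ)^j * (-1:ℤ)^(s-j) * (Nat.choose s j : ℤ) * σ (s-j) 1 := by
    intro t ht1 hts
    have hR : ∑ k ∈ range B, (if n ∣ (k + v t) then A.coeff k else 0) * ((t:ℤ) - k)^s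
        = ∑ j ∈ range (s+1), (t:ℤ)^j * (-1:ℤ)^(s-j) * (Nat.choose s j : ℤ) * σ (s-j) 1 := by
      have hexp : ∀ k : ℕ, ((t:ℤ) - k)^s
          = ∑ j ∈ range (s+1), (t:ℤ)^j * ((-1:ℤ)^(s-j) * (k:ℤ)^(s-j)) * (Nat.choose s j : ℤ) := by
        intro k
        rw [sub_eq_add_neg, add_pow]
        refine Finset.sum_congr rfl fun j _ => ?_
        rw [neg_pow]
        try ring
      calc ∑ k ∈ range B, (if n ∣ (k + v t) then A.coeff k else 0) * ((t:ℤ) - k)^s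
          = ∑ k ∈ range B, ∑ j ∈ range (s+1),
              (t:ℤ)^j * (-1:ℤ)^(s-j) * (Nat.choose s j : ℤ)
                * ((if n ∣ (k + v t) then A.coeff k else 0) * (k:ℤ)^(s-j)) := by
            refine Finset.sum_congr rfl fun k _ => ?_
            rw [hexp k, Finset.mul_sum]
            refine Finset.sum_congr rfl fun j _ => by ring
      _ = ∑ j ∈ range (s+1), (t:ℤ)^j * (-1:ℤ)^(s-j) * (Nat.choose s j : ℤ) * σ (s-j) t := by
            rw [Finset.sum_comm]
            refine Finset.sum_congr rfl fun j _ => ?_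
            rw [hσdef, Finset.mul_sum]
      _ = ∑ j ∈ range (s+1), (t:ℤ)^j * (-1:ℤ)^(s-j) * (Nat.choose s j : ℤ) * σ (s-j) 1 := by
            refine Finset.sum_congr rfl fun j hj => ?_
            rw [htind (s-j) (by omega) t ht1 hts]
    rw [← hR]
    refine Finset.dvd_sum fun k hk => ?_
    split_ifs with h
    · have hd1 : (n:ℤ) ∣ ((t:ℤ) - k) := by
        have e1 : t + v t = n * (s + 2) := hvt t hts
        obtain ⟨w, hw⟩ := h
        have : (t:ℤ) - k = (n:ℤ) * (s+2) - (n:ℤ) * w := by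
          have c1 : ((t + v t : ℕ) : ℤ) = (n:ℤ) * (s+2) := by exact_mod_cast congrArg (Nat.cast : ℕ → ℤ) e1
          have c2 : ((k + v t : ℕ) : ℤ) = (n:ℤ) * w := by exact_mod_cast congrArg (Nat.cast : ℕ → ℤ) hw
          push_cast at c1 c2 ⊢
          linarith
        rw [this]
        exact Dvd.dvd.sub (Dvd.intro _ rfl) (Dvd.intro _ rfl)
      exact Dvd.dvd.mul_left (pow_dvd_pow_of_dvd hd1 s) _
    · rw [zero_mul]
      exact dvd_zero _
  -- Step 4 : finite differences
  have hstep4 : (n : ℤ) ^ s ∣ (s.factorial : ℤ) * σ 0 1 := by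
    have hW : (n : ℤ) ^ s ∣ ∑ i ∈ range (s+1), (-1:ℤ)^i * (Nat.choose s i : ℤ)
        * (∑ j ∈ range (s+1), ((1+i:ℕ):ℤ)^j * (-1:ℤ)^(s-j) * (Nat.choose s j : ℤ) * σ (s-j) 1) := by
      refine Finset.dvd_sum fun i hi => ?_
      exact Dvd.dvd.mul_left (hstep3 (1+i) (by omega) (by have := Finset.mem_range.mp hi; omega)) _
    have hWeq : ∑ i ∈ range (s+1), (-1:ℤ)^i * (Nat.choose s i : ℤ)
        * (∑ j ∈ range (s+1), ((1+i:ℕ):ℤ)^j * (-1:ℤ)^(s-j) * (Nat.choose s j : ℤ) * σ (s-j) 1)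
        = (-1:ℤ)^s * (s.factorial : ℤ) * σ 0 1 := by
      have hdistr : ∑ i ∈ range (s+1), (-1:ℤ)^i * (Nat.choose s i : ℤ)
          * (∑ j ∈ range (s+1), ((1+i:ℕ):ℤ)^j * (-1:ℤ)^(s-j) * (Nat.choose s j : ℤ) * σ (s-j) 1)
          = ∑ i ∈ range (s+1), ∑ j ∈ range (s+1),
            (-1:ℤ)^i * (Nat.choose s i : ℤ) * (((1+i:ℕ):ℤ)^j * (-1:ℤ)^(s-j) * (Nat.choose s j : ℤ) * σ (s-j) 1) := by
        exact Finset.sum_congr rfl fun i _ => Finset.mul_sum _ _ _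
      rw [hdistr, Finset.sum_comm]
      have hinner : ∀ j ∈ range (s+1), ∑ i ∈ range (s+1),
          (-1:ℤ)^i * (Nat.choose s i : ℤ) * (((1+i:ℕ):ℤ)^j * (-1:ℤ)^(s-j) * (Nat.choose s j : ℤ) * σ (s-j) 1)
          = ((-1:ℤ)^(s-j) * (Nat.choose s j : ℤ) * σ (s-j) 1) * Lsum s j 1 := by
        intro j hj
        rw [Lsum, Finset.mul_sum]
        refine Finset.sum_congr rfl fun i _ => ?_
        push_cast
        ring
      rw [Finset.sum_congr rfl hinner]
      rw [Finset.sum_eq_single s]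
      · rw [Lsum_eq s s le_rfl 1, if_pos rfl]
        simp only [Nat.sub_self, pow_zero, Nat.choose_self, Nat.cast_one]
        ring
      · intro j hj hne
        rw [Lsum_eq s j (by have := Finset.mem_range.mp hj; omega) 1, if_neg hne, mul_zero]
      · intro h
        exact absurd (Finset.self_mem_range_succ s) h
    rw [hWeq] at hW
    have := hW.mul_left ((-1:ℤ)^s)
    have heq : (-1:ℤ)^s * ((-1:ℤ)^s * (s.factorial : ℤ) * σ 0 1) = (s.factorial : ℤ) * σ 0 1 := by
      rw [← mul_assoc, ← mul_assoc, ← pow_add]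
      rw [Even.neg_one_pow ⟨s, by ring⟩]
      ring
    rwa [heq] at this
  -- Step 5 : A.eval 1 = n * σ 0 1
  have hstep5 : A.eval 1 = n * σ 0 1 := by
    have h01 : ((σ 0 1 : ℤ) : ℂ) * n = ∑ u ∈ range n, (Polynomial.aeval (ζ ^ u) A) * ζ ^ (u * v 1) := by
      have := hfilt 0 1 (by omega)
      simpa using this
    have hsingle : ∑ u ∈ range n, (Polynomial.aeval (ζ ^ u) A) * ζ ^ (u * v 1)
        = ((A.eval 1 : ℤ) : ℂ) := by
      rw [Finset.sum_eq_single_of_mem 0 (Finset.mem_range.mpr hn0)]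
      · rw [pow_zero, zero_mul, pow_zero, mul_one]
        have : Polynomial.aeval ((1:ℂ)) A = ((A.eval 1 : ℤ) : ℂ) := by
          have h := Polynomial.aeval_algebraMap_apply_eq_algebraMap_eval (R := ℤ) (A := ℂ) (1 : ℤ) A
          rw [map_one] at h
          rw [h]
          simp
        exact this
      · intro u hu hune
        have : Polynomial.aeval (ζ ^ u) A = 0 :=
          hvanish (ζ ^ u) (by rw [← pow_mul, mul_comm, pow_mul, hζ1, one_pow])
            (hζ.pow_ne_one_of_pos_of_lt (by omega) (Finset.mem_range.mp hu))
        rw [this, zero_mul]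
    have : ((A.eval 1 : ℤ) : ℂ) = ((n * σ 0 1 : ℤ) : ℂ) := by
      rw [← hsingle, ← h01]
      push_cast
      ring
    exact_mod_cast this
  -- Step 0 : the target sum equals A.eval 1
  have hT : (∑ d ∈ n.divisors, ArithmeticFunction.moebius (n / d) * (a (m * d)).eval 1) = A.eval 1 := by
    have h1 : A.eval 1 = ∑ e ∈ n.divisors, (ArithmeticFunction.moebius e : ℤ) * (a (n*m/e)).eval 1 := by
      rw [hAdef, Polynomial.eval_finset_sum]
      refine Finset.sum_congr rfl fun e he => ?_
      rw [Polynomial.eval_mul, Polynomial.eval_C, Polynomial.eval_comp, Polynomial.eval_pow,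
        Polynomial.eval_X, one_pow]
    have h2 : ∀ d ∈ n.divisors, n * m / (n / d) = m * d := by
      intro d hd
      obtain ⟨c, hc⟩ := (Nat.mem_divisors.mp hd).1
      have hd0 : 0 < d := Nat.pos_of_mem_divisors hd
      have hc0 : 0 < c := by
        rcases Nat.eq_zero_or_pos c with h0 | h
        · rw [h0, mul_zero] at hc; omega
        · exact h
      have hnd : n / d = c := by rw [hc, Nat.mul_div_cancel_left _ hd0]
      rw [hnd, hc]
      rw [show d * c * m = c * (m * d) by ring, Nat.mul_div_cancel_left _ hc0]
    calc ∑ d ∈ n.divisors, ArithmeticFunction.moebius (n / d) * (a (m * d)).eval 1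
        = ∑ d ∈ n.divisors, (ArithmeticFunction.moebius (n / d) : ℤ) * (a (n*m/(n/d))).eval 1 := by
          refine Finset.sum_congr rfl fun d hd => by rw [h2 d hd]
    _ = ∑ e ∈ n.divisors, (ArithmeticFunction.moebius e : ℤ) * (a (n*m/e)).eval 1 :=
          Nat.sum_div_divisors n (fun e => (ArithmeticFunction.moebius e : ℤ) * (a (n*m/e)).eval 1)
    _ = A.eval 1 := h1.symm
  -- Conclusion
  rw [hT, hstep5]
  have hfc : Nat.Coprime (s.factorial) n := fact_coprime n s fun t ht hts => hcop t ht (by omega)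
  have hic : IsCoprime ((n:ℤ)^s) ((s.factorial : ℕ) : ℤ) := by
    have h1 : Nat.Coprime (n^s) (s.factorial) := Nat.Coprime.pow_left s hfc.symm
    have h2 : IsCoprime ((n^s : ℕ) : ℤ) ((s.factorial : ℕ) : ℤ) := Nat.isCoprime_iff_coprime.mpr h1
    push_cast at h2
    exact h2
  have hν : (n:ℤ)^s ∣ σ 0 1 := hic.dvd_of_dvd_mul_left hstep4
  rw [pow_add, pow_one]
  push_cast
  exact mul_dvd_mul_left (n:ℤ) hν
end

section
/- Fix an integer b ≥ −1. The sequence d_n(q) = ∑_{i=0}^{⌊n/2⌋} q^{i(i+b)} [n choose i]_q [n−i choose i]_q satisfies the q-Gauss congruences. -/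
open Polynomial Finset

/-- The Gaussian binomial coefficient `[n choose k]_q ∈ ℤ[q]`, defined via the `q`-Pascal
recurrence `[n+1 choose k+1]_q = [n choose k]_q + q^{k+1} [n choose k+1]_q`; it equals
`[n]_q! / ([k]_q! [n-k]_q!)`. -/
noncomputable def qBinom : ℕ → ℕ → Polynomial ℤ
  | _, 0 => 1
  | 0, _ + 1 => 0
  | n + 1, k + 1 => qBinom n k + X ^ (k + 1) * qBinom n (k + 1)


lemma qBinom_zero_right (n : ℕ) : qBinom n 0 = 1 := by cases n <;> rfl

lemma qBinom_succ (n k : ℕ) :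
    qBinom (n+1) (k+1) = qBinom n k + X ^ (k + 1) * qBinom n (k + 1) := rfl

lemma qBinom_eq_zero : ∀ {n k : ℕ}, n < k → qBinom n k = 0
  | 0, _ + 1, _ => rfl
  | n + 1, k + 1, h => by
    rw [qBinom_succ, qBinom_eq_zero (by omega), qBinom_eq_zero (by omega)]
    ring

lemma qBinom_self : ∀ n : ℕ, qBinom n n = 1
  | 0 => rfl
  | n + 1 => by
    rw [qBinom_succ, qBinom_self n, qBinom_eq_zero (by omega)]; ring

lemma qBinom_one : ∀ n : ℕ, qBinom n 1 = ∑ i ∈ range n, X ^ i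
  | 0 => by simp [qBinom_eq_zero]
  | n + 1 => by
    rw [qBinom_succ, qBinom_zero_right, qBinom_one n, Finset.mul_sum,
      Finset.sum_range_succ']
    simp [pow_succ, mul_comm]
    ring

lemma qBinom_pascal2 : ∀ n k : ℕ, qBinom (n+1) (k+1) = qBinom n (k+1) + X ^ (n-k) * qBinom n k
  | 0, 0 => by simp [qBinom_succ, qBinom_zero_right, qBinom_eq_zero]
  | 0, k + 1 => by simp [qBinom_succ, qBinom_eq_zero]
  | n + 1, 0 => by
    rw [qBinom_one (n+2), qBinom_one (n+1), qBinom_zero_right, Finset.sum_range_succ _ (n+1)]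
    simp
  | n + 1, k + 1 => by
    rcases lt_trichotomy k n with hk | hk | hk
    · rw [qBinom_succ (n+1) (k+1)]
      conv_lhs => rw [qBinom_pascal2 n (k+1), qBinom_pascal2 n k]
      conv_rhs => rw [qBinom_succ n (k+1), qBinom_succ n k]
      rw [show n+1-(k+1) = n-k from by omega]
      have h : (X:Polynomial ℤ) ^ (k+1+1) * X ^ (n-(k+1)) = X ^ (n-k) * X ^ (k+1) := by
        rw [← pow_add, ← pow_add]; congr 1; omega
      linear_combination (qBinom n (k+1)) * h
    · subst hk
      rw [qBinom_self, qBinom_eq_zero (by omega), qBinom_self]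
      simp
    · rw [qBinom_eq_zero (show n+1+1 < k+1+1 by omega), qBinom_eq_zero (show n+1 < k+1+1 by omega),
        qBinom_eq_zero (show n+1 < k+1 by omega)]
      simp

lemma choose_two_succ (k : ℕ) : (k+1).choose 2 = k.choose 2 + k := by
  rw [show 2 = 1 + 1 from rfl, Nat.choose_succ_succ, Nat.choose_one_right, Nat.add_comm]

lemma choose_two_add (a b : ℕ) : (a+b).choose 2 = a.choose 2 + b.choose 2 + a*b := by
  induction b with
  | zero => simp
  | succ b ih => rw [← Nat.add_assoc, choose_two_succ, choose_two_succ, ih]; ring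

lemma gf_eq (ω : ℂ) : ∀ N : ℕ, ∏ j ∈ range N, (1 + C (ω^j) * X) =
    ∑ k ∈ range (N+1), C (ω^(k.choose 2) * aeval ω (qBinom N k)) * X^k := by
  intro N
  induction N with
  | zero => simp [qBinom_zero_right]
  | succ N ih =>
    rw [prod_range_succ, ih, mul_add, mul_one]
    rw [Finset.sum_mul]
    have h2 : ∀ k ∈ range (N+1),
        (C (ω^(k.choose 2) * aeval ω (qBinom N k)) * X^k) * (C (ω^N) * X)
          = C (ω^N * (ω^(k.choose 2) * aeval ω (qBinom N k))) * X^(k+1) := by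
      intro k _
      rw [C_mul, C_mul, C_mul, pow_succ]
      ring
    rw [Finset.sum_congr rfl h2]
    have h3 : ∑ k ∈ range (N+1), C (ω^(k.choose 2) * aeval ω (qBinom N k)) * X^k
        = ∑ k ∈ range (N+2), C (ω^(k.choose 2) * aeval ω (qBinom N k)) * X^k := by
      rw [Finset.sum_range_succ _ (N+1), qBinom_eq_zero (Nat.lt_succ_self N)]
      simp
    rw [h3, Finset.sum_range_succ' _ (N+1), Finset.sum_range_succ'
      (fun k => C (ω^(k.choose 2) * aeval ω (qBinom (N+1) k)) * X^k) (N+1)]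
    simp only [qBinom_zero_right]
    rw [add_right_comm]
    congr 1
    rw [← Finset.sum_add_distrib]
    refine Finset.sum_congr rfl fun k hk => ?_
    have hkN : k ≤ N := by simpa using Nat.lt_succ_iff.mp (mem_range.mp hk)
    have hpow : ω^((k+1).choose 2) * ω^(N-k) = ω^N * ω^(k.choose 2) := by
      rw [← pow_add, ← pow_add]
      congr 1
      rw [choose_two_succ]; omega
    have hpow' : (C (ω^((k+1).choose 2)) * C (ω^(N-k)) : Polynomial ℂ)
        = C (ω^N) * C (ω^(k.choose 2)) := by rw [← C_mul, ← C_mul, hpow]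
    rw [qBinom_pascal2 N k]
    simp only [map_add, map_mul, aeval_X_pow]
    linear_combination (-(C (aeval ω (qBinom N k)) * X^(k+1)) : Polynomial ℂ) * hpow'

variable {ω : ℂ} {m : ℕ}

lemma prod_range_roots (h : IsPrimitiveRoot ω m) (hm : 0 < m) (y : ℂ) :
    ∏ j ∈ range m, (y - ω^j) = y^m - 1 := by
  have himg : (range m).image (ω ^ ·) = nthRootsFinset m (1 : ℂ) := by
    apply Finset.eq_of_subset_of_card_le
    · intro x hx
      obtain ⟨j, _, rfl⟩ := Finset.mem_image.mp hx
      rw [mem_nthRootsFinset hm (1 : ℂ), ← pow_mul, mul_comm, pow_mul, h.pow_eq_one, one_pow]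
    · rw [h.card_nthRootsFinset, Finset.card_image_of_injOn h.injOn_pow, card_range]
  have hpoly := Polynomial.X_pow_sub_one_eq_prod hm h
  have := congrArg (Polynomial.eval y) hpoly
  simp only [eval_sub, eval_pow, eval_X, eval_one, eval_prod, eval_sub, eval_C] at this
  rw [this, ← himg, Finset.prod_image (fun a ha b hb hab => h.injOn_pow ha hb hab)]

lemma prod_one_add (h : IsPrimitiveRoot ω m) (hm : 0 < m) :
    ∏ j ∈ range m, (1 + C (ω^j) * X) = 1 - C ((-1:ℂ)^m) * X^m := by
  apply Polynomial.funext
  intro y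
  simp only [eval_prod, eval_add, eval_one, eval_mul, eval_C, eval_X, eval_sub, eval_pow]
  by_cases hy : y = 0
  · subst hy
    simp [zero_pow hm.ne']
  · have h1 : ∀ j ∈ range m, (1 + ω^j * y) = y * (y⁻¹ + ω^j) := by
      intro j _
      field_simp
    rw [Finset.prod_congr rfl h1, Finset.prod_mul_distrib, Finset.prod_const, card_range]
    have h2 : ∀ j ∈ range m, (y⁻¹ + ω^j) = -1 * ((-y⁻¹) - ω^j) := by
      intro j _; ring
    rw [Finset.prod_congr rfl h2, Finset.prod_mul_distrib, Finset.prod_const, card_range,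
      prod_range_roots h hm, neg_pow]
    have hyy : y^m * (y⁻¹)^m = 1 := by
      rw [← mul_pow, mul_inv_cancel₀ hy, one_pow]
    have hneg : ((-1:ℂ)^m)*((-1:ℂ)^m) = 1 := by
      rw [← mul_pow]; norm_num
    linear_combination ((-1:ℂ)^m*(-1:ℂ)^m) * hyy + hneg

lemma prod_range_mul (h : IsPrimitiveRoot ω m) (r : ℕ) :
    ∏ j ∈ range (m*r), (1 + C (ω^j) * X) = (∏ j ∈ range m, (1 + C (ω^j) * X))^r := by
  induction r with
  | zero => simp
  | succ r ih =>
    rw [Nat.mul_succ, Finset.prod_range_add, ih, pow_succ]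
    congr 1
    refine Finset.prod_congr rfl fun j _ => ?_
    rw [pow_add, pow_mul, h.pow_eq_one, one_pow, one_mul]

lemma omega_half (h : IsPrimitiveRoot ω m) (hm : 0 < m) (he : 2 ∣ m) : ω^(m/2) = -1 := by
  obtain ⟨u, rfl⟩ := he
  have hu : 0 < u := by omega
  have hsq : (ω^u)^2 = 1 := by rw [← pow_mul, mul_comm u 2, h.pow_eq_one]
  have hne : ω^u ≠ 1 := h.pow_ne_one_of_pos_of_lt hu.ne' (by omega)
  have : (ω^u - 1) * (ω^u + 1) = 0 := by linear_combination hsq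
  rcases mul_eq_zero.mp this with h1 | h1
  · exact absurd (by linear_combination h1) hne
  · have : 2*u/2 = u := by omega
    rw [this]; linear_combination h1

lemma omega_eps (h : IsPrimitiveRoot ω m) (hm : 0 < m) :
    ∀ t : ℕ, ω^((m*t).choose 2) = ((-1:ℂ)^(m+1))^t := by
  have base : ω^(m.choose 2) = (-1:ℂ)^(m+1) := by
    rcases Nat.even_or_odd m with he | ho
    · obtain ⟨u, rfl⟩ := he
      have hu : 0 < u := by omega
      have h2 : (u+u).choose 2 = u * (u+u-1) := by
        rw [Nat.choose_two_right, show (u+u)*((u+u)-1) = (u*((u+u)-1))*2 by ring,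
          Nat.mul_div_cancel _ (by omega)]
      have hhalf : (u+u)/2 = u := by omega
      rw [h2, pow_mul, ← hhalf, omega_half h hm ⟨u, by omega⟩]
      rw [Odd.neg_one_pow ⟨u-1, by omega⟩, Odd.neg_one_pow ⟨u, by omega⟩]
    · obtain ⟨u, rfl⟩ := ho
      have h2 : (2*u+1).choose 2 = (2*u+1) * u := by
        rw [Nat.choose_two_right, show (2*u+1)-1 = 2*u from by omega,
          show (2*u+1)*(2*u) = ((2*u+1)*u)*2 by ring, Nat.mul_div_cancel _ (by omega)]
      rw [h2, pow_mul, h.pow_eq_one, one_pow, Even.neg_one_pow ⟨u+1, by omega⟩]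
  intro t
  induction t with
  | zero => simp
  | succ t ih =>
    have hc : (m*(t+1)).choose 2 = (m*t).choose 2 + m.choose 2 + (m*t)*m := by
      rw [Nat.mul_succ, choose_two_add]
    have hz : ω^((m*t)*m) = 1 := by
      rw [mul_comm, pow_mul, h.pow_eq_one, one_pow]
    rw [hc, pow_add, pow_add, ih, base, hz, mul_one, pow_succ]
    ring

lemma omega_ne_zero (h : IsPrimitiveRoot ω m) (hm : 0 < m) : ω ≠ 0 := by
  intro h0
  have := h.pow_eq_one
  rw [h0, zero_pow hm.ne'] at this
  exact zero_ne_one this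

lemma qLucas (h : IsPrimitiveRoot ω m) (hm : 0 < m) {N : ℕ} (hN : m ∣ N) (k : ℕ) :
    aeval ω (qBinom N k) = if m ∣ k then ((N/m).choose (k/m) : ℂ) else 0 := by
  obtain ⟨r, rfl⟩ := hN
  rw [Nat.mul_div_cancel_left _ hm]
  by_cases hkN : m*r < k
  · rw [qBinom_eq_zero hkN, map_zero]
    split_ifs with hdk
    · have hlt : r < k/m := by
        have := Nat.div_lt_div_of_lt_of_dvd hdk hkN
        rwa [Nat.mul_div_cancel_left _ hm] at this
      rw [Nat.choose_eq_zero_of_lt hlt, Nat.cast_zero]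
    · rfl
  · push_neg at hkN
    have hGF : (∑ j ∈ range (m*r+1), C (ω^(j.choose 2) * aeval ω (qBinom (m*r) j)) * X^j)
        = ((1 : Polynomial ℂ) - C ((-1:ℂ)^m) * X^m)^r := by
      rw [← gf_eq, prod_range_mul h r, prod_one_add h hm]
    have hexp : ((1 : Polynomial ℂ) - C ((-1:ℂ)^m) * X^m)^r
        = ∑ t ∈ range (r+1), C (((-1:ℂ)^(m+1))^t * (r.choose t)) * X^(m*t) := by
      rw [sub_eq_add_neg, add_comm, add_pow]
      refine Finset.sum_congr rfl fun t _ => ?_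
      rw [one_pow, mul_one, neg_pow, mul_pow, ← C_pow, ← pow_mul]
      have h1 : ((-1:ℂ)^(m+1))^t = (-1:ℂ)^t * ((-1:ℂ)^m)^t := by
        rw [pow_succ, mul_pow]; ring
      rw [h1, C_mul, C_mul]
      have h2 : (C ((-1:ℂ)^t) : Polynomial ℂ) = (-1:Polynomial ℂ)^t := by
        rw [C_pow, map_neg, map_one]
      have h3 : (C ((r.choose t : ℂ)) : Polynomial ℂ) = ((r.choose t : ℕ) : Polynomial ℂ) := by
        simp
      rw [h2, h3]
      ring
    have hco := congrArg (fun p => Polynomial.coeff p k) (hGF.trans hexp)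
    simp only [Polynomial.finset_sum_coeff, Polynomial.coeff_C_mul, Polynomial.coeff_X_pow,
      mul_ite, mul_one, mul_zero] at hco
    rw [Finset.sum_ite_eq (range (m*r+1)) k, if_pos (mem_range.mpr (by omega))] at hco
    have hωk : ω^(k.choose 2) ≠ 0 := pow_ne_zero _ (omega_ne_zero h hm)
    by_cases hdk : m ∣ k
    · obtain ⟨t0, rfl⟩ := hdk
      rw [if_pos (Dvd.intro t0 rfl), Nat.mul_div_cancel_left _ hm]
      have ht0r : t0 ≤ r := Nat.le_of_mul_le_mul_left hkN hm
      have hsum : ∑ t ∈ range (r+1), (if m*t0 = m*t then ((-1:ℂ)^(m+1))^t * (r.choose t) else 0)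
          = ((-1:ℂ)^(m+1))^t0 * (r.choose t0) := by
        rw [Finset.sum_eq_single t0]
        · rw [if_pos rfl]
        · intro t _ hne
          rw [if_neg (fun hc => hne (Nat.eq_of_mul_eq_mul_left hm hc).symm)]
        · intro habs
          exact absurd (mem_range.mpr (by omega)) habs
      rw [hsum] at hco
      rw [omega_eps h hm t0] at hco
      exact mul_left_cancel₀ (pow_ne_zero _ (by norm_num)) hco
    · rw [if_neg hdk]
      have hsum : ∑ t ∈ range (r+1), (if k = m*t then ((-1:ℂ)^(m+1))^t * (r.choose t) else 0)
          = 0 := by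
        refine Finset.sum_eq_zero fun t _ => ?_
        exact if_neg (fun hc => hdk (by rw [hc]; exact Dvd.intro t rfl))
      rw [hsum] at hco
      exact (mul_eq_zero.mp hco).resolve_left hωk

/-- central trinomial-type sum -/
def Tsum (r : ℕ) : ℕ := ∑ t ∈ range (r/2+1), r.choose t * (r-t).choose t

lemma aeval_d {ω : ℂ} {m : ℕ} (b : ℤ) (hb : -1 ≤ b) (h : IsPrimitiveRoot ω m) (hm : 0 < m)
    {N : ℕ} (hN : m ∣ N) :
    aeval ω (∑ i ∈ range (N/2+1), X ^ ((i:ℤ)*((i:ℤ)+b)).toNat * qBinom N i * qBinom (N-i) i)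
      = (Tsum (N/m) : ℂ) := by
  rw [map_sum]
  have hF : ∀ i : ℕ, aeval ω (X ^ ((i:ℤ)*((i:ℤ)+b)).toNat * qBinom N i * qBinom (N-i) i)
      = ω ^ ((i:ℤ)*((i:ℤ)+b)).toNat * aeval ω (qBinom N i) * aeval ω (qBinom (N-i) i) := by
    intro i; rw [map_mul, map_mul, aeval_X_pow]
  have hdiv2 : N/2/m = N/m/2 := by
    rw [Nat.div_div_eq_div_mul, Nat.div_div_eq_div_mul, Nat.mul_comm]
  have hsub : (range (N/m/2+1)).image (fun t => m * t) ⊆ range (N/2+1) := by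
    intro x hx
    obtain ⟨t, ht, rfl⟩ := Finset.mem_image.mp hx
    rw [mem_range] at ht ⊢
    have h1 : m * t ≤ m * (N/m/2) := Nat.mul_le_mul_left m (by omega)
    have h2 : m * (N/m/2) ≤ N/2 := by
      rw [← hdiv2, Nat.mul_comm]
      exact Nat.div_mul_le_self _ _
    omega
  rw [← Finset.sum_subset hsub]
  · rw [Finset.sum_image (fun a _ b _ hab => Nat.eq_of_mul_eq_mul_left hm hab)]
    have key : ∀ t ∈ range (N/m/2+1),
        aeval ω (X ^ (((m*t:ℕ):ℤ)*(((m*t:ℕ):ℤ)+b)).toNat * qBinom N (m*t) * qBinom (N-m*t) (m*t))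
          = ((N/m).choose t * ((N/m - t).choose t) : ℕ) := by
      intro t _
      rw [hF]
      -- exponent
      set z : ℤ := ((m*t:ℕ):ℤ)*(((m*t:ℕ):ℤ)+b) with hz
      have hz0 : 0 ≤ z := by
        rcases Nat.eq_zero_or_pos (m*t) with h0 | h0
        · simp [hz, h0]
        · have : (1:ℤ) ≤ ((m*t:ℕ):ℤ) := by exact_mod_cast h0
          have : 0 ≤ ((m*t:ℕ):ℤ) + b := by omega
          exact mul_nonneg (by positivity) this
      have hdvdz : (m:ℤ) ∣ z := Dvd.dvd.mul_right (by exact_mod_cast Dvd.intro t rfl) _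
      have hdvdn : m ∣ z.toNat := by
        have : (m:ℤ) ∣ (z.toNat : ℤ) := by rwa [Int.toNat_of_nonneg hz0]
        exact_mod_cast this
      obtain ⟨s, hs⟩ := hdvdn
      rw [hs, pow_mul, h.pow_eq_one, one_pow, one_mul]
      -- binomials
      have hmt : m ∣ m*t := Dvd.intro t rfl
      have hNt : m ∣ N - m*t := Nat.dvd_sub hN hmt
      rw [qLucas h hm hN (m*t), qLucas h hm hNt (m*t), if_pos hmt, if_pos hmt,
        Nat.mul_div_cancel_left _ hm]
      have hsubdiv : (N - m*t)/m = N/m - t := by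
        obtain ⟨r, rfl⟩ := hN
        rw [← Nat.mul_sub, Nat.mul_div_cancel_left _ hm, Nat.mul_div_cancel_left _ hm]
      rw [hsubdiv]
      push_cast
      ring
    rw [Finset.sum_congr rfl key]
    rw [Tsum]
    push_cast
    rfl
  · intro i hi hnotim
    rw [hF]
    by_cases hdi : m ∣ i
    · exfalso
      apply hnotim
      refine Finset.mem_image.mpr ⟨i/m, ?_, Nat.mul_div_cancel' hdi⟩
      rw [mem_range] at hi ⊢
      have : i/m ≤ N/2/m := Nat.div_le_div_right (by omega)
      omega
    · rw [qLucas h hm hN i, if_neg hdi]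
      ring

/-- arithmetic: for m,e dividing n, (n/e) / (m / gcd m e) = n / lcm m e, and divisibility -/
lemma arith_div {m e n : ℕ} (hm : 0 < m) (he : 0 < e) (hmn : m ∣ n) (hen : e ∣ n) :
    (m / Nat.gcd m e) ∣ n / e ∧ (n / e) / (m / Nat.gcd m e) = n / Nat.lcm m e := by
  set g := Nat.gcd m e with hg
  have hg0 : 0 < g := Nat.gcd_pos_of_pos_left e hm
  have hgm : g ∣ m := Nat.gcd_dvd_left m e
  have hL : Nat.lcm m e ∣ n := Nat.lcm_dvd hmn hen
  have hlcm : Nat.lcm m e = (m / g) * e := by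
    have h1 : g * Nat.lcm m e = m * e := Nat.gcd_mul_lcm m e
    have h2 : g * ((m / g) * e) = m * e := by
      rw [← Nat.mul_assoc, Nat.mul_div_cancel' hgm]
    exact Nat.eq_of_mul_eq_mul_left hg0 (h1.trans h2.symm)
  obtain ⟨c, hc⟩ := hL
  have hne : n / e = (m / g) * c := by
    rw [hc, hlcm, Nat.mul_assoc, Nat.mul_comm e c, ← Nat.mul_assoc, Nat.mul_div_cancel _ he]
  have hmg0 : 0 < m / g := Nat.div_pos (Nat.le_of_dvd hm hgm) hg0
  constructor
  · exact hne ▸ Dvd.intro c rfl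
  · rw [hne, Nat.mul_div_cancel_left _ hmg0, hc, Nat.mul_div_cancel_left _ (Nat.lcm_pos hm he)]

lemma lcm_mul_prime {m e p : ℕ} (hp : p.Prime) (hpm : p ∣ m) (hpe : ¬ p ∣ e) :
    Nat.lcm m (p * e) = Nat.lcm m e := by
  have hcop : Nat.Coprime p e := (Nat.Prime.coprime_iff_not_dvd hp).mpr hpe
  apply Nat.dvd_antisymm
  · exact Nat.lcm_dvd (Nat.dvd_lcm_left m e)
      (hcop.mul_dvd_of_dvd_of_dvd (hpm.trans (Nat.dvd_lcm_left m e)) (Nat.dvd_lcm_right m e))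
  · exact Nat.lcm_dvd (Nat.dvd_lcm_left _ _)
      ((dvd_mul_left e p).trans (Nat.dvd_lcm_right m (p*e)))

lemma moebius_pair {n : ℕ} (hn : 0 < n) {p : ℕ} (hp : p.Prime) (hpn : p ∣ n) (F : ℕ → ℤ)
    (hF : ∀ e : ℕ, ¬ p ∣ e → F (p * e) = F e) :
    ∑ e ∈ n.divisors, (ArithmeticFunction.moebius e : ℤ) * F e = 0 := by
  classical
  rw [← Finset.sum_filter_add_sum_filter_not n.divisors Squarefree]
  have h2 : ∑ e ∈ n.divisors.filter (fun e => ¬ Squarefree e),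
      (ArithmeticFunction.moebius e : ℤ) * F e = 0 := by
    refine Finset.sum_eq_zero fun e he => ?_
    rw [ArithmeticFunction.moebius_eq_zero_of_not_squarefree (Finset.mem_filter.mp he).2]
    ring
  rw [h2, add_zero]
  set A := n.divisors.filter Squarefree with hA
  rw [← Finset.sum_filter_add_sum_filter_not A (fun e => p ∣ e)]
  have hbij : ∑ e ∈ A.filter (fun e => p ∣ e), (ArithmeticFunction.moebius e : ℤ) * F e
      = ∑ e ∈ A.filter (fun e => ¬ p ∣ e),
          (ArithmeticFunction.moebius (p*e) : ℤ) * F (p*e) := by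
    refine Finset.sum_nbij' (fun e => e / p) (fun e => p * e) ?_ ?_ ?_ ?_ ?_
    · intro e he
      simp only [hA, Finset.mem_filter, Nat.mem_divisors] at he ⊢
      obtain ⟨⟨⟨hedvd, hn0⟩, hesq⟩, hpe⟩ := he
      have hpdvd : p ∣ e := hpe
      refine ⟨⟨⟨(Nat.div_dvd_of_dvd hpdvd).trans hedvd, hn0⟩, hesq.squarefree_of_dvd (Nat.div_dvd_of_dvd hpdvd)⟩, ?_⟩
      intro hcon
      have : p * p ∣ e := by
        obtain ⟨k, hk⟩ := hcon
        obtain ⟨l, hl⟩ := hpdvd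
        have : e / p = l := by rw [hl, Nat.mul_div_cancel_left _ hp.pos]
        refine ⟨k, ?_⟩
        rw [hl, show l = p * k from this ▸ hk]
        ring
      exact hp.not_isUnit (hesq p this)
    · intro e he
      simp only [hA, Finset.mem_filter, Nat.mem_divisors] at he ⊢
      obtain ⟨⟨⟨hedvd, hn0⟩, hesq⟩, hpe⟩ := he
      have hcop : Nat.Coprime p e := (Nat.Prime.coprime_iff_not_dvd hp).mpr hpe
      exact ⟨⟨⟨hcop.mul_dvd_of_dvd_of_dvd hpn hedvd, hn0⟩,
        (Nat.squarefree_mul hcop).mpr ⟨hp.squarefree, hesq⟩⟩, Dvd.intro e rfl⟩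
    · intro e he
      simp only [hA, Finset.mem_filter] at he
      exact Nat.mul_div_cancel' he.2
    · intro e _
      exact Nat.mul_div_cancel_left _ hp.pos
    · intro e he
      simp only [hA, Finset.mem_filter] at he
      rw [Nat.mul_div_cancel' he.2]
  rw [hbij]
  rw [← Finset.sum_add_distrib]
  refine Finset.sum_eq_zero fun e he => ?_
  simp only [hA, Finset.mem_filter, Nat.mem_divisors] at he
  obtain ⟨⟨⟨hedvd, hn0⟩, hesq⟩, hpe⟩ := he
  have hcop : Nat.Coprime p e := (Nat.Prime.coprime_iff_not_dvd hp).mpr hpe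
  rw [hF e hpe, ArithmeticFunction.isMultiplicative_moebius.map_mul_of_coprime hcop,
    ArithmeticFunction.moebius_apply_prime hp]
  push_cast
  ring

theorem stmt6 (b : ℤ) (hb : -1 ≤ b) :
    qGauss (fun n => ∑ i ∈ Finset.range (n / 2 + 1),
      X ^ ((i : ℤ) * ((i : ℤ) + b)).toNat * qBinom n i * qBinom (n - i) i) := by
  intro n hn
  set S : Polynomial ℤ := ∑ d ∈ n.divisors,
      Polynomial.C (ArithmeticFunction.moebius d) *
        ((∑ i ∈ Finset.range ((n/d) / 2 + 1),
          X ^ ((i : ℤ) * ((i : ℤ) + b)).toNat * qBinom (n/d) i * qBinom ((n/d) - i) i).comp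
            (X ^ d)) with hS
  show qInt n ∣ S
  have key : ∀ m ∈ n.divisors.erase 1, (cyclotomic m ℚ) ∣ S.map (Int.castRingHom ℚ) := by
    intro m hm'
    have hm1 : m ≠ 1 := (Finset.mem_erase.mp hm').1
    have hmn : m ∣ n := (Nat.mem_divisors.mp (Finset.mem_erase.mp hm').2).1
    have hm0 : 0 < m := Nat.pos_of_dvd_of_pos hmn hn
    have hζ := Complex.isPrimitiveRoot_exp m hm0.ne'
    set ζ : ℂ := Complex.exp (2 * Real.pi * Complex.I / m) with hζdef
    rw [cyclotomic_eq_minpoly_rat hζ hm0]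
    apply minpoly.dvd
    rw [show (Int.castRingHom ℚ) = algebraMap ℤ ℚ from rfl, aeval_map_algebraMap]
    -- compute aeval ζ S
    rw [hS, map_sum]
    have hterm : ∀ d ∈ n.divisors,
        aeval ζ (Polynomial.C (ArithmeticFunction.moebius d) *
          ((∑ i ∈ Finset.range ((n/d) / 2 + 1),
            X ^ ((i : ℤ) * ((i : ℤ) + b)).toNat * qBinom (n/d) i * qBinom ((n/d) - i) i).comp
              (X ^ d)))
          = ((ArithmeticFunction.moebius d : ℤ) : ℂ) * ((Tsum (n / Nat.lcm m d) : ℕ) : ℂ) := by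
      intro d hd
      obtain ⟨hdn, hn0⟩ := Nat.mem_divisors.mp hd
      have hd0 : 0 < d := Nat.pos_of_dvd_of_pos hdn hn
      rw [map_mul, aeval_C, aeval_comp, aeval_X_pow]
      congr 1
      -- primitive root of order m / gcd m d
      have hord : orderOf ζ = m := hζ.eq_orderOf.symm
      have hordp : orderOf (ζ^d) = m / Nat.gcd m d := by
        rw [orderOf_pow' ζ hd0.ne', hord]
      have hprim' : IsPrimitiveRoot (ζ^d) (m / Nat.gcd m d) := by
        rw [← hordp]; exact IsPrimitiveRoot.orderOf (ζ^d)
      have hg0 : 0 < m / Nat.gcd m d :=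
        Nat.div_pos (Nat.le_of_dvd hm0 (Nat.gcd_dvd_left m d)) (Nat.gcd_pos_of_pos_left d hm0)
      obtain ⟨hdvd, heq⟩ := arith_div hm0 hd0 hmn hdn
      rw [aeval_d b hb hprim' hg0 hdvd, heq]
    rw [Finset.sum_congr rfl hterm]
    -- now a pure ℤ sum cast to ℂ
    have hzsum : ∑ d ∈ n.divisors,
        (ArithmeticFunction.moebius d : ℤ) * (Tsum (n / Nat.lcm m d) : ℤ) = 0 := by
      refine moebius_pair hn (Nat.minFac_prime hm1) ((Nat.minFac_dvd m).trans hmn) _ ?_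
      intro e hpe
      rw [lcm_mul_prime (Nat.minFac_prime hm1) (Nat.minFac_dvd m) hpe]
    calc ∑ d ∈ n.divisors, ((ArithmeticFunction.moebius d : ℤ) : ℂ) * ((Tsum (n / Nat.lcm m d) : ℕ) : ℂ)
        = ((∑ d ∈ n.divisors, (ArithmeticFunction.moebius d : ℤ) * (Tsum (n / Nat.lcm m d) : ℤ) : ℤ) : ℂ) := by
          push_cast
          rfl
      _ = 0 := by rw [hzsum]; exact Int.cast_zero
  -- combine
  have hq : qInt n = ∏ m ∈ n.divisors.erase 1, cyclotomic m ℤ :=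
    (prod_cyclotomic_eq_geom_sum hn ℤ).symm
  have hmonic : (∏ m ∈ n.divisors.erase 1, cyclotomic m ℤ).Monic :=
    monic_prod_of_monic _ _ fun m _ => cyclotomic.monic m ℤ
  rw [hq, ← Polynomial.map_dvd_map (Int.castRingHom ℚ) Int.cast_injective hmonic,
    Polynomial.map_prod]
  have hmapc : ∀ m ∈ n.divisors.erase 1,
      (cyclotomic m ℤ).map (Int.castRingHom ℚ) = cyclotomic m ℚ := fun m _ => map_cyclotomic ..
  rw [Finset.prod_congr rfl hmapc]
  exact Finset.prod_dvd_of_coprime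
    (fun a ha b hb hab => cyclotomic.isCoprime_rat hab) key
end

section
/- The sequence e_n(q) = Tr(A(q^{n−1}) A(q^{n−2}) ⋯ A(q) A(1)), where A(x) is the 2×2 matrix with rows (1, x) and (1, 0) over ℤ[q], satisfies the q-Gauss congruences. (In particular e_n(1) = L_n, the n-th Lucas number.) -/
open Polynomial Finset

/-- The matrix `A(x) = [[1, x], [1, 0]]` over `ℤ[q]`. -/
noncomputable def Amat (x : Polynomial ℤ) : Matrix (Fin 2) (Fin 2) (Polynomial ℤ) :=
  !![1, x; 1, 0]

/-- `e_n(q) = Tr(A(q^{n-1}) A(q^{n-2}) ⋯ A(q) A(1))`, a `q`-analogue of the Lucas numbers. -/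
noncomputable def eLucas (n : ℕ) : Polynomial ℤ :=
  Matrix.trace (((List.range n).map (fun i => Amat (X ^ (n - 1 - i)))).prod)

section Generic
variable {R : Type*} [CommRing R]

/-- `A(x)` over a general commutative ring. -/
def qlA (x : R) : Matrix (Fin 2) (Fin 2) R := !![1, x; 1, 0]

/-- The product `A(η^{m-1}) ⋯ A(η^0)`. -/
def qlP (η : R) (m : ℕ) : Matrix (Fin 2) (Fin 2) R :=
  ((List.range m).map (fun i => qlA (η ^ (m - 1 - i)))).prod

lemma qlP_zero (η : R) : qlP η 0 = 1 := by simp [qlP]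

lemma qlP_succ (η : R) (m : ℕ) : qlP η (m + 1) = qlA (η ^ m) * qlP η m := by
  unfold qlP
  rw [List.range_succ_eq_map, List.map_cons, List.prod_cons, List.map_map]
  simp only [Nat.add_sub_cancel, Nat.sub_zero]
  congr 1
  have hmap := List.map_congr_left (l := List.range m)
    (f := (fun i => qlA (η ^ (m - i))) ∘ Nat.succ) (g := fun i => qlA (η ^ (m - 1 - i)))
    (fun i _ => by
      simp only [Function.comp_apply]
      rw [show m - Nat.succ i = m - 1 - i by omega])
  rw [hmap]

lemma qlP_add (η : R) (c m : ℕ) (hη : η ^ c = 1) (hm : c ∣ m) :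
    ∀ j, qlP η (m + j) = qlP η j * qlP η m := by
  intro j
  induction j with
  | zero => simp [qlP_zero]
  | succ j ih =>
      have hpow : η ^ (m + j) = η ^ j := by
        obtain ⟨t, rfl⟩ := hm
        rw [pow_add, pow_mul, hη, one_pow, one_mul]
      rw [show m + (j+1) = (m + j) + 1 by ring, qlP_succ, ih, qlP_succ, hpow, mul_assoc]

lemma qlP_pow (η : R) (c : ℕ) (hη : η ^ c = 1) (k : ℕ) :
    qlP η (c * k) = (qlP η c) ^ k := by
  induction k with
  | zero => simp [qlP_zero]
  | succ k ih =>
      rw [show c * (k+1) = c * k + c by ring, qlP_add η c (c*k) hη ⟨k, rfl⟩, ih, ← pow_succ']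

lemma qlB_sq (B : Matrix (Fin 2) (Fin 2) R) (h1 : B.trace = 1) (h2 : B.det = -1) :
    B * B = B + 1 := by
  rw [Matrix.trace_fin_two] at h1
  rw [Matrix.det_fin_two] at h2
  ext i j
  fin_cases i <;> fin_cases j <;>
      simp [Matrix.mul_apply, Fin.sum_univ_two, Matrix.one_apply]
  · linear_combination B 0 0 * h1 - h2
  · linear_combination B 0 1 * h1
  · linear_combination B 1 0 * h1
  · linear_combination B 1 1 * h1 - h2

lemma qlB_pow (B : Matrix (Fin 2) (Fin 2) R) (hB : B * B = B + 1) :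
    ∀ k, 1 ≤ k → B ^ k = (Nat.fib k : R) • B + (Nat.fib (k-1) : R) • 1 := by
  intro k hk
  induction k with
  | zero => omega
  | succ k ih =>
      rcases Nat.eq_or_lt_of_le hk with h | h
      · simp [← h]
      · have hk1 : 1 ≤ k := by omega
        rw [pow_succ, ih hk1, add_mul, smul_mul_assoc, smul_mul_assoc, hB, one_mul,
          smul_add]
        obtain ⟨j, rfl⟩ : ∃ j, k = j + 1 := ⟨k - 1, by omega⟩
        simp only [Nat.add_sub_cancel, Nat.fib_add_two, Nat.cast_add]
        module

lemma qlTraceLuc (B : Matrix (Fin 2) (Fin 2) R) (h1 : B.trace = 1) (hB : B * B = B + 1)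
    (k : ℕ) (hk : 1 ≤ k) :
    (B ^ k).trace = (Nat.fib (k - 1) : R) + (Nat.fib (k + 1) : R) := by
  rw [qlB_pow B hB k hk]
  rw [Matrix.trace_add, Matrix.trace_smul, Matrix.trace_smul, Matrix.trace_one, h1]
  obtain ⟨j, rfl⟩ : ∃ j, k = j + 1 := ⟨k - 1, by omega⟩
  simp only [Nat.add_sub_cancel, Nat.fib_add_two, Nat.cast_add, smul_eq_mul,
    Fintype.card_fin, Nat.cast_ofNat]
  ring

lemma qldet_A (x : R) : (qlA x).det = -x := by
  simp [qlA, Matrix.det_fin_two_of]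

lemma qldet_P (η : R) : ∀ m, (qlP η m).det = (-1)^m * η ^ (∑ i ∈ Finset.range m, i) := by
  intro m
  induction m with
  | zero => simp [qlP_zero]
  | succ m ih =>
      rw [qlP_succ, Matrix.det_mul, ih, qldet_A, Finset.sum_range_succ, pow_add, pow_succ]
      ring

end Generic

section ComplexPart

def qlL : Matrix (Fin 2) (Fin 2) ℂ := !![1, 0; 1, 0]

def qlE : Matrix (Fin 2) (Fin 2) ℂ := !![0, 1; 0, 0]

lemma qlA_eq (x : ℂ) : qlA x = qlL + x • qlE := by
  ext i j
  fin_cases i <;> fin_cases j <;> simp [qlA, qlL, qlE]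

lemma qlA_zero : qlA (0 : ℂ) = qlL := by
  rw [qlA_eq, zero_smul, add_zero]

lemma qlE_mul_qlE : qlE * qlE = 0 := by
  ext i j
  fin_cases i <;> fin_cases j <;> simp [qlE, Matrix.mul_apply, Fin.sum_univ_two]

lemma qlL_mul_qlL : qlL * qlL = qlL := by
  ext i j
  fin_cases i <;> fin_cases j <;> simp [qlL, Matrix.mul_apply, Fin.sum_univ_two]

lemma qlL_pow (c : ℕ) (hc : 1 ≤ c) : qlL ^ c = qlL := by
  induction c with
  | zero => omega
  | succ c ih =>
      rcases Nat.eq_or_lt_of_le hc with h | h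
      · rw [← h, pow_one]
      · rw [pow_succ, ih (by omega), qlL_mul_qlL]

lemma trace_qlL : qlL.trace = 1 := by
  simp [qlL, Matrix.trace_fin_two]

lemma hEE' : ∀ a b : ℂ, (a • qlE) * (b • qlE) = (0 : Matrix (Fin 2) (Fin 2) ℂ) := by
  intro a b
  rw [smul_mul_assoc, mul_smul_comm, qlE_mul_qlE]
  simp

lemma trace_qlP_prim {c : ℕ} {ζ : ℂ} (hc : 0 < c) (hζ : IsPrimitiveRoot ζ c) :
    (qlP ζ c).trace = 1 := by
  rcases Nat.lt_or_ge c 2 with hc1 | hc2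
  · have hce : c = 1 := by omega
    subst hce
    simp [qlP, List.range_succ, qlA, Matrix.trace_fin_two]
  set fac : ℕ → Polynomial (Matrix (Fin 2) (Fin 2) ℂ) :=
    fun i => Polynomial.C qlL + Polynomial.C (ζ ^ (c - 1 - i) • qlE) * Polynomial.X with hfac
  set l : List (Polynomial (Matrix (Fin 2) (Fin 2) ℂ)) := (List.range c).map fac with hl
  set q : Polynomial (Matrix (Fin 2) (Fin 2) ℂ) := l.prod with hq
  have hcomm : ∀ s : ℂ, ∀ M : Matrix (Fin 2) (Fin 2) ℂ,
      Commute ((RingHom.id (Matrix (Fin 2) (Fin 2) ℂ)) M) (s • (1 : Matrix (Fin 2) (Fin 2) ℂ)) := by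
    intro s M
    simp only [RingHom.id_apply, Commute, SemiconjBy, mul_smul_comm, smul_mul_assoc, mul_one,
      one_mul]
  set φ : ℂ → (Polynomial (Matrix (Fin 2) (Fin 2) ℂ) →+* Matrix (Fin 2) (Fin 2) ℂ) :=
    fun s => Polynomial.eval₂RingHom' (RingHom.id _) (s • 1) (hcomm s) with hφ
  have hφfac : ∀ s : ℂ, ∀ i, φ s (fac i) = qlA (s * ζ ^ (c - 1 - i)) := by
    intro s i
    have h1 : φ s (fac i) = qlL + (ζ ^ (c - 1 - i) • qlE) * (s • 1) := by
      rw [hφ, hfac]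
      simp only [map_add, map_mul, Polynomial.eval₂RingHom'_apply, Polynomial.eval₂_C,
        Polynomial.eval₂_X, RingHom.id_apply]
    rw [h1, mul_smul_comm, mul_one, smul_smul, qlA_eq, mul_comm s]
  have hφq : ∀ s : ℂ, φ s q = ((List.range c).map (fun i => qlA (s * ζ ^ (c - 1 - i)))).prod := by
    intro s
    rw [hq, map_list_prod (φ s) l, hl, List.map_map]
    congr 1
    exact List.map_congr_left (fun i _ => hφfac s i)
  have hrot : ∀ s : ℂ, (φ (ζ * s) q).trace = (φ s q).trace := by
    intro s
    rw [hφq, hφq]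
    obtain ⟨c', rfl⟩ : ∃ c', c = c' + 1 := ⟨c - 1, by omega⟩
    conv_lhs => rw [List.range_succ_eq_map]
    conv_rhs => rw [List.range_succ]
    simp only [List.map_cons, List.map_append, List.map_map, List.prod_cons, List.prod_append,
      Nat.add_sub_cancel, Nat.sub_zero, Nat.sub_self, pow_zero, mul_one,
      List.map_nil, List.prod_nil]
    have hhead : ζ * s * ζ ^ c' = s := by
      rw [mul_comm ζ s, mul_assoc, ← pow_succ', hζ.pow_eq_one, mul_one]
    have htail : List.map ((fun i => qlA (ζ * s * ζ ^ (c' - i))) ∘ Nat.succ) (List.range c')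
        = List.map (fun i => qlA (s * ζ ^ (c' - i))) (List.range c') := by
      apply List.map_congr_left
      intro i hi
      have hi' : i < c' := List.mem_range.mp hi
      simp only [Function.comp_apply]
      have harith : ζ * s * ζ ^ (c' - Nat.succ i) = s * ζ ^ (c' - i) := by
        rw [show c' - i = (c' - Nat.succ i) + 1 by omega, pow_succ]
        ring
      rw [harith]
    rw [hhead, htail, Matrix.trace_mul_comm]
  have hfacdeg : ∀ p ∈ l, p.natDegree ≤ 1 := by
    intro p hp
    rw [hl] at hp
    obtain ⟨i, -, rfl⟩ := List.mem_map.mp hp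
    refine (Polynomial.natDegree_add_le _ _).trans (max_le (by simp) ?_)
    refine Polynomial.natDegree_mul_le.trans ?_
    simp
  have hlen : l.length = c := by simp [hl]
  have hdeg : q.natDegree ≤ c := by
    rw [hq]
    refine (Polynomial.natDegree_list_prod_le l).trans ?_
    have h1 : (l.map Polynomial.natDegree).sum ≤ (l.map Polynomial.natDegree).length • 1 := by
      refine List.sum_le_card_nsmul _ 1 ?_
      intro x hx
      obtain ⟨p, hp, rfl⟩ := List.mem_map.mp hx
      exact hfacdeg p hp
    simpa [hlen] using h1
  have hcoeffc : q.coeff c = 0 := by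
    have h := Polynomial.coeff_list_prod_of_natDegree_le l 1 hfacdeg
    rw [hlen, mul_one] at h
    rw [hq, h, hl, List.map_map]
    have hG : List.map ((fun p => Polynomial.coeff p 1) ∘ fac) (List.range c)
        = List.map (fun i => ζ ^ (c - 1 - i) • qlE) (List.range c) := by
      apply List.map_congr_left
      intro i _
      simp [hfac, Polynomial.coeff_C, Polynomial.coeff_C_mul, Polynomial.coeff_X_one]
    rw [hG]
    obtain ⟨c2, rfl⟩ : ∃ c2, c = c2 + 2 := ⟨c - 2, by omega⟩
    simp only [List.range_succ_eq_map, List.map_cons, List.map_map, List.prod_cons,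
      Function.comp_apply]
    rw [← mul_assoc, hEE', zero_mul]
  set a : ℕ → ℂ := fun j => (q.coeff j).trace with ha
  set Tp : Polynomial ℂ := ∑ j ∈ Finset.range (c + 1), Polynomial.C (a j) * Polynomial.X ^ j
    with hTp
  have hqdeglt : q.natDegree < c + 1 := Nat.lt_succ_of_le hdeg
  have hTpeval : ∀ s : ℂ, Tp.eval s = (φ s q).trace := by
    intro s
    have hev : φ s q = ∑ i ∈ Finset.range (c + 1), s ^ i • q.coeff i := by
      have h0 : φ s q = Polynomial.eval₂ (RingHom.id _) (s • 1) q := by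
        rw [hφ]; rfl
      rw [h0, Polynomial.eval₂_eq_sum_range' (RingHom.id _) hqdeglt (s • 1)]
      refine Finset.sum_congr rfl (fun i _ => ?_)
      rw [RingHom.id_apply, _root_.smul_pow, one_pow, mul_smul_comm, mul_one]
    rw [hev, Matrix.trace_sum, hTp, Polynomial.eval_finset_sum]
    refine Finset.sum_congr rfl (fun i _ => ?_)
    rw [Polynomial.eval_mul, Polynomial.eval_C, Polynomial.eval_pow, Polynomial.eval_X,
      Matrix.trace_smul, smul_eq_mul, ha]
    ring
  have hsumcoeff : ∀ (b : ℕ → ℂ) (k : ℕ), k < c + 1 →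
      (∑ j ∈ Finset.range (c + 1), Polynomial.C (b j) * Polynomial.X ^ j).coeff k = b k := by
    intro b k hk
    rw [Polynomial.finset_sum_coeff,
      Finset.sum_eq_single k
        (fun j _ hjk => by
          rw [Polynomial.coeff_C_mul, Polynomial.coeff_X_pow, if_neg (fun h => hjk h.symm),
            mul_zero])
        (fun hk' => absurd (Finset.mem_range.mpr hk) hk'),
      Polynomial.coeff_C_mul, Polynomial.coeff_X_pow, if_pos rfl, mul_one]
  have hTp' : (∑ j ∈ Finset.range (c + 1), Polynomial.C (a j * ζ ^ j) * Polynomial.X ^ j) = Tp := by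
    apply Polynomial.funext
    intro s
    have h3 : Tp.eval (ζ * s) = Tp.eval s := by
      rw [hTpeval s, hTpeval (ζ * s), hrot s]
    calc (∑ j ∈ Finset.range (c + 1), Polynomial.C (a j * ζ ^ j) * Polynomial.X ^ j).eval s
        = Tp.eval (ζ * s) := by
          rw [hTp, Polynomial.eval_finset_sum, Polynomial.eval_finset_sum]
          refine Finset.sum_congr rfl (fun j _ => ?_)
          simp only [Polynomial.eval_mul, Polynomial.eval_C, Polynomial.eval_pow,
            Polynomial.eval_X, mul_pow]
          ring
      _ = Tp.eval s := h3
  have hkey : ∀ k, k < c + 1 → a k * ζ ^ k = a k := by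
    intro k hk
    have e1 := hsumcoeff (fun j => a j * ζ ^ j) k hk
    have e2 := hsumcoeff a k hk
    rw [hTp'] at e1
    rw [← hTp] at e2
    exact e1.symm.trans e2
  have hak : ∀ k, 1 ≤ k → k ≤ c → a k = 0 := by
    intro k hk1 hkc
    rcases Nat.eq_or_lt_of_le hkc with h | h
    · rw [ha]
      simp only [h, hcoeffc, Matrix.trace_zero]
    · have hζk : ζ ^ k ≠ 1 := hζ.pow_ne_one_of_pos_of_lt (by omega) h
      have h1 := hkey k (by omega)
      have h2 : a k * (ζ ^ k - 1) = 0 := by linear_combination h1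
      rcases mul_eq_zero.mp h2 with h3 | h3
      · exact h3
      · exact absurd (sub_eq_zero.mp h3) hζk
  have hq1 : φ 1 q = qlP ζ c := by
    rw [hφq]
    unfold qlP
    congr 1
    exact List.map_congr_left (fun i _ => by rw [one_mul])
  have ha0 : a 0 = 1 := by
    have h00 : φ 0 q = qlL ^ c := by
      rw [hφq]
      have h01 : List.map (fun i => qlA ((0 : ℂ) * ζ ^ (c - 1 - i))) (List.range c)
          = List.map (fun _ => qlL) (List.range c) :=
        List.map_congr_left (fun i _ => by rw [zero_mul, qlA_zero])
      rw [h01, List.map_const', List.prod_replicate, List.length_range]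
    have h02 := hTpeval 0
    rw [h00, qlL_pow c (by omega), trace_qlL, ← Polynomial.coeff_zero_eq_eval_zero] at h02
    rw [hTp] at h02
    rw [hsumcoeff a 0 (by omega)] at h02
    exact h02
  have e1 : (qlP ζ c).trace = Tp.eval 1 := by rw [hTpeval 1, hq1]
  rw [e1, hTp, Polynomial.eval_finset_sum]
  simp only [Polynomial.eval_mul, Polynomial.eval_C, Polynomial.eval_pow, Polynomial.eval_X,
    one_pow, mul_one]
  rw [Finset.sum_eq_single 0
      (fun j hj hj0 => hak j (by omega) (Nat.lt_succ_iff.mp (Finset.mem_range.mp hj)))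
      (fun h => absurd (Finset.mem_range.mpr (by omega)) h)]
  exact ha0

lemma det_qlP_prim {c : ℕ} {ζ : ℂ} (hc : 0 < c) (hζ : IsPrimitiveRoot ζ c) :
    (qlP ζ c).det = -1 := by
  rw [qldet_P]
  rcases Nat.even_or_odd c with he | ho
  · obtain ⟨r, hr⟩ := he
    obtain ⟨t, rfl⟩ : ∃ t, c = 2 * t := ⟨r, by omega⟩
    have ht : 0 < t := by omega
    have hsum : ∑ i ∈ Finset.range (2 * t), i = t * (2 * t - 1) := by
      have h2 := Finset.sum_range_id_mul_two (2 * t)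
      have h3 : (2 * t) * (2 * t - 1) = (t * (2 * t - 1)) * 2 := by ring
      exact Nat.eq_of_mul_eq_mul_right (by norm_num) (h2.trans h3)
    have hx : ζ ^ t = -1 := by
      have hx2 : (ζ ^ t) * (ζ ^ t) = 1 := by
        rw [← pow_add, show t + t = 2 * t by ring, hζ.pow_eq_one]
      have hx1 : ζ ^ t ≠ 1 := hζ.pow_ne_one_of_pos_of_lt ht.ne' (by omega)
      have h3 : (ζ ^ t - 1) * (ζ ^ t + 1) = 0 := by linear_combination hx2
      rcases mul_eq_zero.mp h3 with h | h
      · exact absurd (sub_eq_zero.mp h) hx1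
      · exact eq_neg_of_add_eq_zero_left h
    rw [hsum]
    have h4 : (ζ : ℂ) ^ (t * (2 * t - 1)) = (-1 : ℂ) ^ (2 * t - 1) := by rw [pow_mul, hx]
    rw [h4, Even.neg_one_pow ⟨t, by ring⟩, one_mul, Odd.neg_one_pow ⟨t - 1, by omega⟩]
  · obtain ⟨t, ht⟩ := ho
    have hsum : ∑ i ∈ Finset.range c, i = c * t := by
      have h2 := Finset.sum_range_id_mul_two c
      have h3 : c * (c - 1) = (c * t) * 2 := by
        rw [show c - 1 = 2 * t by omega]
        ring
      exact Nat.eq_of_mul_eq_mul_right (by norm_num) (h2.trans h3)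
    rw [hsum]
    have h4 : (ζ : ℂ) ^ (c * t) = 1 := by rw [pow_mul, hζ.pow_eq_one, one_pow]
    rw [h4, mul_one, Odd.neg_one_pow ⟨t, ht⟩]

end ComplexPart

section BridgeAndSum

lemma eLucas_map {R : Type*} [CommRing R] (φ : Polynomial ℤ →+* R) (m : ℕ) :
    φ (eLucas m) = (qlP (φ Polynomial.X) m).trace := by
  unfold eLucas qlP
  have htr : ∀ M : Matrix (Fin 2) (Fin 2) (Polynomial ℤ), φ M.trace = (φ.mapMatrix M).trace := by
    intro M
    simp [Matrix.trace, Matrix.diag, map_sum, RingHom.mapMatrix_apply, Matrix.map_apply]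
  rw [htr, map_list_prod φ.mapMatrix, List.map_map]
  congr 1
  have hmap := List.map_congr_left (l := List.range m)
    (f := (⇑φ.mapMatrix ∘ fun i => Amat (Polynomial.X ^ (m - 1 - i))))
    (g := fun i => qlA (φ Polynomial.X ^ (m - 1 - i)))
    (fun i _ => by
      ext a b
      fin_cases a <;> fin_cases b <;>
        simp [Amat, qlA, RingHom.mapMatrix_apply, Matrix.map_apply, map_pow])
  rw [hmap]

lemma eLucas_eval_prim {c m : ℕ} {ζ : ℂ} (hc : 0 < c) (hm : 0 < m) (hdvd : c ∣ m)
    (hζ : IsPrimitiveRoot ζ c) :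
    Polynomial.aeval ζ (eLucas m) = (Nat.fib (m / c - 1) : ℂ) + (Nat.fib (m / c + 1) : ℂ) := by
  have h1 : Polynomial.aeval ζ (eLucas m) = (qlP ζ m).trace := by
    have h0 := eLucas_map (Polynomial.aeval ζ : Polynomial ℤ →ₐ[ℤ] ℂ).toRingHom m
    simpa using h0
  have hk1 : 1 ≤ m / c := Nat.div_pos (Nat.le_of_dvd hm hdvd) hc
  have hB1 := trace_qlP_prim hc hζ
  have hBB : qlP ζ c * qlP ζ c = qlP ζ c + 1 := qlB_sq _ hB1 (det_qlP_prim hc hζ)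
  have h2 : qlP ζ m = (qlP ζ c) ^ (m / c) := by
    conv_lhs => rw [show m = c * (m / c) from (Nat.mul_div_cancel' hdvd).symm]
    exact qlP_pow ζ c hζ.pow_eq_one (m / c)
  rw [h1, h2, qlTraceLuc _ hB1 hBB _ hk1]

lemma mobius_luc_sum {n c : ℕ} (hn : 0 < n) (hc : 1 < c) (hcn : c ∣ n) :
    ∑ d ∈ n.divisors, (ArithmeticFunction.moebius d : ℤ) *
      ((Nat.fib (n / (d * (c / Nat.gcd c d)) - 1) : ℤ)
        + (Nat.fib (n / (d * (c / Nat.gcd c d)) + 1) : ℤ)) = 0 := by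
  set G : ℕ → ℕ := fun d => n / (d * (c / Nat.gcd c d)) with hG
  set t : ℕ → ℤ := fun d =>
    (ArithmeticFunction.moebius d : ℤ) * ((Nat.fib (G d - 1) : ℤ) + (Nat.fib (G d + 1) : ℤ))
    with ht
  show ∑ d ∈ n.divisors, t d = 0
  set p := c.minFac with hp
  have hpp : p.Prime := Nat.minFac_prime (by omega)
  have hpc : p ∣ c := Nat.minFac_dvd c
  have hpn : p ∣ n := hpc.trans hcn
  have hppos : 0 < p := hpp.pos
  have hGp : ∀ d : ℕ, ¬ p ∣ d → G (p * d) = G d := by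
    intro d hpd
    have hcop : Nat.Coprime p d := (Nat.Prime.coprime_iff_not_dvd hpp).mpr hpd
    have hg : Nat.gcd c (p * d) = p * Nat.gcd c d := by
      obtain ⟨c0, hc0⟩ := hpc
      rw [hc0, Nat.gcd_mul_left]
      congr 1
      exact (Nat.Coprime.gcd_mul_left_cancel c0 hcop).symm
    have hpg : ¬ p ∣ Nat.gcd c d := fun h => hpd (h.trans (Nat.gcd_dvd_right c d))
    have hgpos : 0 < Nat.gcd c d := Nat.gcd_pos_of_pos_left d (by omega)
    have hpgc : p * Nat.gcd c d ∣ c :=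
      Nat.Coprime.mul_dvd_of_dvd_of_dvd ((Nat.Prime.coprime_iff_not_dvd hpp).mpr hpg) hpc
        (Nat.gcd_dvd_left c d)
    have hgc : Nat.gcd c d ∣ c := Nat.gcd_dvd_left c d
    have hpcg : p ∣ c / Nat.gcd c d :=
      (Nat.dvd_div_iff_mul_dvd hgc).mpr (by rwa [mul_comm] at hpgc)
    simp only [hG]
    congr 1
    rw [hg, show p * Nat.gcd c d = Nat.gcd c d * p by ring, ← Nat.div_div_eq_div_mul,
      show p * d * (c / Nat.gcd c d / p) = d * (p * (c / Nat.gcd c d / p)) by ring,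
      Nat.mul_div_cancel' hpcg]
  have hμp : ∀ d : ℕ, ¬ p ∣ d →
      (ArithmeticFunction.moebius (p * d) : ℤ) = - ArithmeticFunction.moebius d := by
    intro d hpd
    have hcop : Nat.Coprime p d := (Nat.Prime.coprime_iff_not_dvd hpp).mpr hpd
    rw [ArithmeticFunction.isMultiplicative_moebius.map_mul_of_coprime hcop,
      ArithmeticFunction.moebius_apply_prime hpp]
    ring
  have htp : ∀ d : ℕ, ¬ p ∣ d → t (p * d) = - t d := by
    intro d hpd
    simp only [ht]
    rw [hGp d hpd, hμp d hpd]
    ring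
  classical
  rw [← Finset.sum_filter_add_sum_filter_not n.divisors (fun d => p ∣ d)]
  have hzero : ∀ s : Finset ℕ, ∀ d ∈ s.filter (fun d => ¬ Squarefree d), t d = 0 := by
    intro s d hd
    obtain ⟨-, hd2⟩ := Finset.mem_filter.mp hd
    simp only [ht, ArithmeticFunction.moebius_eq_zero_of_not_squarefree hd2]
    simp
  have hsplit1 : ∑ d ∈ n.divisors.filter (fun d => p ∣ d), t d
      = ∑ d ∈ (n.divisors.filter (fun d => p ∣ d)).filter Squarefree, t d := by
    rw [← Finset.sum_filter_add_sum_filter_not (n.divisors.filter (fun d => p ∣ d)) Squarefree]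
    rw [Finset.sum_eq_zero (hzero _), add_zero]
  have hsplit2 : ∑ d ∈ n.divisors.filter (fun d => ¬ p ∣ d), t d
      = ∑ d ∈ (n.divisors.filter (fun d => ¬ p ∣ d)).filter Squarefree, t d := by
    rw [← Finset.sum_filter_add_sum_filter_not (n.divisors.filter (fun d => ¬ p ∣ d)) Squarefree]
    rw [Finset.sum_eq_zero (hzero _), add_zero]
  rw [hsplit1, hsplit2]
  have hbij : ∑ d ∈ (n.divisors.filter (fun d => p ∣ d)).filter Squarefree, t d
      = ∑ d ∈ (n.divisors.filter (fun d => ¬ p ∣ d)).filter Squarefree, t (p * d) := by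
    refine Finset.sum_nbij' (fun d => d / p) (fun d => p * d) ?_ ?_ ?_ ?_ ?_
    · -- maps into
      intro d hd
      obtain ⟨hd1, hd2⟩ := Finset.mem_filter.mp hd
      obtain ⟨hdn, hn0⟩ := Nat.mem_divisors.mp (Finset.mem_filter.mp hd1).1
      have hpd : p ∣ d := (Finset.mem_filter.mp hd1).2
      refine Finset.mem_filter.mpr ⟨Finset.mem_filter.mpr ⟨Nat.mem_divisors.mpr
        ⟨(Nat.div_dvd_of_dvd hpd).trans hdn, hn0⟩, ?_⟩, hd2.squarefree_of_dvd (Nat.div_dvd_of_dvd hpd)⟩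
      -- ¬ p ∣ d / p
      intro hcontra
      have hsq : p * p ∣ d := by
        obtain ⟨f, hf⟩ := hpd
        have hfp : d / p = f := by rw [hf]; exact Nat.mul_div_cancel_left f hppos
        obtain ⟨e, he⟩ := hcontra
        have he' : f = p * e := by rw [← hfp]; exact he
        rw [hf, he']
        exact ⟨e, by ring⟩
      exact hpp.one_lt.ne' (Nat.isUnit_iff.mp (hd2 p hsq))
    · -- other direction
      intro d hd
      obtain ⟨hd1, hd2⟩ := Finset.mem_filter.mp hd
      obtain ⟨hdn, hn0⟩ := Nat.mem_divisors.mp (Finset.mem_filter.mp hd1).1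
      have hpd : ¬ p ∣ d := (Finset.mem_filter.mp hd1).2
      have hcop : Nat.Coprime p d := (Nat.Prime.coprime_iff_not_dvd hpp).mpr hpd
      refine Finset.mem_filter.mpr ⟨Finset.mem_filter.mpr ⟨Nat.mem_divisors.mpr
        ⟨Nat.Coprime.mul_dvd_of_dvd_of_dvd hcop hpn hdn, hn0⟩, ⟨d, rfl⟩⟩, ?_⟩
      exact (Nat.squarefree_mul hcop).mpr ⟨hpp.squarefree, hd2⟩
    · intro d hd
      exact Nat.mul_div_cancel' (Finset.mem_filter.mp (Finset.mem_filter.mp hd).1).2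
    · intro d hd
      exact Nat.mul_div_cancel_left d hppos
    · intro d hd
      have hpd : p ∣ d := (Finset.mem_filter.mp (Finset.mem_filter.mp hd).1).2
      rw [Nat.mul_div_cancel' hpd]
  rw [hbij, ← Finset.sum_add_distrib]
  refine Finset.sum_eq_zero ?_
  intro d hd
  have hpd : ¬ p ∣ d := (Finset.mem_filter.mp (Finset.mem_filter.mp hd).1).2
  rw [htp d hpd]
  ring

end BridgeAndSum

section Final

lemma aeval_mobius_sum {n c : ℕ} {ζ : ℂ} (hn : 0 < n) (hc : 1 < c) (hcn : c ∣ n)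
    (hζ : IsPrimitiveRoot ζ c) :
    Polynomial.aeval ζ (∑ d ∈ n.divisors,
      Polynomial.C (ArithmeticFunction.moebius d : ℤ)
        * ((eLucas (n / d)).comp (Polynomial.X ^ d))) = 0 := by
  rw [map_sum]
  have hterm : ∀ d ∈ n.divisors,
      Polynomial.aeval ζ (Polynomial.C (ArithmeticFunction.moebius d : ℤ)
          * ((eLucas (n / d)).comp (Polynomial.X ^ d)))
      = ((ArithmeticFunction.moebius d : ℤ) : ℂ) *
        (((Nat.fib (n / (d * (c / Nat.gcd c d)) - 1) : ℕ) : ℂ)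
          + ((Nat.fib (n / (d * (c / Nat.gcd c d)) + 1) : ℕ) : ℂ)) := by
    intro d hd
    obtain ⟨hdn, hn0⟩ := Nat.mem_divisors.mp hd
    have hd0 : 0 < d := Nat.pos_of_dvd_of_pos hdn hn
    have hg0pos : 0 < Nat.gcd c d := Nat.gcd_pos_of_pos_left d (by omega)
    have hg0c : Nat.gcd c d ∣ c := Nat.gcd_dvd_left c d
    have hg0d : Nat.gcd c d ∣ d := Nat.gcd_dvd_right c d
    have hc'pos : 0 < c / Nat.gcd c d := Nat.div_pos (Nat.le_of_dvd (by omega) hg0c) hg0pos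
    have hprim : IsPrimitiveRoot (ζ ^ d) (c / Nat.gcd c d) := by
      have h1 : IsPrimitiveRoot (ζ ^ Nat.gcd c d) (c / Nat.gcd c d) :=
        IsPrimitiveRoot.pow (by omega) hζ (Nat.mul_div_cancel' hg0c).symm
      have h2 := h1.pow_of_coprime (d / Nat.gcd c d)
        ((Nat.coprime_div_gcd_div_gcd hg0pos).symm)
      rwa [← pow_mul, Nat.mul_div_cancel' hg0d] at h2
    have hlcm : d * (c / Nat.gcd c d) ∣ n := by
      have h3 : Nat.lcm c d ∣ n := Nat.lcm_dvd hcn hdn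
      have h4 : d * (c / Nat.gcd c d) = Nat.lcm c d := by
        rw [← Nat.mul_div_assoc d hg0c, mul_comm d c, Nat.lcm]
      rwa [h4]
    have hc'm : (c / Nat.gcd c d) ∣ n / d :=
      (Nat.dvd_div_iff_mul_dvd hdn).mpr hlcm
    have hndpos : 0 < n / d := Nat.div_pos (Nat.le_of_dvd hn hdn) hd0
    rw [map_mul, Polynomial.aeval_C, Polynomial.aeval_comp, map_pow, Polynomial.aeval_X,
      eLucas_eval_prim hc'pos hndpos hc'm hprim, Nat.div_div_eq_div_mul]
    norm_num
  rw [Finset.sum_congr rfl hterm]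
  have hint := mobius_luc_sum hn hc hcn
  calc ∑ d ∈ n.divisors, ((ArithmeticFunction.moebius d : ℤ) : ℂ) *
        (((Nat.fib (n / (d * (c / Nat.gcd c d)) - 1) : ℕ) : ℂ)
          + ((Nat.fib (n / (d * (c / Nat.gcd c d)) + 1) : ℕ) : ℂ))
      = ((∑ d ∈ n.divisors, (ArithmeticFunction.moebius d : ℤ) *
          ((Nat.fib (n / (d * (c / Nat.gcd c d)) - 1) : ℤ)
            + (Nat.fib (n / (d * (c / Nat.gcd c d)) + 1) : ℤ)) : ℤ) : ℂ) := by
        push_cast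
        rfl
    _ = 0 := by rw [hint]; simp

lemma qInt_eq_prod (n : ℕ) (hn : 0 < n) :
    qInt n = ∏ i ∈ n.divisors.erase 1, Polynomial.cyclotomic i ℤ := by
  rw [qInt, ← Polynomial.prod_cyclotomic_eq_geom_sum hn ℤ]

theorem qGauss_eLucas : qGauss eLucas := by
  intro n hn
  have hmonic : (qInt n).Monic := by
    rw [qInt_eq_prod n hn]
    exact Polynomial.monic_prod_of_monic _ _ (fun i _ => Polynomial.cyclotomic.monic i ℤ)
  rw [← Polynomial.map_dvd_map (algebraMap ℤ ℚ) (algebraMap ℤ ℚ).injective_int hmonic]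
  rw [qInt_eq_prod n hn, Polynomial.map_prod]
  refine Finset.prod_dvd_of_coprime ?_ ?_
  · intro a ha b hb hab
    simp only [Polynomial.map_cyclotomic]
    exact Polynomial.cyclotomic.isCoprime_rat hab
  · intro c hcmem
    have hc1 : c ≠ 1 := Finset.ne_of_mem_erase hcmem
    obtain ⟨hcn, hn0⟩ := Nat.mem_divisors.mp (Finset.mem_of_mem_erase hcmem)
    have hcpos : 0 < c := Nat.pos_of_dvd_of_pos hcn hn
    have hc : 1 < c := by omega
    set ζ : ℂ := Complex.exp (2 * Real.pi * Complex.I / c) with hζdef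
    have hζ : IsPrimitiveRoot ζ c := Complex.isPrimitiveRoot_exp c (by omega)
    rw [Polynomial.map_cyclotomic, Polynomial.cyclotomic_eq_minpoly_rat hζ hcpos]
    refine minpoly.dvd ℚ ζ ?_
    rw [Polynomial.aeval_map_algebraMap]
    exact aeval_mobius_sum hn hc hcn hζ

theorem eLucas_eval_one (n : ℕ) (hn : 1 ≤ n) :
    (eLucas n).eval 1 = (Nat.fib (n - 1) : ℤ) + Nat.fib (n + 1) := by
  have h1 : (Polynomial.evalRingHom (1 : ℤ)) (eLucas n) = (qlP (1 : ℤ) n).trace := by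
    have h0 := eLucas_map (Polynomial.evalRingHom (1 : ℤ)) n
    simpa using h0
  have h2 : qlP (1 : ℤ) n = (qlP (1 : ℤ) 1) ^ n := by
    conv_lhs => rw [show n = 1 * n by ring]
    exact qlP_pow 1 1 (pow_one 1) n
  have h3 : qlP (1 : ℤ) 1 = qlA 1 := by
    simp [qlP, List.range_succ, qlA]
  have htr : (qlA (1 : ℤ)).trace = 1 := by
    simp [qlA, Matrix.trace_fin_two]
  have hdet : (qlA (1 : ℤ)).det = -1 := by
    simp [qlA, Matrix.det_fin_two_of]
  have hBB := qlB_sq _ htr hdet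
  have h4 := qlTraceLuc _ htr hBB n hn
  calc (eLucas n).eval 1 = (qlP (1 : ℤ) n).trace := h1
    _ = (Nat.fib (n - 1) : ℤ) + Nat.fib (n + 1) := by rw [h2, h3, h4]

end Final


theorem stmt7 :
    qGauss eLucas ∧
      ∀ n : ℕ, 1 ≤ n → (eLucas n).eval 1 = (Nat.fib (n - 1) : ℤ) + Nat.fib (n + 1) := by
  exact ⟨qGauss_eLucas, eLucas_eval_one⟩
end

section
/- Let n ≥ 1 and let ω be a primitive complex n-th root of unity. Let A_ω(t) = B(ω^{n−1}) B(ω^{n−2}) ⋯ B(ω) B(1) ∈ Mat_2(ℤ[ω][t]), where B(x) is the 2×2 matrix with rows (1, x·1) and (t, 0), i.e. B(x) = [[1, x],[t, 0]], and let A(t) = [[1, t],[1, 0]] ∈ Mat_2(ℤ[t]). Then A_ω(t) and A(t^n) have the same characteristic polynomial; equivalently, det(A_ω(t)) = −t^n and Tr(A_ω(t)) = 1. -/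
open Polynomial Finset

/-- The matrix `B(x) = [[1, x], [t, 0]]` over `ℂ[t]`, for a scalar `x : ℂ`. -/
noncomputable def Bmat (x : ℂ) : Matrix (Fin 2) (Fin 2) (Polynomial ℂ) :=
  !![1, Polynomial.C x; Polynomial.X, 0]

/-- `A_ω(t) = B(ω^{n-1}) B(ω^{n-2}) ⋯ B(ω) B(1)`. -/
noncomputable def Aomega (n : ℕ) (ω : ℂ) : Matrix (Fin 2) (Fin 2) (Polynomial ℂ) :=
  (((List.range n).map (fun i => Bmat (ω ^ (n - 1 - i)))).prod)

noncomputable def Dm (ω : ℂ) : Matrix (Fin 2) (Fin 2) (Polynomial ℂ) :=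
  !![1, 0; 0, Polynomial.C ω]

lemma B_mul_D (ω x : ℂ) : Bmat x * Dm ω = Bmat (ω * x) := by
  simp [Bmat, Dm, Matrix.mul_fin_two, mul_comm, ← map_mul]

lemma charpoly_fin_two' (M : Matrix (Fin 2) (Fin 2) (Polynomial ℂ)) :
    M.charpoly = X ^ 2 - C M.trace * X + C M.det := by
  rw [Matrix.charpoly, Matrix.det_fin_two, Matrix.trace_fin_two, Matrix.det_fin_two]
  simp [Matrix.charmatrix_apply_eq, Matrix.charmatrix_apply_ne]
  ring

lemma coeff_comp_C_mul_X (p : Polynomial ℂ) (a : ℂ) (k : ℕ) :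
    (p.comp (C a * X)).coeff k = a ^ k * p.coeff k := by
  induction p using Polynomial.induction_on' with
  | add p q hp hq => simp [add_comp, hp, hq, mul_add]
  | monomial i c =>
    rw [← C_mul_X_pow_eq_monomial, mul_comp, C_comp, X_pow_comp, mul_pow, ← C_pow]
    simp only [coeff_C_mul, coeff_X_pow]
    split_ifs with h
    · subst h; ring
    · ring

noncomputable def phi (ω : ℂ) : Polynomial ℂ →+* Polynomial ℂ :=
  eval₂RingHom Polynomial.C (C ω * X)

lemma phi_apply (ω : ℂ) (p : Polynomial ℂ) : phi ω p = p.comp (C ω * X) := rfl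

lemma phi_B (ω x : ℂ) : (Bmat x).map (phi ω) = Dm ω * Bmat x := by
  ext i j
  fin_cases i <;> fin_cases j <;>
    simp [Bmat, Dm, Matrix.map_apply, Matrix.mul_apply, Fin.sum_univ_two, phi]

lemma L2 (ω : ℂ) (l : List ℂ) :
    ((l.map fun x => Dm ω * Bmat x).prod) * Dm ω
      = Dm ω * (l.map fun x => Bmat (ω * x)).prod := by
  induction l with
  | nil => simp
  | cons x l ih =>
    simp only [List.map_cons, List.prod_cons, mul_assoc, ih]
    rw [← mul_assoc (Bmat x), B_mul_D]

-- eval at 0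
noncomputable def Em (x : ℂ) : Matrix (Fin 2) (Fin 2) (Polynomial ℂ) :=
  !![1, Polynomial.C x; 0, 0]

lemma E_mul_E (x y : ℂ) : Em y * Em x = Em x := by
  ext i j
  fin_cases i <;> fin_cases j <;> simp [Em, Matrix.mul_apply, Fin.sum_univ_two]

lemma E_prod (x : ℂ) (l : List ℂ) : ((l.map Em).prod) * Em x = Em x := by
  induction l with
  | nil => simp
  | cons y l ih => simp only [List.map_cons, List.prod_cons, mul_assoc, ih, E_mul_E]

noncomputable def ev0 : Polynomial ℂ →+* Polynomial ℂ :=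
  eval₂RingHom Polynomial.C 0

lemma ev0_B (x : ℂ) : (Bmat x).map ev0 = Em x := by
  ext i j
  fin_cases i <;> fin_cases j <;> simp [Bmat, Em, Matrix.map_apply, ev0]

lemma deg_prod (x : ℂ) (l : List ℂ) :
    ((((x :: l).map Bmat).prod 0 0).natDegree ≤ l.length) ∧
    ((((x :: l).map Bmat).prod 0 1).natDegree ≤ l.length) ∧
    ((((x :: l).map Bmat).prod 1 0).natDegree ≤ l.length + 1) ∧
    ((((x :: l).map Bmat).prod 1 1).natDegree ≤ l.length) := by
  induction l generalizing x with
  | nil =>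
    simp [Bmat, natDegree_C]
  | cons y l ih =>
    obtain ⟨h1, h2, h3, h4⟩ := ih y
    set Q := (((y :: l).map Bmat).prod) with hQ
    have hmul : ((x :: y :: l).map Bmat).prod = Bmat x * Q := by
      simp [hQ]
    have e00 : (Bmat x * Q) 0 0 = Q 0 0 + C x * Q 1 0 := by
      simp [Bmat, Matrix.mul_apply, Fin.sum_univ_two]
    have e01 : (Bmat x * Q) 0 1 = Q 0 1 + C x * Q 1 1 := by
      simp [Bmat, Matrix.mul_apply, Fin.sum_univ_two]
    have e10 : (Bmat x * Q) 1 0 = X * Q 0 0 := by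
      simp [Bmat, Matrix.mul_apply, Fin.sum_univ_two]
    have e11 : (Bmat x * Q) 1 1 = X * Q 0 1 := by
      simp [Bmat, Matrix.mul_apply, Fin.sum_univ_two]
    have hX : ∀ p : Polynomial ℂ, (X * p).natDegree ≤ 1 + p.natDegree := by
      intro p
      exact (natDegree_mul_le).trans (by simp)
    refine ⟨?_, ?_, ?_, ?_⟩ <;> rw [hmul]
    · rw [e00]
      exact (natDegree_add_le _ _).trans (max_le (h1.trans (by simp))
        ((natDegree_C_mul_le x _).trans (by simpa using h3)))
    · rw [e01]
      exact (natDegree_add_le _ _).trans (max_le (h2.trans (by simp))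
        ((natDegree_C_mul_le x _).trans (h4.trans (by simp))))
    · rw [e10]
      exact (hX _).trans (by simp only [List.length_cons]; omega)
    · rw [e11]
      exact (hX _).trans (by simp only [List.length_cons]; omega)

lemma Aomega_eq (n : ℕ) (hn : 1 ≤ n) (ω : ℂ) :
    Aomega n ω
      = (((List.range (n - 1)).map (fun i => Bmat (ω ^ (n - 1 - i)))).prod) * Bmat 1 := by
  obtain ⟨m, rfl⟩ : ∃ m, n = m + 1 := ⟨n - 1, by omega⟩
  rw [Aomega, List.range_succ, List.map_append, List.prod_append]
  simp

lemma conj_identity (n : ℕ) (hn : 1 ≤ n) (ω : ℂ) (hω1 : ω ^ n = 1) :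
    (Aomega n ω).map (phi ω) * (Dm ω * Bmat 1) = (Dm ω * Bmat 1) * Aomega n ω := by
  have hmap : (Aomega n ω).map (phi ω)
      = ((List.range n).map fun i => Dm ω * Bmat (ω ^ (n - 1 - i))).prod := by
    have h0 : (Aomega n ω).map (phi ω) = (phi ω).mapMatrix (Aomega n ω) := rfl
    rw [h0, Aomega, map_list_prod, List.map_map]
    congr 1
    apply List.map_congr_left
    intro i _
    simp only [Function.comp_def, RingHom.mapMatrix_apply]
    exact phi_B ω _
  have h2 := L2 ω ((List.range n).map fun i => ω ^ (n - 1 - i))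
  rw [List.map_map, List.map_map] at h2
  simp only [Function.comp_def] at h2
  have h3 : ((List.range n).map (fun i => Bmat (ω * ω ^ (n - 1 - i)))).prod
      = Bmat 1 * ((List.range (n - 1)).map (fun i => Bmat (ω ^ (n - 1 - i)))).prod := by
    obtain ⟨m, rfl⟩ : ∃ m, n = m + 1 := ⟨n - 1, by omega⟩
    rw [List.range_succ_eq_map, List.map_cons, List.prod_cons, List.map_map]
    have e1 : ω * ω ^ (m + 1 - 1 - 0) = 1 := by
      simpa [pow_succ, mul_comm] using hω1
    rw [e1]
    congr 1
    congr 1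
    simp only [Nat.add_sub_cancel]
    have : ∀ i ∈ List.range m,
        ((fun i => Bmat (ω * ω ^ (m + 1 - 1 - i))) ∘ Nat.succ) i
          = Bmat (ω ^ (m + 1 - 1 - i)) := by
      intro i hi
      simp only [List.mem_range] at hi
      simp only [Function.comp_def]
      congr 1
      have : m + 1 - 1 - Nat.succ i + 1 = m + 1 - 1 - i := by omega
      rw [← pow_succ', ← this]
    exact List.map_congr_left this
  calc (Aomega n ω).map (phi ω) * (Dm ω * Bmat 1)
      = ((Aomega n ω).map (phi ω) * Dm ω) * Bmat 1 := by rw [mul_assoc]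
    _ = (Dm ω * ((List.range n).map (fun i => Bmat (ω * ω ^ (n - 1 - i)))).prod) * Bmat 1 := by
        rw [hmap, h2]
    _ = (Dm ω * (Bmat 1 * ((List.range (n - 1)).map (fun i => Bmat (ω ^ (n - 1 - i)))).prod))
          * Bmat 1 := by rw [h3]
    _ = (Dm ω * Bmat 1) * Aomega n ω := by
        rw [Aomega_eq n hn ω]
        simp only [mul_assoc]

lemma trace_map_phi (f : Polynomial ℂ →+* Polynomial ℂ) (A : Matrix (Fin 2) (Fin 2) (Polynomial ℂ)) :
    Matrix.trace (A.map f) = f (Matrix.trace A) := by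
  simp [Matrix.trace_fin_two, Matrix.map_apply, map_add]

lemma trace_Aomega (n : ℕ) (hn : 1 ≤ n) (ω : ℂ) (hω : IsPrimitiveRoot ω n) :
    Matrix.trace (Aomega n ω) = 1 := by
  set A := Aomega n ω with hA
  set p := Matrix.trace A with hp
  have hωne : ω ≠ 0 := hω.ne_zero (by omega)
  have hdetC : (Dm ω * Bmat 1).det = -(C ω * X) := by
    rw [Matrix.det_mul]
    simp [Dm, Bmat, Matrix.det_fin_two_of]
  have hdC0 : (Dm ω * Bmat 1).det ≠ 0 := by
    rw [hdetC]
    exact neg_ne_zero.mpr (mul_ne_zero (by simpa using hωne) X_ne_zero)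
  have key : phi ω p = p := by
    have hc := conj_identity n hn ω hω.pow_eq_one
    have h4 : (A.map (phi ω)) * ((Dm ω * Bmat 1) * (Dm ω * Bmat 1).adjugate)
        = (Dm ω * Bmat 1) * A * (Dm ω * Bmat 1).adjugate := by
      rw [← mul_assoc]; rw [hc]
    rw [Matrix.mul_adjugate] at h4
    have h5 : (Dm ω * Bmat 1).det * Matrix.trace (A.map (phi ω))
        = (Dm ω * Bmat 1).det * Matrix.trace A := by
      calc (Dm ω * Bmat 1).det * Matrix.trace (A.map (phi ω))
          = Matrix.trace ((A.map (phi ω)) * ((Dm ω * Bmat 1).det • 1)) := by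
            rw [Matrix.mul_smul, mul_one, Matrix.trace_smul]; rfl
        _ = Matrix.trace ((Dm ω * Bmat 1) * A * (Dm ω * Bmat 1).adjugate) := by rw [h4]
        _ = Matrix.trace (A * ((Dm ω * Bmat 1).adjugate * (Dm ω * Bmat 1))) := by
            rw [mul_assoc, Matrix.trace_mul_comm, mul_assoc]
        _ = Matrix.trace (A * ((Dm ω * Bmat 1).det • 1)) := by rw [Matrix.adjugate_mul]
        _ = (Dm ω * Bmat 1).det * Matrix.trace A := by
            rw [Matrix.mul_smul, mul_one, Matrix.trace_smul]; rfl
    have := mul_left_cancel₀ hdC0 h5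
    rwa [trace_map_phi] at this
  -- degree bound
  have hdeg : p.natDegree ≤ n - 1 := by
    have hAL : A = (((List.range n).map fun i => ω ^ (n - 1 - i)).map Bmat).prod := by
      rw [hA, Aomega, List.map_map]; rfl
    set lA := (List.range n).map fun i => ω ^ (n - 1 - i) with hlA
    have hlen : lA.length = n := by simp [hlA]
    obtain ⟨x, t, hxt⟩ := List.exists_cons_of_ne_nil
      (show lA ≠ [] by intro h; rw [h] at hlen; simp at hlen; omega)
    have htlen : t.length = n - 1 := by
      rw [hxt] at hlen; simp at hlen; omega
    obtain ⟨d1, d2, d3, d4⟩ := deg_prod x t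
    rw [hxt] at hAL
    rw [hp, Matrix.trace_fin_two, hAL]
    exact (natDegree_add_le _ _).trans (max_le (by omega) (by omega))
  -- all positive coefficients vanish
  have h0 : ∀ k, k ≠ 0 → p.coeff k = 0 := by
    intro k hk
    by_cases hkn : k < n
    · have h := key
      have h' : ω ^ k * p.coeff k = p.coeff k := by
        conv_rhs => rw [← key]
        rw [phi_apply, coeff_comp_C_mul_X]
      have hne : ω ^ k ≠ 1 := hω.pow_ne_one_of_pos_of_lt hk hkn
      have hz : (ω ^ k - 1) * p.coeff k = 0 := by linear_combination h'
      rcases mul_eq_zero.mp hz with h'' | h''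
      · exact (hne (sub_eq_zero.mp h'')).elim
      · exact h''
    · exact coeff_eq_zero_of_natDegree_lt (lt_of_le_of_lt hdeg (by omega))
  have hpc : p = C (p.coeff 0) :=
    eq_C_of_natDegree_le_zero (natDegree_le_iff_coeff_eq_zero.mpr fun N hN => h0 N (by omega))
  -- constant term is 1
  have hc0 : C (p.coeff 0) = 1 := by
    have he : ev0 p = C (p.coeff 0) := by
      rw [show (ev0 p : Polynomial ℂ) = eval₂ C 0 p from rfl, eval₂_at_zero]
    have hAmap : A.map ev0 = Em 1 := by
      rw [hA, Aomega_eq n hn ω, Matrix.map_mul, ev0_B]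
      have : (((List.range (n - 1)).map fun i => Bmat (ω ^ (n - 1 - i))).prod).map ev0
          = ((((List.range (n - 1)).map fun i => ω ^ (n - 1 - i)).map Em).prod) := by
        have h0' : ∀ M : Matrix (Fin 2) (Fin 2) (Polynomial ℂ), M.map ev0 = ev0.mapMatrix M :=
          fun _ => rfl
        rw [h0', map_list_prod, List.map_map, List.map_map]
        congr 1
        apply List.map_congr_left
        intro i _
        simp only [Function.comp_def, RingHom.mapMatrix_apply]
        exact ev0_B _
      rw [this, E_prod]
    have : ev0 p = 1 := by
      rw [hp, ← trace_map_phi ev0, hAmap]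
      simp [Em, Matrix.trace_fin_two]
    rw [← he, this]
  rw [hp] at hpc ⊢
  rw [hpc, hc0]

lemma det_Aomega (n : ℕ) (hn : 1 ≤ n) (ω : ℂ) (hω : IsPrimitiveRoot ω n) :
    (Aomega n ω).det = -X ^ n := by
  have hdet : (Aomega n ω).det
      = ((List.range n).map fun i => (Bmat (ω ^ (n - 1 - i))).det).prod := by
    have := map_list_prod (Matrix.detMonoidHom)
      ((List.range n).map fun i => Bmat (ω ^ (n - 1 - i)))
    simpa [Matrix.coe_detMonoidHom, List.map_map, Function.comp_def, Aomega] using this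
  have hBdet : ∀ x : ℂ, (Bmat x).det = C (-x) * X := by
    intro x
    simp [Bmat, Matrix.det_fin_two_of]
  have hconv : ∀ f : ℕ → Polynomial ℂ, ((List.range n).map f).prod = ∏ i ∈ Finset.range n, f i := by
    intro f; rw [Finset.prod_eq_multiset_prod, Finset.range_val]; rfl
  rw [hdet]
  have hmapc : ((List.range n).map fun i => (Bmat (ω ^ (n - 1 - i))).det)
      = (List.range n).map fun i => C (-(ω ^ (n - 1 - i))) * X := by
    apply List.map_congr_left; intro i _; exact hBdet _
  rw [hmapc, hconv, Finset.prod_mul_distrib, Finset.prod_const, Finset.card_range,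
    ← map_prod]
  have hscal : (∏ i ∈ Finset.range n, -(ω ^ (n - 1 - i))) = -1 := by
    have hprodneg : (∏ i ∈ Finset.range n, -(ω ^ (n - 1 - i)))
        = (-1 : ℂ) ^ n * ∏ i ∈ Finset.range n, ω ^ (n - 1 - i) := by
      have e1 : ∏ i ∈ Finset.range n, -(ω ^ (n - 1 - i))
          = ∏ i ∈ Finset.range n, (-1 : ℂ) * ω ^ (n - 1 - i) :=
        Finset.prod_congr rfl (fun i _ => by ring)
      rw [e1, Finset.prod_mul_distrib, Finset.prod_const, Finset.card_range]
    have hpow : (∏ i ∈ Finset.range n, ω ^ (n - 1 - i)) = ω ^ (∑ i ∈ Finset.range n, i) := by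
      rw [Finset.prod_pow_eq_pow_sum]
      congr 1
      exact Finset.sum_range_reflect (fun i => i) n
    set s := ∑ i ∈ Finset.range n, i with hsdef
    have hgauss : s * 2 = n * (n - 1) := Finset.sum_range_id_mul_two n
    rw [hprodneg, hpow]
    rcases Nat.even_or_odd n with he | ho
    · obtain ⟨m, hm⟩ := he
      have hm1 : 1 ≤ m := by omega
      have hs : s = m * (n - 1) := by
        have h2 : s * 2 = (m * (n - 1)) * 2 := by
          rw [hgauss, show n = m * 2 from by omega]; ring
        omega
      have hωm : ω ^ m = -1 := by
        have h2 : (ω ^ m) ^ 2 = 1 := by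
          rw [← pow_mul, show m * 2 = n from by omega]; exact hω.pow_eq_one
        have hne : ω ^ m ≠ 1 := hω.pow_ne_one_of_pos_of_lt (by omega) (by omega)
        have hz : (ω ^ m - 1) * (ω ^ m + 1) = 0 := by linear_combination h2
        rcases mul_eq_zero.mp hz with h | h
        · exact (hne (sub_eq_zero.mp h)).elim
        · exact eq_neg_of_add_eq_zero_left h
      have hws : ω ^ s = -1 := by
        rw [hs, pow_mul, hωm]
        exact Odd.neg_one_pow ⟨m - 1, by omega⟩
      rw [hws, Even.neg_one_pow ⟨m, hm⟩]
      ring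
    · obtain ⟨m, hm⟩ := ho
      have hs : s = n * m := by
        have h2 : s * 2 = (n * m) * 2 := by
          rw [hgauss, show n - 1 = 2 * m from by omega]; ring
        omega
      have hws : ω ^ s = 1 := by rw [hs, pow_mul, hω.pow_eq_one, one_pow]
      rw [hws, Odd.neg_one_pow ⟨m, by omega⟩]
      ring
  rw [hscal]
  simp

/-- For a primitive `n`-th root of unity `ω`, the matrices `A_ω(t)` and `A(t^n)` (where
`A(t) = [[1, t], [1, 0]]`) have the same characteristic polynomial; equivalently
`det A_ω(t) = -t^n` and `Tr A_ω(t) = 1`. -/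
theorem stmt16 (n : ℕ) (hn : 1 ≤ n) (ω : ℂ) (hω : IsPrimitiveRoot ω n) :
    (Aomega n ω).charpoly
        = (!![1, Polynomial.X ^ n; 1, 0] : Matrix (Fin 2) (Fin 2) (Polynomial ℂ)).charpoly
    ∧ (Aomega n ω).det = -Polynomial.X ^ n
    ∧ Matrix.trace (Aomega n ω) = 1 := by
  have hdet := det_Aomega n hn ω hω
  have htr := trace_Aomega n hn ω hω
  refine ⟨?_, hdet, htr⟩
  rw [charpoly_fin_two' (Aomega n ω), charpoly_fin_two', hdet, htr,
    Matrix.trace_fin_two_of, Matrix.det_fin_two_of]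
  simp
end
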